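/- arXiv:hep-th/9807234 — 8 statements merged into one kernel-verified Lean document; each statement's English description precedes it below -/
import Mathlib

section
/- Suppose the order on ι is adapted to the subset A ⊆ ι. If Ψ₁, Ψ₂ ∈ V satisfy Γ Ψ₁ = 0 and Γ Ψ₂ = 0 for every Γ ∈ K, and the b-coordinates of Ψ₁ and Ψ₂ agree at every index of the ordering kernel ι \ A, then Ψ₁ = Ψ₂. -/
/-- If the order on `ι` is adapted to `A ⊆ ι`, and `Ψ₁, Ψ₂` are
annihilated by every operator of `K` and their `b`-coordinates agree on the
ordering kernel `ι \ A`, then `Ψ₁ = Ψ₂`. -/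
theorem adapted_ordering_kernel_determines
    {F V W : Type*} [Field F] [AddCommGroup V] [Module F V]
    [AddCommGroup W] [Module F W] {ι : Type*} [LinearOrder ι]
    (b : Module.Basis ι F V) (K : Set (V →ₗ[F] W)) (A : Set ι)
    (hadapt : ∀ X₀ ∈ A, ∃ Γ ∈ K, ∃ φ : W →ₗ[F] F,
      φ (Γ (b X₀)) ≠ 0 ∧ ∀ Y : ι, X₀ < Y → φ (Γ (b Y)) = 0)
    (Ψ₁ Ψ₂ : V)
    (h₁ : ∀ Γ ∈ K, Γ Ψ₁ = 0) (h₂ : ∀ Γ ∈ K, Γ Ψ₂ = 0)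
    (hcoef : ∀ i ∉ A, b.repr Ψ₁ i = b.repr Ψ₂ i) :
    Ψ₁ = Ψ₂ := by
  set Ψ := Ψ₁ - Ψ₂ with hΨ
  suffices h : Ψ = 0 by exact sub_eq_zero.mp h
  by_contra hne
  set c := b.repr Ψ with hc
  have hcne : c ≠ 0 := fun h => hne (by
    have := b.repr.map_eq_zero_iff.mp (hc ▸ h)
    exact this)
  have hsupp : c.support.Nonempty := Finsupp.support_nonempty_iff.mpr hcne
  obtain ⟨X₀, hX₀, hmin⟩ := c.support.exists_min_image id hsupp
  have hX₀A : X₀ ∈ A := by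
    by_contra hA
    have hco := hcoef X₀ hA
    have hz : c X₀ = 0 := by
      simp [hc, hΨ, map_sub, Finsupp.sub_apply, hco]
    exact Finsupp.mem_support_iff.mp hX₀ hz
  obtain ⟨Γ, hΓK, φ, hφ, hzero⟩ := hadapt X₀ hX₀A
  have hΓΨ : Γ Ψ = 0 := by
    simp [hΨ, map_sub, h₁ Γ hΓK, h₂ Γ hΓK]
  have hsum : (∑ i ∈ c.support, c i • φ (Γ (b i))) = 0 := by
    have h1 : φ (Γ Ψ) = ∑ i ∈ c.support, c i • φ (Γ (b i)) := by
      conv_lhs => rw [← b.linearCombination_repr Ψ]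
      simp [Finsupp.linearCombination_apply, Finsupp.sum, map_sum, ← hc]
    rw [hΓΨ] at h1
    simpa using h1.symm
  have hsingle : (∑ i ∈ c.support, c i • φ (Γ (b i))) = c X₀ • φ (Γ (b X₀)) := by
    apply Finset.sum_eq_single
    · intro i hi hne'
      have : X₀ < i := lt_of_le_of_ne (hmin i hi) (fun h => hne' h.symm)
      rw [hzero i this, smul_zero]
    · intro h
      exact absurd hX₀ h
  rw [hsingle] at hsum
  have : c X₀ ≠ 0 := Finsupp.mem_support_iff.mp hX₀
  exact hφ (by
    have := smul_eq_zero.mp hsum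
    tauto)
end

section
/- Suppose the order on ι is adapted to A = ι, i.e. the ordering kernel is empty. Then every Ψ ∈ V with Γ Ψ = 0 for all Γ ∈ K is zero; in particular there are no nonzero vectors annihilated by all operators of K. -/
/-- If the order on `ι` is adapted to `A = ι` (empty ordering
kernel), then every vector annihilated by all operators of `K` is zero. -/
theorem adapted_ordering_empty_kernel_no_singular
    {F V W : Type*} [Field F] [AddCommGroup V] [Module F V]
    [AddCommGroup W] [Module F W] {ι : Type*} [LinearOrder ι]
    (b : Module.Basis ι F V) (K : Set (V →ₗ[F] W))
    (hadapt : ∀ X₀ : ι, ∃ Γ ∈ K, ∃ φ : W →ₗ[F] F,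
      φ (Γ (b X₀)) ≠ 0 ∧ ∀ Y : ι, X₀ < Y → φ (Γ (b Y)) = 0) :
    ∀ Ψ : V, (∀ Γ ∈ K, Γ Ψ = 0) → Ψ = 0 := by
  intro Ψ hΨ
  by_contra hne
  have hs : (b.repr Ψ).support.Nonempty := by
    rw [Finsupp.support_nonempty_iff]
    simpa using hne
  set X₀ := (b.repr Ψ).support.min' hs with hX
  obtain ⟨Γ, hΓK, φ, hφ0, hφ⟩ := hadapt X₀
  have h1 : φ (Γ Ψ) = 0 := by rw [hΨ Γ hΓK]; simp
  have h2 : φ (Γ Ψ) = ∑ Y ∈ (b.repr Ψ).support, (b.repr Ψ) Y * φ (Γ (b Y)) := by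
    conv_lhs => rw [← b.linearCombination_repr Ψ]
    rw [Finsupp.linearCombination_apply, Finsupp.sum, map_sum, map_sum]
    simp [mul_comm]
  have h3 : ∑ Y ∈ (b.repr Ψ).support, (b.repr Ψ) Y * φ (Γ (b Y))
      = (b.repr Ψ) X₀ * φ (Γ (b X₀)) := by
    apply Finset.sum_eq_single
    · intro Y hY hYne
      have : X₀ < Y := lt_of_le_of_ne (Finset.min'_le _ _ hY) (Ne.symm hYne)
      rw [hφ Y this, mul_zero]
    · intro h
      exact absurd (Finset.min'_mem _ hs) h
  have hc : (b.repr Ψ) X₀ ≠ 0 := Finsupp.mem_support_iff.mp (Finset.min'_mem _ hs)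
  exact (mul_ne_zero hc hφ0) (by rw [← h3, ← h2, h1])
end

section
/- Suppose the order on ι is adapted to the subset A ⊆ ι and the ordering kernel ι \ A is finite with exactly d elements. Then the linear subspace {Ψ ∈ V : Γ Ψ = 0 for all Γ ∈ K} has dimension at most d. -/
/-- If the order on `ι` is adapted to `A` and the ordering kernel
`ι \ A` is finite with exactly `d` elements, then the subspace of vectors
annihilated by all operators of `K` has dimension at most `d`. -/
theorem adapted_ordering_dimension_bound
    {F V W : Type*} [Field F] [AddCommGroup V] [Module F V]
    [AddCommGroup W] [Module F W] {ι : Type*} [LinearOrder ι]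
    (b : Module.Basis ι F V) (K : Set (V →ₗ[F] W)) (A : Set ι)
    (hadapt : ∀ X₀ ∈ A, ∃ Γ ∈ K, ∃ φ : W →ₗ[F] F,
      φ (Γ (b X₀)) ≠ 0 ∧ ∀ Y : ι, X₀ < Y → φ (Γ (b Y)) = 0)
    (d : ℕ) (hfin : (Aᶜ : Set ι).Finite) (hcard : (Aᶜ : Set ι).ncard = d) :
    Module.rank F ↥(⨅ Γ ∈ K, LinearMap.ker Γ) ≤ d := by
  classical
  set S : Submodule F V := ⨅ Γ ∈ K, LinearMap.ker Γ with hS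
  have hfintype : Fintype ↥(Aᶜ : Set ι) := hfin.fintype
  -- the coordinate map on Aᶜ
  let f : ↥S →ₗ[F] (↥(Aᶜ : Set ι) → F) :=
    { toFun := fun Ψ y => b.repr Ψ.1 y.1
      map_add' := by intro x y; ext z; simp
      map_smul' := by intro c x; ext z; simp }
  have hinj : Function.Injective f := by
    rw [injective_iff_map_eq_zero]
    intro Ψ hΨ
    by_contra hne
    have hne' : b.repr Ψ.1 ≠ 0 := by
      intro h
      apply hne
      have : (Ψ : V) = 0 := by
        have := b.repr.injective (a₁ := Ψ.1) (a₂ := 0) (by simp [h])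
        simpa using this
      exact Subtype.ext this
    have hsupp : (b.repr Ψ.1).support.Nonempty := Finsupp.support_nonempty_iff.mpr hne'
    -- support is contained in A
    have hsubA : ∀ Y ∈ (b.repr Ψ.1).support, Y ∈ A := by
      intro Y hY
      by_contra hYA
      have : b.repr Ψ.1 Y = 0 := by
        have := congrFun hΨ ⟨Y, hYA⟩
        simpa [f] using this
      exact (Finsupp.mem_support_iff.mp hY) this
    set X₀ := (b.repr Ψ.1).support.min' hsupp with hX₀
    have hX₀mem : X₀ ∈ (b.repr Ψ.1).support := (b.repr Ψ.1).support.min'_mem hsupp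
    obtain ⟨Γ, hΓK, φ, hφ0, hφ⟩ := hadapt X₀ (hsubA X₀ hX₀mem)
    have hΓΨ : Γ Ψ.1 = 0 := by
      have hmem : (Ψ : V) ∈ S := Ψ.2
      simp only [hS, Submodule.mem_iInf] at hmem
      exact hmem Γ hΓK
    have hsum : Ψ.1 = ∑ Y ∈ (b.repr Ψ.1).support, b.repr Ψ.1 Y • b Y := by
      conv_lhs => rw [← b.linearCombination_repr Ψ.1]
      rw [Finsupp.linearCombination_apply, Finsupp.sum]
    have : φ (Γ Ψ.1) = b.repr Ψ.1 X₀ * φ (Γ (b X₀)) := by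
      conv_lhs => rw [hsum]
      rw [map_sum, map_sum]
      rw [Finset.sum_eq_single X₀]
      · simp [mul_comm]
      · intro Y hY hYne
        have hlt : X₀ < Y := lt_of_le_of_ne ((b.repr Ψ.1).support.min'_le Y hY) (Ne.symm hYne)
        simp [hφ Y hlt]
      · intro h; exact absurd hX₀mem h
    rw [hΓΨ] at this
    simp only [map_zero] at this
    have hc : b.repr Ψ.1 X₀ = 0 := by
      rcases mul_eq_zero.mp this.symm with h | h
      · exact h
      · exact absurd h hφ0
    exact (Finsupp.mem_support_iff.mp hX₀mem) hc
  have hcard' : Fintype.card ↥(Aᶜ : Set ι) = d := by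
    rw [← hcard, Set.ncard_eq_toFinset_card', Set.toFinset_card]
  have h1 := LinearMap.lift_rank_le_of_injective f hinj
  rw [rank_fun', hcard'] at h1
  simpa using h1
end

section
/- Let X₀ = (λ, n₀) ∈ C_l with λ nonempty and smallest (rightmost) part m₁, and let X̃ = (λ', n₀+1), where λ' is λ with one copy of its smallest part m₁ removed. Then the coefficient of the basis vector b_{X̃} in the basis expansion of L_{m₁−1}·b_{X₀} is nonzero, whereas for every Y ∈ C_l with X₀ ≺_Vir Y and Y ≠ X₀ the coefficient of b_{X̃} in the basis expansion of L_{m₁−1}·b_Y is zero. Consequently ≺_Vir is adapted to C_l \ {((), l)}, with ordering kernel the single index ((), l) corresponding to the basis vector L_{−1}^l v. -/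
universe u

/-- Apply the operators `F (-m_I), …, F (-m_1)` (list read left to right) to `w`. -/
def listApplyVir {M : Type u} [AddCommGroup M] [Module ℂ M]
    (F : ℤ → Module.End ℂ M) (l : List ℕ) (w : M) : M :=
  l.foldr (fun a x => F (-(a : ℤ)) x) w

/-- Index of the standard basis of a Virasoro Verma module: a weakly decreasing
list `(m_I, …, m_1)` of integers `≥ 2` together with `n ∈ ℕ`. -/
def VirIndex : Type := {p : List ℕ × ℕ // p.1.Pairwise (· ≥ ·) ∧ ∀ x ∈ p.1, 2 ≤ x}

/-- Level of a basis index. -/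
def VirIndex.level (i : VirIndex) : ℕ := i.1.1.sum + i.1.2

/-- The index `((), n)` corresponding to the basis vector `L_{-1}^n v`. -/
def VirIndex.empty (n : ℕ) : VirIndex := ⟨([], n), List.Pairwise.nil, by simp⟩

/-- A Virasoro Verma module with central charge `c` and conformal weight `Δ`. -/
structure VirasoroVerma (c Δ : ℂ) (M : Type u) [AddCommGroup M] [Module ℂ M] where
  L : ℤ → Module.End ℂ M
  hcomm : ∀ m n : ℤ, L m * L n - L n * L m = ((m : ℂ) - (n : ℂ)) • L (m + n) +
    (if m + n = 0 then c / 12 * ((m : ℂ) ^ 3 - (m : ℂ)) else 0) • (1 : Module.End ℂ M)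
  v : M
  hv0 : L 0 v = Δ • v
  hvpos : ∀ m : ℤ, 1 ≤ m → L m v = 0
  b : Module.Basis VirIndex ℂ M
  hb : ∀ i : VirIndex, b i = listApplyVir L i.1.1 (((L (-1)) ^ i.1.2) v)

/-- The total order `≺_Vir` (strictly): `X ≺ Y` iff `X` has more `L_{-1}`'s,
or the same number and the parts of `X`, read from the right (smallest part
first), are lexicographically smaller at the first index where they differ. -/
def virLt (X Y : VirIndex) : Prop :=
  Y.1.2 < X.1.2 ∨ (X.1.2 = Y.1.2 ∧ List.Lex (· < ·) X.1.1.reverse Y.1.1.reverse)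

/-- `X̃`: remove one copy of the smallest (rightmost) part of `λ` and add one
`L_{-1}`. -/
def VirIndex.dropSmallest (i : VirIndex) : VirIndex :=
  ⟨(i.1.1.dropLast, i.1.2 + 1),
    List.Pairwise.sublist (List.dropLast_sublist _) i.2.1,
    fun x hx => i.2.2 x ((List.dropLast_sublist _).subset hx)⟩

namespace VirProof

open List Submodule

variable {c Δ : ℂ} {M : Type u} [AddCommGroup M] [Module ℂ M]

/-- merge step on multisets -/
def mstep (s t : Multiset ℕ) : Prop := ∃ x y u, s = x ::ₘ y ::ₘ u ∧ t = (x + y) ::ₘ u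

def mcoarse : Multiset ℕ → Multiset ℕ → Prop := Relation.ReflTransGen mstep

def idxM (Z : VirIndex) : Multiset ℕ := (Z.1.1 : Multiset ℕ) + Multiset.replicate Z.1.2 1

def wordOf (Z : VirIndex) : List ℕ := Z.1.1 ++ List.replicate Z.1.2 1

lemma coe_wordOf (Z : VirIndex) : (wordOf Z : Multiset ℕ) = idxM Z := by
  simp [wordOf, idxM, ← Multiset.coe_add, Multiset.coe_replicate]

def wv (V : VirasoroVerma c Δ M) (w : List ℕ) : M := listApplyVir V.L w V.v

lemma la_cons (F : ℤ → Module.End ℂ M) (a : ℕ) (w : List ℕ) (x : M) :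
    listApplyVir F (a :: w) x = F (-(a:ℤ)) (listApplyVir F w x) := rfl

lemma la_append (F : ℤ → Module.End ℂ M) (p q : List ℕ) (x : M) :
    listApplyVir F (p ++ q) x = listApplyVir F p (listApplyVir F q x) := by
  simp [listApplyVir, List.foldr_append]

lemma la_add (F : ℤ → Module.End ℂ M) (w : List ℕ) (x y : M) :
    listApplyVir F w (x + y) = listApplyVir F w x + listApplyVir F w y := by
  induction w with
  | nil => rfl
  | cons a t ih => simp [la_cons, ih, map_add]

lemma la_smul (F : ℤ → Module.End ℂ M) (w : List ℕ) (r : ℂ) (x : M) :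
    listApplyVir F w (r • x) = r • listApplyVir F w x := by
  induction w with
  | nil => rfl
  | cons a t ih => simp [la_cons, ih, map_smul]

/-- `listApplyVir` as a linear map. -/
def LA (F : ℤ → Module.End ℂ M) (w : List ℕ) : M →ₗ[ℂ] M where
  toFun x := listApplyVir F w x
  map_add' x y := la_add F w x y
  map_smul' r x := la_smul F w r x

lemma LA_apply (F : ℤ → Module.End ℂ M) (w : List ℕ) (x : M) :
    LA F w x = listApplyVir F w x := rfl

lemma wv_append (V : VirasoroVerma c Δ M) (p q : List ℕ) :
    wv V (p ++ q) = LA V.L p (wv V q) := by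
  simp [wv, la_append, LA_apply]

lemma wv_cons (V : VirasoroVerma c Δ M) (a : ℕ) (w : List ℕ) :
    wv V (a :: w) = V.L (-(a:ℤ)) (wv V w) := rfl

lemma wv_replicate_one (V : VirasoroVerma c Δ M) (n : ℕ) :
    wv V (List.replicate n 1) = ((V.L (-1)) ^ n) V.v := by
  induction n with
  | zero => rfl
  | succ n ih =>
      rw [List.replicate_succ, wv_cons, ih, pow_succ']
      simp [Module.End.mul_apply]

lemma b_eq_wv (V : VirasoroVerma c Δ M) (Z : VirIndex) : V.b Z = wv V (wordOf Z) := by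
  rw [V.hb Z, wordOf, wv_append, wv_replicate_one, LA_apply]

lemma comm_apply (V : VirasoroVerma c Δ M) (m n : ℤ) (x : M) :
    V.L m (V.L n x) = V.L n (V.L m x) + ((m : ℂ) - (n : ℂ)) • V.L (m + n) x +
      (if m + n = 0 then c / 12 * ((m : ℂ) ^ 3 - (m : ℂ)) else 0) • x := by
  have h := congrArg (fun f : Module.End ℂ M => f x) (V.hcomm m n)
  simp only [LinearMap.sub_apply, Module.End.mul_apply, LinearMap.add_apply,
    LinearMap.smul_apply, Module.End.one_apply] at h
  linear_combination (norm := module) h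

lemma L0_wv (V : VirasoroVerma c Δ M) (w : List ℕ) :
    V.L 0 (wv V w) = (Δ + (w.sum : ℂ)) • wv V w := by
  induction w with
  | nil => simpa [wv, listApplyVir] using V.hv0
  | cons a t ih =>
      rw [wv_cons, comm_apply V 0 (-(a:ℤ)), ih]
      have h0a : (0:ℤ) + -(a:ℤ) = -(a:ℤ) := by ring
      rw [h0a, map_smul, ← wv_cons]
      by_cases ha : (a:ℕ) = 0
      · subst ha
        rw [if_pos (by norm_num : (-(0:ℕ):ℤ) = 0), wv_cons]
        simp only [List.sum_cons]
        push_cast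
        module
      · rw [if_neg (by omega : ¬ (-(a:ℕ):ℤ) = 0)]
        rw [wv_cons]
        simp only [List.sum_cons]
        push_cast
        module

/-- basic swap identity -/
lemma wv_swap (V : VirasoroVerma c Δ M) (x y : ℕ) (hx : 1 ≤ x) (s : List ℕ) :
    wv V (x :: y :: s) = wv V (y :: x :: s) + ((y:ℂ) - (x:ℂ)) • wv V ((x+y) :: s) := by
  rw [wv_cons, wv_cons, comm_apply V (-(x:ℤ)) (-(y:ℤ))]
  have h0 : ¬ (-(x:ℤ) + -(y:ℤ) = 0) := by omega
  rw [if_neg h0]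
  have : (-(x:ℤ)) + -(y:ℤ) = -((x+y:ℕ):ℤ) := by push_cast; ring
  rw [this]
  rw [wv_cons, wv_cons, wv_cons]
  push_cast
  module

/-! ### inversion count -/

def inv : List ℕ → ℕ
  | [] => 0
  | a :: t => t.countP (fun b => decide (a < b)) + inv t

lemma inv_le_sq : ∀ w : List ℕ, inv w ≤ w.length * w.length := by
  intro w
  induction w with
  | nil => simp [inv]
  | cons a t ih =>
      have h1 : t.countP (fun b => decide (a < b)) ≤ t.length := List.countP_le_length
      have h2 : t.length * t.length + t.length ≤ (t.length + 1) * (t.length + 1) := by nlinarith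
      simp only [inv, List.length_cons]
      omega

lemma sq_le_pow4 : ∀ n : ℕ, n * n ≤ 4 ^ n := by
  intro n
  induction n with
  | zero => simp
  | succ n ih =>
      have h4 : n + 1 ≤ 4 ^ n := by
        clear ih
        induction n with
        | zero => simp
        | succ n ih => have : 4 ^ (n+1) = 4 * 4 ^ n := by ring
                       omega
      have : 4 ^ (n+1) = 4 * 4 ^ n := by ring
      nlinarith

lemma countP_swap (p : ℕ → Bool) (x y : ℕ) (s : List ℕ) :
    (x :: y :: s).countP p = (y :: x :: s).countP p := by
  simp only [List.countP_cons]
  omega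

lemma inv_join (p q q' : List ℕ) (hlen : ∀ f : ℕ → Bool, q.countP f = q'.countP f)
    (hinv : inv q' + 1 = inv q) : inv (p ++ q') + 1 = inv (p ++ q) := by
  induction p with
  | nil => simpa using hinv
  | cons a t ih =>
      simp only [List.cons_append, inv, List.append_eq]
      rw [List.countP_append, List.countP_append, hlen (fun b => decide (a < b))]
      omega

lemma inv_swap (p : List ℕ) (x y : ℕ) (s : List ℕ) (hxy : x < y) :
    inv (p ++ y :: x :: s) + 1 = inv (p ++ x :: y :: s) := by
  apply inv_join
  · intro f
    simp only [List.countP_cons]; omega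
  · simp only [inv, List.countP_cons]
    have h1 : decide (x < y) = true := by simpa using hxy
    have h2 : decide (y < x) = false := by simp; omega
    simp [h1, h2]
    omega

/-- find an adjacent inversion in an unsorted list -/
lemma findInv : ∀ w : List ℕ, w.IsChain (· ≥ ·) ∨ ∃ p x y s, w = p ++ x :: y :: s ∧ x < y := by
  intro w
  induction w with
  | nil => left; simp
  | cons a t ih =>
      match t, ih with
      | [], _ => left; simp
      | b :: t', ih =>
        by_cases hab : a < b
        · right; exact ⟨[], a, b, t', by simp, hab⟩
        · rcases ih with h | ⟨p, x, y, s, heq, hxy⟩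
          · left
            exact List.isChain_cons_cons.mpr ⟨by omega, h⟩
          · right; exact ⟨a :: p, x, y, s, by simp [heq], hxy⟩

lemma sorted_split : ∀ w : List ℕ, List.Pairwise (· ≥ ·) w → (∀ a ∈ w, 1 ≤ a) →
    ∃ Z : VirIndex, wordOf Z = w := by
  intro w
  induction w with
  | nil => exact fun _ _ => ⟨VirIndex.empty 0, rfl⟩
  | cons a t ih =>
      intro hs h1
      have hst : List.Pairwise (· ≥ ·) t := hs.of_cons
      have h1t : ∀ b ∈ t, 1 ≤ b := fun b hb => h1 b (List.mem_cons_of_mem _ hb)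
      by_cases ha : a = 1
      · subst ha
        have hall : ∀ b ∈ t, b = 1 := by
          intro b hb
          have := List.rel_of_pairwise_cons hs hb
          have := h1t b hb
          omega
        refine ⟨VirIndex.empty (t.length + 1), ?_⟩
        simp only [wordOf, VirIndex.empty, List.nil_append]
        rw [List.eq_replicate_of_mem hall]
        simp [List.replicate_succ]
      · obtain ⟨Z, hZ⟩ := ih hst h1t
        have ha2 : 2 ≤ a := by have := h1 a (by simp); omega
        have hsort : List.Pairwise (· ≥ ·) (a :: Z.1.1) := by
          apply List.pairwise_cons.mpr
          refine ⟨fun b hb => ?_, Z.2.1⟩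
          have hb' : b ∈ wordOf Z := by rw [wordOf]; exact List.mem_append_left _ hb
          rw [hZ] at hb'
          exact List.rel_of_pairwise_cons hs hb'
        have h2' : ∀ x ∈ a :: Z.1.1, 2 ≤ x := by
          intro x hx
          rcases List.mem_cons.mp hx with rfl | hx
          · exact ha2
          · exact Z.2.2 x hx
        refine ⟨⟨(a :: Z.1.1, Z.1.2), hsort, h2'⟩, ?_⟩
        simp only [wordOf, List.cons_append]
        rw [← hZ]
        rfl

/-! ### mcoarse lemmas -/

lemma mcoarse_single {s t : Multiset ℕ} (h : mstep s t) : mcoarse s t :=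
  Relation.ReflTransGen.single h

lemma mstep_pos {s t : Multiset ℕ} (h : mstep s t) (hs : ∀ a ∈ s, 1 ≤ a) : ∀ a ∈ t, 1 ≤ a := by
  obtain ⟨x, y, u, rfl, rfl⟩ := h
  intro a ha
  rcases Multiset.mem_cons.mp ha with rfl | ha
  · have := hs x (by simp); omega
  · exact hs a (by simp [ha])

lemma mcoarse_pos {s t : Multiset ℕ} (h : mcoarse s t) (hs : ∀ a ∈ s, 1 ≤ a) : ∀ a ∈ t, 1 ≤ a := by
  induction h with
  | refl => exact hs
  | tail h1 h2 ih => exact mstep_pos h2 ih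

lemma mstep_count1 {s t : Multiset ℕ} (h : mstep s t) : t.count 1 ≤ s.count 1 := by
  obtain ⟨x, y, u, rfl, rfl⟩ := h
  simp only [Multiset.count_cons]
  have h1x : (if (1:ℕ) = x + y then 1 else 0) ≤
      (if (1:ℕ) = x then 1 else 0) + (if (1:ℕ) = y then 1 else 0) := by
    split_ifs <;> omega
  omega

lemma mcoarse_count1 {s t : Multiset ℕ} (h : mcoarse s t) : t.count 1 ≤ s.count 1 := by
  induction h with
  | refl => exact le_rfl
  | tail h1 h2 ih => exact le_trans (mstep_count1 h2) ih

lemma mcoarse_cons (a : ℕ) {s t : Multiset ℕ} (h : mcoarse s t) : mcoarse (a ::ₘ s) (a ::ₘ t) := by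
  induction h with
  | refl => exact Relation.ReflTransGen.refl
  | tail h1 h2 ih =>
      refine Relation.ReflTransGen.tail ih ?_
      obtain ⟨x, y, u, rfl, rfl⟩ := h2
      exact ⟨x, y, a ::ₘ u, by rw [Multiset.cons_swap a, Multiset.cons_swap a], by rw [Multiset.cons_swap]⟩

/-! ### straightening -/

lemma straighten_aux (V : VirasoroVerma c Δ M) :
    ∀ N : ℕ, ∀ w : List ℕ, 4 ^ w.length + inv w ≤ N → (∀ a ∈ w, 1 ≤ a) →
    wv V w ∈ Submodule.span ℂ (V.b '' {Z | mcoarse (↑w) (idxM Z)}) := by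
  intro N
  induction N with
  | zero =>
      intro w h _
      exfalso
      have : 0 < 4 ^ w.length := Nat.pow_pos (by norm_num)
      omega
  | succ N ih =>
      intro w hN h1
      rcases findInv w with hs | ⟨p, x, y, s, rfl, hxy⟩
      · have hsorted : List.Pairwise (· ≥ ·) w :=
          List.isChain_iff_pairwise.mp hs
        obtain ⟨Z, hZ⟩ := sorted_split w hsorted h1
        have hmem : mcoarse ((w : List ℕ) : Multiset ℕ) (idxM Z) := by
          rw [← hZ, coe_wordOf]
          exact Relation.ReflTransGen.refl
        have hb : V.b Z ∈ Submodule.span ℂ (V.b '' {Z' | mcoarse (↑w) (idxM Z')}) :=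
          Submodule.subset_span ⟨Z, hmem, rfl⟩
        rw [b_eq_wv, hZ] at hb
        exact hb
      · have hx1 : 1 ≤ x := h1 x (by simp)
        have key : wv V (p ++ x :: y :: s) = wv V (p ++ y :: x :: s) +
            ((y:ℂ) - (x:ℂ)) • wv V (p ++ (x+y) :: s) := by
          rw [wv_append, wv_append, wv_append, wv_swap V x y hx1 s, map_add, map_smul]
        rw [key]
        -- lengths
        have hlen1 : (p ++ y :: x :: s).length = (p ++ x :: y :: s).length := by simp
        have hlen2 : (p ++ (x+y) :: s).length + 1 = (p ++ x :: y :: s).length := by simp; omega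
        have hinv1 : inv (p ++ y :: x :: s) + 1 = inv (p ++ x :: y :: s) := inv_swap p x y s hxy
        have hm1 : 4 ^ (p ++ y :: x :: s).length + inv (p ++ y :: x :: s) ≤ N := by
          rw [hlen1]; omega
        have hm2 : 4 ^ (p ++ (x+y) :: s).length + inv (p ++ (x+y) :: s) ≤ N := by
          set l2 := (p ++ (x+y) :: s).length with hl2
          have e1 : inv (p ++ (x+y) :: s) ≤ l2 * l2 := inv_le_sq _
          have e2 : l2 * l2 ≤ 4 ^ l2 := sq_le_pow4 _
          have e3 : 4 ^ (l2+1) = 4 * 4 ^ l2 := by ring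
          have e4 : 0 < 4 ^ l2 := Nat.pow_pos (by norm_num)
          rw [← hlen2] at hN
          omega
        have h1a : ∀ a ∈ p ++ y :: x :: s, 1 ≤ a := by
          intro a ha; apply h1; simp at ha ⊢; tauto
        have h1b : ∀ a ∈ p ++ (x+y) :: s, 1 ≤ a := by
          intro a ha
          simp at ha
          rcases ha with h | h | h
          · exact h1 a (by simp [h])
          · omega
          · exact h1 a (by simp [h])
        have t1 := ih _ hm1 h1a
        have t2 := ih _ hm2 h1b
        -- identify/compare the target sets
        have hcoe1 : ((p ++ y :: x :: s : List ℕ) : Multiset ℕ) = ((p ++ x :: y :: s : List ℕ) : Multiset ℕ) := by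
          rw [Multiset.coe_eq_coe]
          rw [List.perm_iff_count]; intro a
          simp [List.count_append, List.count_cons]; omega
        rw [hcoe1] at t1
        have hstep : mstep (↑(p ++ x :: y :: s)) (↑(p ++ (x+y) :: s)) := by
          refine ⟨x, y, ↑(p ++ s), ?_, ?_⟩
          · have : (p ++ x :: y :: s).Perm (x :: y :: (p ++ s)) := by
              rw [List.perm_iff_count]; intro a
              simp [List.count_append, List.count_cons]; omega
            rw [Multiset.coe_eq_coe.mpr this]; rfl
          · have : (p ++ (x+y) :: s).Perm ((x+y) :: (p ++ s)) := by
              rw [List.perm_iff_count]; intro a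
              simp [List.count_append, List.count_cons]; omega
            rw [Multiset.coe_eq_coe.mpr this]; rfl
        have hsub : {Z : VirIndex | mcoarse (↑(p ++ (x+y) :: s)) (idxM Z)} ⊆
            {Z : VirIndex | mcoarse (↑(p ++ x :: y :: s)) (idxM Z)} := by
          intro Z hZ
          exact Relation.ReflTransGen.head hstep hZ
        have t2' := Submodule.span_mono (Set.image_mono hsub) t2
        exact Submodule.add_mem _ t1 (Submodule.smul_mem _ _ t2')

lemma straighten (V : VirasoroVerma c Δ M) (w : List ℕ) (h1 : ∀ a ∈ w, 1 ≤ a) :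
    wv V w ∈ Submodule.span ℂ (V.b '' {Z | mcoarse (↑w) (idxM Z)}) :=
  straighten_aux V _ w le_rfl h1

lemma idxM_count1 (Z : VirIndex) : (idxM Z).count 1 = Z.1.2 := by
  have h0 : Multiset.count 1 (↑Z.1.1 : Multiset ℕ) = 0 := by
    rw [Multiset.count_eq_zero]
    intro h
    have := Z.2.2 1 (by exact_mod_cast h)
    omega
  simp [idxM, Multiset.count_add, Multiset.count_replicate, h0]

/-- straightening, keeping only the count of 1s -/
lemma straighten_count (V : VirasoroVerma c Δ M) (w : List ℕ) (h1 : ∀ a ∈ w, 1 ≤ a)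
    (n : ℕ) (hc : w.count 1 ≤ n) :
    wv V w ∈ Submodule.span ℂ (V.b '' {Z | Z.1.2 ≤ n}) := by
  refine Submodule.span_mono (Set.image_mono ?_) (straighten V w h1)
  intro Z hZ
  have := mcoarse_count1 hZ
  rw [idxM_count1, Multiset.coe_count] at this
  exact le_trans this hc

/-- coefficient extraction -/
lemma repr_span_zero (V : VirasoroVerma c Δ M) {T : Set VirIndex} {x : M}
    (hx : x ∈ Submodule.span ℂ (V.b '' T)) {W : VirIndex} (hW : W ∉ T) :
    V.b.repr x W = 0 := by
  have hT : Submodule.span ℂ (V.b '' T) ≤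
      LinearMap.ker ((Finsupp.lapply W).comp (V.b.repr : M →ₗ[ℂ] VirIndex →₀ ℂ)) := by
    rw [Submodule.span_le]
    rintro _ ⟨Z, hZ, rfl⟩
    simp only [SetLike.mem_coe, LinearMap.mem_ker, LinearMap.comp_apply, Finsupp.lapply_apply]
    rw [LinearEquiv.coe_coe, V.b.repr_self]
    exact Finsupp.single_eq_of_ne (fun h => hW (h ▸ hZ))
  have := hT hx
  simpa using this

/-! ### positive modes on words -/

lemma L_pos_ones (V : VirasoroVerma c Δ M) :
    ∀ n j : ℕ, 1 ≤ j → ∃ s : ℂ,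
      V.L (j:ℤ) (wv V (List.replicate n 1)) = s • wv V (List.replicate (n - j) 1) ∧
      (n < j → s = 0) := by
  intro n
  induction n with
  | zero =>
      intro j hj
      refine ⟨0, ?_, fun _ => rfl⟩
      have h0 : wv V (List.replicate 0 1) = V.v := rfl
      rw [h0, V.hvpos _ (by exact_mod_cast hj), zero_smul]
  | succ n ih =>
      intro j hj
      have hrep : wv V (List.replicate (n+1) 1) = V.L (-1) (wv V (List.replicate n 1)) := by
        rw [List.replicate_succ, wv_cons]
        norm_num
      have hcen : (if (j:ℤ) + (-1) = 0 then c / 12 * (((j:ℤ):ℂ)^3 - ((j:ℤ):ℂ)) else 0) = 0 := by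
        split_ifs with h
        · have hj1 : (j:ℕ) = 1 := by omega
          rw [hj1]
          push_cast
          ring
        · rfl
      rw [hrep, comm_apply V (j:ℤ) (-1), hcen, zero_smul, add_zero]
      by_cases hj1 : j = 1
      · subst hj1
        obtain ⟨s₀, hs₀, hz₀⟩ := ih 1 le_rfl
        have h0 : ((1:ℕ):ℤ) + (-1) = 0 := by norm_num
        rw [h0, L0_wv, hs₀, map_smul]
        have hsum : ((List.replicate n (1:ℕ)).sum : ℂ) = (n:ℂ) := by
          simp [List.sum_replicate]
        rw [hsum]
        rcases Nat.eq_zero_or_pos n with rfl | hn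
        · rw [hz₀ (by norm_num), zero_smul]
          refine ⟨(((1:ℕ):ℂ) - (-1)) * (Δ + 0), ?_, fun h => by omega⟩
          show _ = _ • wv V (List.replicate 0 1)
          module
        · have hrw : (1:ℕ) :: List.replicate (n - 1) 1 = List.replicate (n + 1 - 1) 1 := by
            rw [← List.replicate_succ]
            congr 1
            omega
          rw [show (-1:ℤ) = -((1:ℕ):ℤ) by norm_num, ← wv_cons, hrw]
          have hrw2 : List.replicate n (1:ℕ) = List.replicate (n + 1 - 1) 1 := by congr 1
          rw [hrw2]
          exact ⟨s₀ + (((1:ℕ):ℂ) - (-1)) * (Δ + n), by module, fun h => by omega⟩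
      · have hj2 : 2 ≤ j := by omega
        obtain ⟨s₀, hs₀, hz₀⟩ := ih j hj
        obtain ⟨s₂, hs₂, hz₂⟩ := ih (j-1) (by omega)
        have hmode : (j:ℤ) + (-1) = ((j-1:ℕ):ℤ) := by omega
        rw [hmode, hs₀, hs₂, map_smul]
        rcases Nat.lt_or_ge n j with hnj | hnj
        · -- n < j : everything small
          rw [hz₀ hnj, zero_smul]
          rcases Nat.lt_or_ge n (j-1) with hnj2 | hnj2
          · rw [hz₂ hnj2, zero_smul]
            exact ⟨0, by rw [zero_smul]; module, fun _ => rfl⟩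
          · -- n = j - 1
            have hn : n = j - 1 := by omega
            have hrw : List.replicate (n - (j-1)) (1:ℕ) = List.replicate (n + 1 - j) 1 := by
              congr 1
              omega
            rw [hrw]
            exact ⟨((j:ℂ) - (-1)) * s₂, by module, fun h => by omega⟩
        · -- n ≥ j
          have hrw : (1:ℕ) :: List.replicate (n - j) 1 = List.replicate (n + 1 - j) 1 := by
            rw [← List.replicate_succ]
            congr 1
            omega
          have hrw2 : List.replicate (n - (j-1)) (1:ℕ) = List.replicate (n + 1 - j) 1 := by
            congr 1
            omega
          rw [show (-1:ℤ) = -((1:ℕ):ℤ) by norm_num, ← wv_cons, hrw, hrw2]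
          exact ⟨s₀ + ((j:ℂ) - (-1)) * s₂, by module, fun h => by omega⟩

/-- the main expansion invariant: applying a positive mode to a word raises the
number of `1`s by at most one. -/
lemma L_pos_wv (V : VirasoroVerma c Δ M) :
    ∀ w : List ℕ, (∀ a ∈ w, 1 ≤ a) → ∀ j : ℕ, 1 ≤ j →
    V.L (j:ℤ) (wv V w) ∈ Submodule.span ℂ
      ((wv V) '' {u | (∀ a ∈ u, 1 ≤ a) ∧ u.count 1 ≤ w.count 1 + 1}) := by
  intro w
  induction w with
  | nil =>
      intro _ j hj
      have h0 : wv V ([] : List ℕ) = V.v := rfl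
      rw [h0, V.hvpos _ (by exact_mod_cast hj)]
      exact Submodule.zero_mem _
  | cons a t ih =>
      intro h1 j hj
      have ha1 : 1 ≤ a := h1 a (by simp)
      have h1t : ∀ b ∈ t, 1 ≤ b := fun b hb => h1 b (by simp [hb])
      rw [wv_cons, comm_apply V (j:ℤ) (-(a:ℤ))]
      have hsub : {u : List ℕ | (∀ a ∈ u, 1 ≤ a) ∧ u.count 1 ≤ t.count 1 + 1} ⊆
          {u : List ℕ | (∀ a ∈ u, 1 ≤ a) ∧ u.count 1 ≤ (a :: t).count 1 + 1} := by
        intro u hu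
        refine ⟨hu.1, le_trans hu.2 ?_⟩
        simp only [List.count_cons, beq_iff_eq]
        omega
      refine Submodule.add_mem _ (Submodule.add_mem _ ?_ ?_) ?_
      · -- L(-a) (L j (wv t))
        have hmem := ih h1t j hj
        have hmap := Submodule.mem_map_of_mem (f := V.L (-(a:ℤ))) hmem
        rw [Submodule.map_span] at hmap
        refine Submodule.span_mono ?_ hmap
        rintro _ ⟨_, ⟨u, hu, rfl⟩, rfl⟩
        refine ⟨a :: u, ⟨?_, ?_⟩, (wv_cons V a u).symm⟩
        · intro b hb
          rcases List.mem_cons.mp hb with rfl | hb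
          · exact ha1
          · exact hu.1 b hb
        · simp only [List.count_cons, beq_iff_eq]
          have := hu.2
          omega
      · -- ((j:ℂ) + a) • L (j - a) (wv t)
        refine Submodule.smul_mem _ _ ?_
        rcases lt_trichotomy j a with hja | rfl | hja
        · -- j < a : new part (a - j)
          have hmode : (j:ℤ) + (-(a:ℤ)) = -(((a-j:ℕ)):ℤ) := by omega
          rw [hmode, ← wv_cons]
          refine Submodule.subset_span ⟨(a-j) :: t, ⟨?_, ?_⟩, rfl⟩
          · intro b hb
            rcases List.mem_cons.mp hb with rfl | hb
            · omega
            · exact h1t b hb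
          · simp only [List.count_cons, beq_iff_eq]
            split_ifs <;> omega
        · -- j = a : L 0
          have hmode : (j:ℤ) + (-(j:ℤ)) = 0 := by ring
          rw [hmode, L0_wv]
          refine Submodule.smul_mem _ _ ?_
          refine Submodule.subset_span ⟨t, ⟨h1t, ?_⟩, rfl⟩
          simp only [List.count_cons, beq_iff_eq]
          omega
        · -- j > a : recurse
          have hmode : (j:ℤ) + (-(a:ℤ)) = ((j-a:ℕ):ℤ) := by omega
          rw [hmode]
          exact Submodule.span_mono (Set.image_mono hsub) (ih h1t (j-a) (by omega))
      · -- central term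
        refine Submodule.smul_mem _ _ ?_
        refine Submodule.subset_span ⟨t, ⟨h1t, ?_⟩, rfl⟩
        simp only [List.count_cons, beq_iff_eq]
        omega

/-! ### the low part: words with few 1s -/

def lowSet (V : VirasoroVerma c Δ M) (n₀ : ℕ) : Set M :=
  (wv V) '' {u | (∀ a ∈ u, 1 ≤ a) ∧ u.count 1 ≤ n₀}

lemma lowSet_le_basis (V : VirasoroVerma c Δ M) (n₀ : ℕ) :
    Submodule.span ℂ (lowSet V n₀) ≤
      Submodule.span ℂ (V.b '' {Z | Z.1.2 ≤ n₀}) := by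
  rw [Submodule.span_le]
  rintro _ ⟨u, ⟨hu1, hu2⟩, rfl⟩
  exact straighten_count V u hu1 n₀ hu2

lemma span_cons_low (V : VirasoroVerma c Δ M) (n₀ : ℕ) {a : ℕ} (ha : 2 ≤ a) {x : M}
    (hx : x ∈ Submodule.span ℂ (lowSet V n₀)) :
    V.L (-(a:ℤ)) x ∈ Submodule.span ℂ (lowSet V n₀) := by
  have hmap := Submodule.mem_map_of_mem (f := V.L (-(a:ℤ))) hx
  rw [Submodule.map_span] at hmap
  refine Submodule.span_mono ?_ hmap
  rintro _ ⟨_, ⟨u, hu, rfl⟩, rfl⟩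
  refine ⟨a :: u, ⟨?_, ?_⟩, (wv_cons V a u).symm⟩
  · intro b hb
    rcases List.mem_cons.mp hb with rfl | hb
    · omega
    · exact hu.1 b hb
  · simp only [List.count_cons, beq_iff_eq]
    have := hu.2
    split_ifs <;> omega

lemma count1_mix (q : List ℕ) (hq : ∀ a ∈ q, 2 ≤ a) (n : ℕ) :
    (q ++ List.replicate n 1).count 1 = n := by
  rw [List.count_append]
  have h1 : q.count 1 = 0 := by
    rw [List.count_eq_zero]
    intro h
    have := hq 1 h
    omega
  have h2 : (List.replicate n (1:ℕ)).count 1 = n := by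
    simp [List.count_replicate]
  omega

lemma pos_mix (q : List ℕ) (hq : ∀ a ∈ q, 2 ≤ a) (n : ℕ) :
    ∀ a ∈ q ++ List.replicate n 1, 1 ≤ a := by
  intro a ha
  rcases List.mem_append.mp ha with h | h
  · have := hq a h; omega
  · have := List.eq_of_mem_replicate h; omega

lemma rep_mem_two {r m : ℕ} (hm : 2 ≤ m) : ∀ a ∈ List.replicate r m, 2 ≤ a := by
  intro a ha
  have := List.eq_of_mem_replicate ha
  omega

/-- moving a `1` to the right through `m₁`'s, up to low corrections -/
lemma move1 (V : VirasoroVerma c Δ M) {m₁ : ℕ} (hm : 2 ≤ m₁) (n₀ : ℕ) :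
    ∀ r : ℕ, wv V (1 :: (List.replicate r m₁ ++ List.replicate n₀ 1)) -
      wv V (List.replicate r m₁ ++ List.replicate (n₀+1) 1) ∈
      Submodule.span ℂ (lowSet V n₀) := by
  intro r
  induction r with
  | zero =>
      have h : (1:ℕ) :: (List.replicate 0 m₁ ++ List.replicate n₀ 1) =
          List.replicate 0 m₁ ++ List.replicate (n₀+1) 1 := by
        simp [List.replicate_succ]
      rw [h, sub_self]
      exact Submodule.zero_mem _
  | succ r ih =>
      have h : List.replicate (r+1) m₁ ++ List.replicate n₀ 1 =
          m₁ :: (List.replicate r m₁ ++ List.replicate n₀ 1) := by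
        simp [List.replicate_succ]
      rw [h]
      set s : List ℕ := List.replicate r m₁ ++ List.replicate n₀ 1 with hsdef
      rw [wv_swap V 1 m₁ le_rfl s]
      have h2 : List.replicate (r+1) m₁ ++ List.replicate (n₀+1) 1 =
          m₁ :: (List.replicate r m₁ ++ List.replicate (n₀+1) 1) := by
        simp [List.replicate_succ]
      rw [h2]
      have e2 : wv V (m₁ :: 1 :: s) = V.L (-(m₁:ℤ)) (wv V (1 :: s)) := rfl
      have e3 : wv V (m₁ :: (List.replicate r m₁ ++ List.replicate (n₀+1) 1)) =
          V.L (-(m₁:ℤ)) (wv V (List.replicate r m₁ ++ List.replicate (n₀+1) 1)) := rfl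
      rw [e2, e3]
      push_cast
      have key : V.L (-(m₁:ℤ)) (wv V (1 :: s)) + ((m₁:ℂ) - 1) • wv V ((1+m₁) :: s) -
          V.L (-(m₁:ℤ)) (wv V (List.replicate r m₁ ++ List.replicate (n₀+1) 1)) =
          V.L (-(m₁:ℤ)) (wv V (1 :: s) - wv V (List.replicate r m₁ ++ List.replicate (n₀+1) 1)) +
          ((m₁:ℂ) - 1) • wv V ((1+m₁) :: s) := by
        rw [map_sub]
        module
      rw [key]
      refine Submodule.add_mem _ (span_cons_low V n₀ hm ih) (Submodule.smul_mem _ _ ?_)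
      refine Submodule.subset_span ⟨(1+m₁) :: s, ⟨?_, ?_⟩, rfl⟩
      · intro b hb
        rcases List.mem_cons.mp hb with rfl | hb
        · omega
        · exact pos_mix _ (rep_mem_two hm) n₀ b hb
      · simp only [List.count_cons, beq_iff_eq]
        rw [count1_mix _ (rep_mem_two hm) n₀]
        split_ifs <;> omega

/-- action of `L_{m₁-1}` on `L_{-m₁}^r L_{-1}^{n₀} v` -/
lemma stage1 (V : VirasoroVerma c Δ M) {m₁ : ℕ} (hm : 2 ≤ m₁) (n₀ : ℕ) :
    ∀ r : ℕ, V.L ((m₁:ℤ)-1) (wv V (List.replicate r m₁ ++ List.replicate n₀ 1)) -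
      ((r:ℂ) * (2*(m₁:ℂ)-1)) • wv V (List.replicate (r-1) m₁ ++ List.replicate (n₀+1) 1)
      ∈ Submodule.span ℂ (lowSet V n₀) := by
  intro r
  induction r with
  | zero =>
      have hk : ((m₁:ℤ) - 1) = ((m₁ - 1 : ℕ) : ℤ) := by omega
      have h0 : (List.replicate 0 m₁ : List ℕ) ++ List.replicate n₀ 1 = List.replicate n₀ 1 := by
        simp
      rw [h0, hk]
      obtain ⟨sc, hsc, -⟩ := L_pos_ones V n₀ (m₁ - 1) (by omega)
      rw [hsc]
      rw [Nat.cast_zero, zero_mul, zero_smul, sub_zero]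
      refine Submodule.smul_mem _ _ (Submodule.subset_span ⟨_, ⟨?_, ?_⟩, rfl⟩)
      · intro b hb
        have := List.eq_of_mem_replicate hb
        omega
      · simp [List.count_replicate]
  | succ r ih =>
      have h : List.replicate (r+1) m₁ ++ List.replicate n₀ 1 =
          m₁ :: (List.replicate r m₁ ++ List.replicate n₀ 1) := by
        simp [List.replicate_succ]
      rw [h]
      set s : List ℕ := List.replicate r m₁ ++ List.replicate n₀ 1 with hsdef
      rw [show wv V (m₁ :: s) = V.L (-(m₁:ℤ)) (wv V s) from rfl]
      rw [comm_apply V ((m₁:ℤ)-1) (-(m₁:ℤ))]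
      rw [if_neg (by omega : ¬ ((m₁:ℤ)-1) + (-(m₁:ℤ)) = 0), zero_smul, add_zero]
      rw [show ((m₁:ℤ)-1) + (-(m₁:ℤ)) = -((1:ℕ):ℤ) by omega]
      rw [show V.L (-((1:ℕ):ℤ)) (wv V s) = wv V (1 :: s) from rfl]
      have hbr : V.L (-(m₁:ℤ)) (((r:ℂ)*(2*(m₁:ℂ)-1)) •
          wv V (List.replicate (r-1) m₁ ++ List.replicate (n₀+1) 1)) =
          ((r:ℂ)*(2*(m₁:ℂ)-1)) • wv V (List.replicate r m₁ ++ List.replicate (n₀+1) 1) := by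
        rcases Nat.eq_zero_or_pos r with rfl | hr
        · simp
        · rw [map_smul]
          congr 2
          have : List.replicate r m₁ = m₁ :: List.replicate (r-1) m₁ := by
            rw [← List.replicate_succ]
            congr 1
            omega
          rw [this]
          rfl
      have key : V.L (-(m₁:ℤ)) (V.L ((m₁:ℤ)-1) (wv V s)) +
          ((((m₁:ℤ)-1 : ℤ):ℂ) - ((-(m₁:ℤ) : ℤ):ℂ)) • wv V (1 :: s) -
          (((r+1 : ℕ):ℂ) * (2*(m₁:ℂ)-1)) •
            wv V (List.replicate (r+1-1) m₁ ++ List.replicate (n₀+1) 1) =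
          V.L (-(m₁:ℤ)) (V.L ((m₁:ℤ)-1) (wv V s) - ((r:ℂ)*(2*(m₁:ℂ)-1)) •
            wv V (List.replicate (r-1) m₁ ++ List.replicate (n₀+1) 1)) +
          (2*(m₁:ℂ)-1) • (wv V (1 :: s) -
            wv V (List.replicate r m₁ ++ List.replicate (n₀+1) 1)) := by
        rw [map_sub, hbr, show (r+1-1 : ℕ) = r from rfl]
        push_cast
        module
      rw [key]
      exact Submodule.add_mem _ (span_cons_low V n₀ hm ih)
        (Submodule.smul_mem _ _ (move1 V hm n₀ r))

/-- action of `L_{m₁-1}` on a word all of whose non-1 parts exceed `m₁`, prefixed -/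
lemma stage2 (V : VirasoroVerma c Δ M) {m₁ : ℕ} (hm : 2 ≤ m₁) (n₀ r : ℕ) :
    ∀ lp : List ℕ, (∀ a ∈ lp, m₁ < a) →
    V.L ((m₁:ℤ)-1) (wv V (lp ++ (List.replicate r m₁ ++ List.replicate n₀ 1))) -
      ((r:ℂ) * (2*(m₁:ℂ)-1)) •
        wv V (lp ++ (List.replicate (r-1) m₁ ++ List.replicate (n₀+1) 1))
      ∈ Submodule.span ℂ (lowSet V n₀) := by
  intro lp
  induction lp with
  | nil =>
      intro _
      simpa using stage1 V hm n₀ r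
  | cons a lp ih =>
      intro hlp
      have ha : m₁ < a := hlp a (by simp)
      have hlp' : ∀ b ∈ lp, m₁ < b := fun b hb => hlp b (by simp [hb])
      rw [List.cons_append]
      rw [show wv V (a :: (lp ++ (List.replicate r m₁ ++ List.replicate n₀ 1))) =
        V.L (-(a:ℤ)) (wv V (lp ++ (List.replicate r m₁ ++ List.replicate n₀ 1))) from rfl]
      rw [comm_apply V ((m₁:ℤ)-1) (-(a:ℤ))]
      rw [if_neg (by omega : ¬ ((m₁:ℤ)-1) + (-(a:ℤ)) = 0), zero_smul, add_zero]
      rw [show ((m₁:ℤ)-1) + (-(a:ℤ)) = -(((a-(m₁-1) : ℕ)):ℤ) by omega]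
      rw [show V.L (-(((a-(m₁-1) : ℕ)):ℤ)) (wv V (lp ++ (List.replicate r m₁ ++ List.replicate n₀ 1))) =
        wv V ((a-(m₁-1)) :: (lp ++ (List.replicate r m₁ ++ List.replicate n₀ 1))) from rfl]
      rw [List.cons_append]
      rw [show wv V (a :: (lp ++ (List.replicate (r-1) m₁ ++ List.replicate (n₀+1) 1))) =
        V.L (-(a:ℤ)) (wv V (lp ++ (List.replicate (r-1) m₁ ++ List.replicate (n₀+1) 1))) from rfl]
      have key : V.L (-(a:ℤ)) (V.L ((m₁:ℤ)-1)
            (wv V (lp ++ (List.replicate r m₁ ++ List.replicate n₀ 1)))) +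
          ((((m₁:ℤ)-1 : ℤ):ℂ) - ((-(a:ℤ) : ℤ):ℂ)) •
            wv V ((a-(m₁-1)) :: (lp ++ (List.replicate r m₁ ++ List.replicate n₀ 1))) -
          ((r:ℂ) * (2*(m₁:ℂ)-1)) • V.L (-(a:ℤ))
            (wv V (lp ++ (List.replicate (r-1) m₁ ++ List.replicate (n₀+1) 1))) =
          V.L (-(a:ℤ)) (V.L ((m₁:ℤ)-1)
            (wv V (lp ++ (List.replicate r m₁ ++ List.replicate n₀ 1))) -
            ((r:ℂ) * (2*(m₁:ℂ)-1)) •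
            wv V (lp ++ (List.replicate (r-1) m₁ ++ List.replicate (n₀+1) 1))) +
          ((((m₁:ℤ)-1 : ℤ):ℂ) - ((-(a:ℤ) : ℤ):ℂ)) •
            wv V ((a-(m₁-1)) :: (lp ++ (List.replicate r m₁ ++ List.replicate n₀ 1))) := by
        rw [map_sub, map_smul]
        module
      rw [key]
      refine Submodule.add_mem _ (span_cons_low V n₀ (by omega) (ih hlp'))
        (Submodule.smul_mem _ _ ?_)
      have hq : ∀ b ∈ (a-(m₁-1)) :: lp ++ List.replicate r m₁, 2 ≤ b := by
        intro b hb
        rcases List.mem_cons.mp hb with rfl | hb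
        · omega
        · rcases List.mem_append.mp hb with h | h
          · have := hlp' b h; omega
          · exact rep_mem_two hm b h
      refine Submodule.subset_span ⟨_, ⟨?_, ?_⟩, rfl⟩
      · have := pos_mix ((a-(m₁-1)) :: lp ++ List.replicate r m₁) hq n₀
        simpa using this
      · have := count1_mix ((a-(m₁-1)) :: lp ++ List.replicate r m₁) hq n₀
        simp only [List.cons_append, List.append_assoc] at this ⊢
        omega

/-! ### the hard case: words with all parts `> k` -/

lemma erase_cons_of_mem {a b : ℕ} {s : Multiset ℕ} (h : b ∈ s) :
    (a ::ₘ s).erase b = a ::ₘ s.erase b := by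
  by_cases hab : a = b
  · subst hab
    rw [Multiset.erase_cons_head, Multiset.cons_erase h]
  · exact Multiset.erase_cons_tail s (fun he => hab he)

lemma hard (V : VirasoroVerma c Δ M) (k : ℕ) (hk : 1 ≤ k) (n₀ : ℕ) :
    ∀ μ : List ℕ, (∀ a ∈ μ, k < a) →
    V.L (k:ℤ) (wv V (μ ++ List.replicate n₀ 1)) ∈
      Submodule.span ℂ (V.b ''
        ({Z : VirIndex | Z.1.2 ≤ n₀} ∪
         {Z : VirIndex | ∃ a ∈ μ, mcoarse
            ((a - k) ::ₘ (((μ : Multiset ℕ).erase a) + Multiset.replicate n₀ 1)) (idxM Z)})) := by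
  intro μ
  induction μ with
  | nil =>
      intro _
      obtain ⟨sc, hsc, -⟩ := L_pos_ones V n₀ k hk
      rw [List.nil_append, hsc]
      refine Submodule.smul_mem _ _ ?_
      have hb : wv V (List.replicate (n₀-k) 1) = V.b (VirIndex.empty (n₀-k)) := by
        rw [b_eq_wv]
        simp [wordOf, VirIndex.empty]
      rw [hb]
      exact Submodule.subset_span ⟨VirIndex.empty (n₀-k), Or.inl (by
        show (VirIndex.empty (n₀-k)).1.2 ≤ n₀
        show n₀ - k ≤ n₀
        omega), rfl⟩
  | cons a μ ih =>
      intro hμ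
      have ha : k < a := hμ a (by simp)
      have hμ' : ∀ b ∈ μ, k < b := fun b hb => hμ b (by simp [hb])
      rw [List.cons_append]
      rw [show wv V (a :: (μ ++ List.replicate n₀ 1)) =
        V.L (-(a:ℤ)) (wv V (μ ++ List.replicate n₀ 1)) from rfl]
      rw [comm_apply V (k:ℤ) (-(a:ℤ))]
      rw [if_neg (by omega : ¬ (k:ℤ) + (-(a:ℤ)) = 0), zero_smul, add_zero]
      rw [show (k:ℤ) + (-(a:ℤ)) = -(((a-k : ℕ)):ℤ) by omega]
      rw [show V.L (-(((a-k : ℕ)):ℤ)) (wv V (μ ++ List.replicate n₀ 1)) =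
        wv V ((a-k) :: (μ ++ List.replicate n₀ 1)) from rfl]
      set T : Set VirIndex :=
        ({Z : VirIndex | Z.1.2 ≤ n₀} ∪
         {Z : VirIndex | ∃ a' ∈ (a :: μ), mcoarse
            ((a' - k) ::ₘ ((((a :: μ) : List ℕ) : Multiset ℕ).erase a' + Multiset.replicate n₀ 1))
            (idxM Z)}) with hT
      have hcoe : ((a :: μ : List ℕ) : Multiset ℕ) = a ::ₘ (μ : Multiset ℕ) := by
        rw [Multiset.cons_coe]
      refine Submodule.add_mem _ ?_ (Submodule.smul_mem _ _ ?_)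
      · -- L(-a) of the ih term
        have hmem := ih hμ'
        have hmap := Submodule.mem_map_of_mem (f := V.L (-(a:ℤ))) hmem
        rw [Submodule.map_span] at hmap
        refine Submodule.span_le.mpr ?_ hmap
        rintro _ ⟨_, ⟨Z, hZ, rfl⟩, rfl⟩
        simp only [SetLike.mem_coe]
        -- V.L(-a) (b Z) = wv (a :: wordOf Z), straighten it
        have hw : V.L (-(a:ℤ)) (V.b Z) = wv V (a :: wordOf Z) := by
          rw [b_eq_wv]
          rfl
        rw [hw]
        have hpos : ∀ b ∈ a :: wordOf Z, 1 ≤ b := by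
          intro b hb
          rcases List.mem_cons.mp hb with rfl | hb
          · omega
          · exact pos_mix Z.1.1 Z.2.2 Z.1.2 b hb
        refine Submodule.span_mono ?_ (straighten V (a :: wordOf Z) hpos)
        apply Set.image_mono
        intro Z' hZ'
        have hZ'' : mcoarse (a ::ₘ idxM Z) (idxM Z') := by
          have : ((a :: wordOf Z : List ℕ) : Multiset ℕ) = a ::ₘ idxM Z := by
            rw [← Multiset.cons_coe, coe_wordOf]
          rwa [this] at hZ'
        rcases hZ with h1 | ⟨a', ha', hco⟩
        · left
          show Z'.1.2 ≤ n₀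
          have hcnt := mcoarse_count1 hZ''
          rw [idxM_count1] at hcnt
          rw [Multiset.count_cons, idxM_count1] at hcnt
          have h1' : Z.1.2 ≤ n₀ := h1
          split_ifs at hcnt <;> omega
        · right
          refine ⟨a', List.mem_cons_of_mem _ ha', ?_⟩
          have hmem' : a' ∈ (μ : Multiset ℕ) := by
            rwa [Multiset.mem_coe]
          rw [hcoe, erase_cons_of_mem hmem', Multiset.cons_add, Multiset.cons_swap]
          exact Relation.ReflTransGen.trans (mcoarse_cons a hco) hZ''
      · -- the new term wv ((a-k) :: μ ++ 1^n₀)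
        have hpos : ∀ b ∈ (a-k) :: (μ ++ List.replicate n₀ 1), 1 ≤ b := by
          intro b hb
          rcases List.mem_cons.mp hb with rfl | hb
          · omega
          · rcases List.mem_append.mp hb with h | h
            · have := hμ' b h; omega
            · have := List.eq_of_mem_replicate h; omega
        refine Submodule.span_mono ?_ (straighten V _ hpos)
        apply Set.image_mono
        intro Z' hZ'
        right
        refine ⟨a, List.mem_cons_self, ?_⟩
        have hsrc : (((a-k) :: (μ ++ List.replicate n₀ 1) : List ℕ) : Multiset ℕ) =
            (a - k) ::ₘ ((((a :: μ) : List ℕ) : Multiset ℕ).erase a + Multiset.replicate n₀ 1) := by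
          rw [hcoe, Multiset.erase_cons_head]
          rw [← Multiset.cons_coe, ← Multiset.coe_add]
          simp [Multiset.coe_replicate]
        rwa [hsrc] at hZ'

/-! ### coarsening increases the ascending sorted list lexicographically -/

def sortAsc (s : Multiset ℕ) : List ℕ := Multiset.sort s (· ≤ ·)

lemma sortAsc_coe (s : Multiset ℕ) : (↑(sortAsc s) : Multiset ℕ) = s :=
  Multiset.sort_eq _ _

lemma sortAsc_cons_min (a : ℕ) (s : Multiset ℕ) (h : ∀ b ∈ s, a ≤ b) :
    sortAsc (a ::ₘ s) = a :: sortAsc s := Multiset.sort_cons a s _ h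

lemma G1le : ∀ (l : List ℕ), List.Pairwise (· ≤ ·) l → ∀ x y : ℕ, 1 ≤ x → 1 ≤ y → x ≤ y →
    List.Lex (·<·) (sortAsc (x ::ₘ y ::ₘ (l : Multiset ℕ)))
      (sortAsc ((x+y) ::ₘ (l : Multiset ℕ))) := by
  intro l
  induction l with
  | nil =>
      intro _ x y hx hy hxy
      have h0 : ((([]: List ℕ)) : Multiset ℕ) = 0 := rfl
      rw [h0]
      have e1 : sortAsc (x ::ₘ y ::ₘ (0 : Multiset ℕ)) = [x, y] := by
        rw [sortAsc_cons_min x _ (by intro b hb; simp at hb; omega),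
            sortAsc_cons_min y 0 (by simp)]
        simp [sortAsc, Multiset.sort_zero]
      have e2 : sortAsc ((x+y) ::ₘ (0 : Multiset ℕ)) = [x+y] := by
        rw [sortAsc_cons_min (x+y) 0 (by simp)]
        simp [sortAsc, Multiset.sort_zero]
      rw [e1, e2]
      exact List.Lex.rel (by omega)
  | cons a l ihl =>
      intro hsort x y hx hy hxy
      have hal : ∀ b ∈ l, a ≤ b := fun b hb => List.rel_of_pairwise_cons hsort hb
      have hsort' : List.Pairwise (· ≤ ·) l := hsort.of_cons
      have hcoe : ((a :: l : List ℕ) : Multiset ℕ) = a ::ₘ (l : Multiset ℕ) :=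
        (Multiset.cons_coe a l).symm
      by_cases hax : a ≤ x
      · rw [hcoe]
        have e1 : sortAsc (x ::ₘ y ::ₘ a ::ₘ (l:Multiset ℕ)) =
            a :: sortAsc (x ::ₘ y ::ₘ (l:Multiset ℕ)) := by
          rw [show x ::ₘ y ::ₘ a ::ₘ (l:Multiset ℕ) = a ::ₘ x ::ₘ y ::ₘ (l:Multiset ℕ) by
                rw [Multiset.cons_swap y a, Multiset.cons_swap x a]]
          refine sortAsc_cons_min a _ ?_
          intro b hb
          simp only [Multiset.mem_cons, Multiset.mem_coe] at hb
          rcases hb with rfl | rfl | hb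
          · omega
          · omega
          · exact hal b hb
        have e2 : sortAsc ((x+y) ::ₘ a ::ₘ (l:Multiset ℕ)) =
            a :: sortAsc ((x+y) ::ₘ (l:Multiset ℕ)) := by
          rw [Multiset.cons_swap]
          refine sortAsc_cons_min a _ ?_
          intro b hb
          simp only [Multiset.mem_cons, Multiset.mem_coe] at hb
          rcases hb with rfl | hb
          · omega
          · exact hal b hb
        rw [e1, e2]
        exact List.Lex.cons (ihl hsort' x y hx hy hxy)
      · push_neg at hax
        have e1 : sortAsc (x ::ₘ y ::ₘ ((a :: l : List ℕ):Multiset ℕ)) =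
            x :: sortAsc (y ::ₘ ((a :: l : List ℕ):Multiset ℕ)) := by
          refine sortAsc_cons_min x _ ?_
          intro b hb
          simp only [Multiset.mem_cons, Multiset.mem_coe, List.mem_cons] at hb
          rcases hb with rfl | rfl | hb
          · omega
          · omega
          · have := hal b hb; omega
        rw [e1]
        rcases hrt : sortAsc ((x+y) ::ₘ ((a :: l : List ℕ):Multiset ℕ)) with _ | ⟨h, r⟩
        · exfalso
          have := sortAsc_coe ((x+y) ::ₘ ((a :: l : List ℕ):Multiset ℕ))
          rw [hrt] at this
          simp only [Multiset.coe_nil] at this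
          exact Multiset.cons_ne_zero this.symm
        · apply List.Lex.rel
          have hh : h ∈ (x+y) ::ₘ ((a :: l : List ℕ):Multiset ℕ) := by
            rw [← Multiset.mem_sort (· ≤ ·)]
            show h ∈ sortAsc _
            rw [hrt]
            simp
          rcases Multiset.mem_cons.mp hh with rfl | hh
          · omega
          · rw [Multiset.mem_coe, List.mem_cons] at hh
            rcases hh with rfl | hh
            · omega
            · have := hal h hh; omega

lemma G1 (u : Multiset ℕ) (hu : ∀ b ∈ u, 1 ≤ b) (x y : ℕ) (hx : 1 ≤ x) (hy : 1 ≤ y) :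
    List.Lex (·<·) (sortAsc (x ::ₘ y ::ₘ u)) (sortAsc ((x+y) ::ₘ u)) := by
  have hl : List.Pairwise (· ≤ ·) (sortAsc u) := Multiset.pairwise_sort _ _
  have hcoe : (↑(sortAsc u) : Multiset ℕ) = u := sortAsc_coe u
  rcases le_total x y with h | h
  · have := G1le (sortAsc u) hl x y hx hy h
    rwa [hcoe] at this
  · have := G1le (sortAsc u) hl y x hy hx h
    rw [hcoe, Multiset.cons_swap, Nat.add_comm] at this
    exact this

lemma G {s t : Multiset ℕ} (h : mcoarse s t) (hs : ∀ a ∈ s, 1 ≤ a) :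
    s = t ∨ List.Lex (·<·) (sortAsc s) (sortAsc t) := by
  induction h with
  | refl => left; rfl
  | @tail b t' hpre hstep ih =>
      right
      obtain ⟨x, y, u, rfl, rfl⟩ := hstep
      have hposb := mcoarse_pos hpre hs
      have hlex2 : List.Lex (·<·) (sortAsc (x ::ₘ y ::ₘ u)) (sortAsc ((x+y) ::ₘ u)) := by
        refine G1 u ?_ x y ?_ ?_
        · intro b hb; exact hposb b (by simp [hb])
        · exact hposb x (by simp)
        · exact hposb y (by simp)
      rcases ih with heq | hlex1
      · rw [heq]; exact hlex2
      · exact lt_trans (α := List ℕ) hlex1 hlex2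

lemma strip : ∀ {s t : Multiset ℕ}, mcoarse s t → (∀ a ∈ s, 1 ≤ a) →
    t.count 1 = s.count 1 →
    mcoarse (Multiset.filter (fun a => a ≠ 1) s) (Multiset.filter (fun a => a ≠ 1) t) := by
  intro s t h
  induction h with
  | refl => intro _ _; exact Relation.ReflTransGen.refl
  | @tail b t' hpre hstep ih =>
      intro hs hc
      obtain ⟨x, y, u, rfl, rfl⟩ := hstep
      have hposb := mcoarse_pos hpre hs
      have hx1 : 1 ≤ x := hposb x (by simp)
      have hy1 : 1 ≤ y := hposb y (by simp)
      have hle1 : ((x+y) ::ₘ u).count 1 ≤ (x ::ₘ y ::ₘ u).count 1 :=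
        mstep_count1 ⟨x, y, u, rfl, rfl⟩
      have hle2 : (x ::ₘ y ::ₘ u).count 1 ≤ s.count 1 := mcoarse_count1 hpre
      have heq1 : (x ::ₘ y ::ₘ u).count 1 = s.count 1 := by omega
      have hxy1 : x ≠ 1 ∧ y ≠ 1 := by
        have e1 := Multiset.count_cons (1:ℕ) x (y ::ₘ u)
        have e2 := Multiset.count_cons (1:ℕ) y u
        have e3 := Multiset.count_cons (1:ℕ) (x+y) u
        rw [if_neg (by omega : ¬ (1:ℕ) = x + y)] at e3
        constructor
        · rintro rfl
          rw [if_pos rfl] at e1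
          split_ifs at e2 <;> omega
        · rintro rfl
          rw [if_pos rfl] at e2
          split_ifs at e1 <;> omega
      have ihx := ih hs heq1
      refine Relation.ReflTransGen.tail ihx ?_
      refine ⟨x, y, Multiset.filter (fun a => a ≠ 1) u, ?_, ?_⟩
      · rw [Multiset.filter_cons_of_pos (p := fun a => a ≠ 1) _ hxy1.1,
            Multiset.filter_cons_of_pos (p := fun a => a ≠ 1) _ hxy1.2]
      · rw [Multiset.filter_cons_of_pos (p := fun a => a ≠ 1) _ (by omega : x + y ≠ 1)]

/-! ### list helpers -/

lemma sortAsc_of_sorted_desc (l : List ℕ) (h : List.Pairwise (· ≥ ·) l) :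
    sortAsc (l : Multiset ℕ) = l.reverse := by
  refine List.Perm.eq_of_pairwise' (r := (· ≤ ·)) (Multiset.pairwise_sort _ _) ?_ ?_
  swap
  · have h1 : (sortAsc ↑l).Perm l := Multiset.coe_eq_coe.mp (sortAsc_coe ↑l)
    exact h1.trans l.reverse_perm.symm
  · exact List.pairwise_reverse.mpr h

lemma sorted_ge_getLast : ∀ (l : List ℕ) (h : l ≠ []), List.Pairwise (· ≥ ·) l →
    ∀ a ∈ l, l.getLast h ≤ a := by
  intro l
  induction l with
  | nil => intro h; exact absurd rfl h
  | cons x xs ih =>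
      intro h hs a ha
      rcases eq_or_ne xs [] with rfl | hxs
      · simp at ha
        subst ha
        simp [List.getLast]
      · rw [List.getLast_cons hxs]
        rcases List.mem_cons.mp ha with rfl | ha
        · exact List.rel_of_pairwise_cons hs (List.getLast_mem hxs)
        · exact ih hxs hs.of_cons a ha

lemma split_run : ∀ (l : List ℕ) (h : l ≠ []), List.Pairwise (· ≥ ·) l →
    ∃ p r, l = p ++ List.replicate r (l.getLast h) ∧ 1 ≤ r ∧ ∀ a ∈ p, l.getLast h < a := by
  intro l
  induction l with
  | nil => intro h; exact absurd rfl h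
  | cons x xs ih =>
      intro h hs
      rcases eq_or_ne xs [] with rfl | hxs
      · exact ⟨[], 1, by simp [List.getLast], le_rfl, by simp⟩
      · obtain ⟨p, r, hdec, hr, hp⟩ := ih hxs hs.of_cons
        have hgl : (x :: xs).getLast h = xs.getLast hxs := List.getLast_cons hxs
        rw [hgl]
        by_cases hxg : x = xs.getLast hxs
        · have hpnil : p = [] := by
            rcases p with _ | ⟨b, p'⟩
            · rfl
            · exfalso
              have hb : xs.getLast hxs < b := hp b (by simp)
              have hbmem : b ∈ xs := by rw [hdec]; simp
              have := List.rel_of_pairwise_cons hs hbmem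
              omega
          subst hpnil
          refine ⟨[], r+1, ?_, by omega, by simp⟩
          rw [List.nil_append] at hdec ⊢
          rw [List.replicate_succ, ← hdec, hxg]
        · have hgle : xs.getLast hxs ≤ x := List.rel_of_pairwise_cons hs (List.getLast_mem hxs)
          refine ⟨x :: p, r, by rw [List.cons_append, ← hdec], hr, ?_⟩
          intro a ha
          rcases List.mem_cons.mp ha with rfl | ha
          · omega
          · exact hp a ha

lemma filter_ne_one (q : List ℕ) (hq : ∀ a ∈ q, 2 ≤ a) (n : ℕ) :
    Multiset.filter (fun a => a ≠ 1) ((q : Multiset ℕ) + Multiset.replicate n 1) =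
      (q : Multiset ℕ) := by
  rw [Multiset.filter_add]
  have h1 : Multiset.filter (fun a => a ≠ 1) (q : Multiset ℕ) = ↑q :=
    Multiset.filter_eq_self.mpr (fun a ha => by
      have := hq a (Multiset.mem_coe.mp ha); omega)
  have h2 : Multiset.filter (fun a => a ≠ 1) (Multiset.replicate n (1:ℕ)) = 0 := by
    rw [Multiset.filter_eq_nil]
    intro a ha
    have := Multiset.eq_of_mem_replicate ha
    omega
  rw [h1, h2, add_zero]

lemma count1_coe_replicate (q : List ℕ) (hq : ∀ a ∈ q, 2 ≤ a) (n : ℕ) :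
    Multiset.count 1 ((q : Multiset ℕ) + Multiset.replicate n 1) = n := by
  rw [Multiset.count_add, Multiset.count_replicate, if_pos rfl]
  have h1 : Multiset.count 1 (q : Multiset ℕ) = 0 := by
    rw [Multiset.count_eq_zero]
    intro hmem
    have := hq 1 (Multiset.mem_coe.mp hmem)
    omega
  omega

lemma not_lex_nil {l : List ℕ} (h : List.Lex (·<·) l []) : False := by cases h

lemma lex_head_le {a b : ℕ} {l₁ l₂ : List ℕ} (h : List.Lex (·<·) (a :: l₁) (b :: l₂)) :
    a ≤ b := by
  cases h with
  | cons h => exact le_rfl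
  | rel h => omega

lemma lex_cons_same {a : ℕ} {l₁ l₂ : List ℕ} (h : List.Lex (·<·) (a :: l₁) (a :: l₂)) :
    List.Lex (·<·) l₁ l₂ := by
  cases h with
  | cons h => exact h
  | rel h => omega

/-! ### the master lemma -/

lemma mainPart (V : VirasoroVerma c Δ M) (X₀ : VirIndex) (hne : X₀.1.1 ≠ []) :
    V.b.repr (V.L ((X₀.1.1.getLast hne : ℤ) - 1) (V.b X₀)) X₀.dropSmallest ≠ 0 ∧
    ∀ Y : VirIndex, virLt X₀ Y →
      V.b.repr (V.L ((X₀.1.1.getLast hne : ℤ) - 1) (V.b Y)) X₀.dropSmallest = 0 := by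
  have hm : 2 ≤ X₀.1.1.getLast hne := X₀.2.2 _ (List.getLast_mem hne)
  set lam := X₀.1.1 with hlam
  set n₀ := X₀.1.2 with hn₀
  set m₁ := lam.getLast hne with hm₁
  have hXt2 : (X₀.dropSmallest).1.2 = n₀ + 1 := rfl
  have hXt1 : (X₀.dropSmallest).1.1 = lam.dropLast := rfl
  have hlamall : ∀ b ∈ lam, m₁ ≤ b := sorted_ge_getLast lam hne X₀.2.1
  constructor
  · -- nonvanishing of the leading coefficient
    obtain ⟨lp, r, hdec, hr, hlp⟩ := split_run lam hne X₀.2.1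
    have hdrop : lam.dropLast = lp ++ List.replicate (r-1) m₁ := by
      have h2 : lam = (lp ++ List.replicate (r-1) m₁) ++ [m₁] := by
        rw [hdec, List.append_assoc]
        congr 1
        rw [show r = (r-1) + 1 by omega, List.replicate_succ']
        rw [show r - 1 + 1 - 1 = r - 1 from by omega, ← hm₁]
      rw [h2, List.dropLast_concat]
    have hbX : V.b X₀ = wv V (lp ++ (List.replicate r m₁ ++ List.replicate n₀ 1)) := by
      rw [b_eq_wv, wordOf, ← hlam, ← hn₀, hdec, List.append_assoc]
    have hbXt : V.b X₀.dropSmallest =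
        wv V (lp ++ (List.replicate (r-1) m₁ ++ List.replicate (n₀+1) 1)) := by
      rw [b_eq_wv, wordOf, hXt1, hXt2, hdrop, List.append_assoc]
    have hst := stage2 V hm n₀ r lp hlp
    rw [← hbX, ← hbXt] at hst
    have hrepry : V.b.repr (V.L ((m₁:ℤ)-1) (V.b X₀) -
        ((r:ℂ)*(2*(m₁:ℂ)-1)) • V.b X₀.dropSmallest) X₀.dropSmallest = 0 := by
      refine repr_span_zero V (lowSet_le_basis V n₀ hst) ?_
      show ¬ (X₀.dropSmallest).1.2 ≤ n₀
      rw [hXt2]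
      omega
    have hval : V.b.repr (V.L ((m₁:ℤ)-1) (V.b X₀)) X₀.dropSmallest
        = (r:ℂ)*(2*(m₁:ℂ)-1) := by
      have hex : V.L ((m₁:ℤ)-1) (V.b X₀) =
          ((r:ℂ)*(2*(m₁:ℂ)-1)) • V.b X₀.dropSmallest +
          (V.L ((m₁:ℤ)-1) (V.b X₀) - ((r:ℂ)*(2*(m₁:ℂ)-1)) • V.b X₀.dropSmallest) := by
        module
      rw [hex, map_add, map_smul, Finsupp.add_apply, Finsupp.smul_apply, V.b.repr_self,
          Finsupp.single_eq_same, hrepry]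
      simp
    rw [hval]
    refine mul_ne_zero ?_ ?_
    · exact_mod_cast Nat.cast_ne_zero.mpr (by omega : r ≠ 0)
    · intro hzero
      have h1 : ((2*m₁ - 1 : ℕ) : ℂ) = 2*(m₁:ℂ) - 1 := by
        rw [Nat.cast_sub (by omega : 1 ≤ 2*m₁)]
        push_cast
        ring
      rw [← h1] at hzero
      have := Nat.cast_eq_zero.mp hzero
      omega
  · intro Y hlt
    rcases hlt with hn | ⟨hn, hlex⟩
    · -- fewer 1s
      have hbY : V.b Y = wv V (Y.1.1 ++ List.replicate Y.1.2 1) := by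
        rw [b_eq_wv, wordOf]
      have hk : ((m₁:ℤ) - 1) = ((m₁ - 1 : ℕ):ℤ) := by omega
      rw [hbY, hk]
      have hmem := L_pos_wv V (Y.1.1 ++ List.replicate Y.1.2 1)
        (pos_mix Y.1.1 Y.2.2 _) (m₁-1) (by omega)
      have hc : (Y.1.1 ++ List.replicate Y.1.2 1).count 1 = Y.1.2 :=
        count1_mix _ Y.2.2 _
      have hn' : Y.1.2 < n₀ := hn
      have hsub : {u : List ℕ | (∀ a ∈ u, 1 ≤ a) ∧
            u.count 1 ≤ (Y.1.1 ++ List.replicate Y.1.2 1).count 1 + 1} ⊆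
          {u : List ℕ | (∀ a ∈ u, 1 ≤ a) ∧ u.count 1 ≤ n₀} := by
        intro u hu
        have h2 := hu.2
        rw [hc] at h2
        exact ⟨hu.1, by omega⟩
      have hmem2 := Submodule.span_mono (Set.image_mono hsub) hmem
      refine repr_span_zero V (lowSet_le_basis V n₀ hmem2) ?_
      show ¬ (X₀.dropSmallest).1.2 ≤ n₀
      rw [hXt2]
      omega
    · -- same number of 1s, lex comparison
      have hμne : Y.1.1 ≠ [] := by
        intro hnil
        rw [hnil] at hlex
        rw [List.reverse_nil] at hlex
        exact not_lex_nil hlex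
      set μ := Y.1.1 with hμ
      set g := μ.getLast hμne with hg
      have hgall : ∀ b ∈ μ, g ≤ b := sorted_ge_getLast μ hμne Y.2.1
      have hlamrev : lam.reverse = m₁ :: lam.dropLast.reverse := by
        conv_lhs => rw [← List.dropLast_append_getLast hne]
        rw [List.reverse_concat]
      have hμrev : μ.reverse = g :: μ.dropLast.reverse := by
        conv_lhs => rw [← List.dropLast_append_getLast hμne]
        rw [List.reverse_concat]
      rw [hlamrev, hμrev] at hlex
      have hm₁g : m₁ ≤ g := lex_head_le hlex
      have hparts : ∀ b ∈ μ, (m₁ - 1 : ℕ) < b := fun b hb => by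
        have := hgall b hb; omega
      have hbY : V.b Y = wv V (μ ++ List.replicate n₀ 1) := by
        rw [b_eq_wv, wordOf]
        show wv V ((Y.1.1 : List ℕ) ++ List.replicate Y.1.2 1) = _
        rw [← hn]
      have hk : ((m₁:ℤ) - 1) = ((m₁ - 1 : ℕ):ℤ) := by omega
      rw [hbY, hk]
      have hmem := hard V (m₁-1) (by omega) n₀ μ hparts
      refine repr_span_zero V hmem ?_
      rintro (h1 | ⟨a, ha, hco⟩)
      · have : (X₀.dropSmallest).1.2 ≤ n₀ := h1
        rw [hXt2] at this
        omega
      · -- count forces a = m₁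
        have hμ2 : ∀ b ∈ μ, 2 ≤ b := Y.2.2
        have herase2 : ∀ b ∈ (μ : Multiset ℕ).erase a, 2 ≤ b := fun b hb =>
          hμ2 b (Multiset.mem_coe.mp (Multiset.mem_of_mem_erase hb))
        have hcnt := mcoarse_count1 hco
        rw [idxM_count1, hXt2] at hcnt
        have hsrc : Multiset.count 1
            ((a - (m₁-1)) ::ₘ ((μ : Multiset ℕ).erase a + Multiset.replicate n₀ 1)) =
            n₀ + (if (1:ℕ) = a - (m₁-1) then 1 else 0) := by
          rw [Multiset.count_cons, Multiset.count_add, Multiset.count_replicate, if_pos rfl]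
          have h0 : Multiset.count 1 ((μ : Multiset ℕ).erase a) = 0 := by
            rw [Multiset.count_eq_zero]
            intro hmem1
            have := herase2 1 hmem1
            omega
          omega
        rw [hsrc] at hcnt
        have ham : a = m₁ := by
          have haμ : m₁ ≤ a := le_trans hm₁g (hgall a ha)
          split_ifs at hcnt <;> omega
        subst ham
        have hgm : g = m₁ := le_antisymm (hgall _ ha) hm₁g
        have hlexTail : List.Lex (·<·) lam.dropLast.reverse μ.dropLast.reverse := by
          rw [hgm] at hlex
          exact lex_cons_same hlex
        have hsub1 : m₁ - (m₁ - 1) = 1 := by omega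
        rw [hsub1] at hco
        have hcsrc : Multiset.count 1
            ((1:ℕ) ::ₘ ((μ : Multiset ℕ).erase m₁ + Multiset.replicate n₀ 1)) = n₀ + 1 := by
          rw [Multiset.count_cons, if_pos rfl, Multiset.count_add, Multiset.count_replicate,
              if_pos rfl]
          have h0 : Multiset.count 1 ((μ : Multiset ℕ).erase m₁) = 0 := by
            rw [Multiset.count_eq_zero]
            intro hmem1
            have := herase2 1 hmem1
            omega
          omega
        have hctgt : Multiset.count 1 (idxM X₀.dropSmallest) = n₀ + 1 := by
          rw [idxM_count1, hXt2]
        have hpossrc : ∀ b ∈ ((1:ℕ) ::ₘ ((μ : Multiset ℕ).erase m₁ + Multiset.replicate n₀ 1)),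
            1 ≤ b := by
          intro b hb
          rcases Multiset.mem_cons.mp hb with rfl | hb
          · omega
          · rcases Multiset.mem_add.mp hb with hb | hb
            · have := herase2 b hb; omega
            · have := Multiset.eq_of_mem_replicate hb; omega
        have hstrip := strip hco hpossrc (by rw [hcsrc, hctgt])
        have hFsrc : Multiset.filter (fun b => b ≠ 1)
            ((1:ℕ) ::ₘ ((μ : Multiset ℕ).erase m₁ + Multiset.replicate n₀ 1)) =
            (μ : Multiset ℕ).erase m₁ := by
          rw [Multiset.filter_cons_of_neg _ (by simp), Multiset.filter_add]
          rw [Multiset.filter_eq_self.mpr (fun b hb => by have := herase2 b hb; omega)]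
          rw [Multiset.filter_eq_nil.mpr (fun b hb => by
            have := Multiset.eq_of_mem_replicate hb; omega), add_zero]
        have hFtgt : Multiset.filter (fun b => b ≠ 1) (idxM X₀.dropSmallest) =
            (((X₀.dropSmallest).1.1 : List ℕ) : Multiset ℕ) := by
          rw [idxM]
          exact filter_ne_one _ (X₀.dropSmallest).2.2 _
        rw [hFsrc, hFtgt] at hstrip
        have herase : ((μ : Multiset ℕ).erase m₁) = ((μ.dropLast : List ℕ) : Multiset ℕ) := by
          have hμdec : μ = μ.dropLast ++ [g] := (List.dropLast_append_getLast hμne).symm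
          rw [hgm] at hμdec
          conv_lhs => rw [hμdec]
          have hperm : ((μ.dropLast ++ [m₁] : List ℕ) : Multiset ℕ) =
              m₁ ::ₘ (μ.dropLast : Multiset ℕ) := by
            rw [Multiset.coe_eq_coe.mpr (List.perm_append_singleton m₁ μ.dropLast),
                Multiset.cons_coe]
          rw [hperm, Multiset.erase_cons_head]
        rw [herase, hXt1] at hstrip
        have hsortμ' : List.Pairwise (· ≥ ·) μ.dropLast :=
          List.Pairwise.sublist (List.dropLast_sublist _) Y.2.1
        have hsortlam : List.Pairwise (· ≥ ·) lam.dropLast :=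
          List.Pairwise.sublist (List.dropLast_sublist _) X₀.2.1
        have hposμ' : ∀ b ∈ (μ.dropLast : Multiset ℕ), 1 ≤ b := by
          intro b hb
          have hb' : b ∈ μ := (List.dropLast_sublist μ).subset (Multiset.mem_coe.mp hb)
          have := hμ2 b hb'
          omega
        rcases G hstrip hposμ' with heq | hlt2
        · have heqrev : μ.dropLast.reverse = lam.dropLast.reverse := by
            have h1 := congrArg sortAsc heq
            rwa [sortAsc_of_sorted_desc _ hsortμ', sortAsc_of_sorted_desc _ hsortlam] at h1
          rw [← heqrev] at hlexTail
          exact lt_irrefl (α := List ℕ) _ hlexTail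
        · rw [sortAsc_of_sorted_desc _ hsortμ', sortAsc_of_sorted_desc _ hsortlam] at hlt2
          exact lt_asymm (α := List ℕ) hlexTail hlt2

end VirProof

/-- for `X₀ = (λ, n₀) ∈ C_l` with `λ` nonempty with smallest part
`m₁`, the coefficient of `b_{X̃}` (where `X̃ = (λ', n₀+1)`, `λ'` being `λ` with
one copy of `m₁` removed) in `L_{m₁-1} · b_{X₀}` is nonzero, while it is zero
in `L_{m₁-1} · b_Y` for every level-`l` index `Y` with `X₀ ≺_Vir Y`, `Y ≠ X₀`.
Consequently `≺_Vir` is adapted to `C_l \ {((), l)}`, with ordering kernel the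
single index `((), l)`. -/
theorem virasoro_ordering_adapted {c Δ : ℂ} {M : Type u} [AddCommGroup M] [Module ℂ M]
    (V : VirasoroVerma c Δ M) (l : ℕ) (X₀ : VirIndex) (hlev : X₀.level = l)
    (hne : X₀.1.1 ≠ []) :
    (V.b.repr (V.L ((X₀.1.1.getLast hne : ℤ) - 1) (V.b X₀)) X₀.dropSmallest ≠ 0 ∧
      ∀ Y : VirIndex, Y.level = l → virLt X₀ Y → Y ≠ X₀ →
        V.b.repr (V.L ((X₀.1.1.getLast hne : ℤ) - 1) (V.b Y)) X₀.dropSmallest = 0) ∧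
    (∀ Z : VirIndex, Z.level = l → Z ≠ VirIndex.empty l →
      ∃ m : ℤ, 1 ≤ m ∧ ∃ W : VirIndex,
        V.b.repr (V.L m (V.b Z)) W ≠ 0 ∧
        ∀ Y : VirIndex, Y.level = l → virLt Z Y → Y ≠ Z →
          V.b.repr (V.L m (V.b Y)) W = 0) := by
  constructor
  · obtain ⟨h1, h2⟩ := VirProof.mainPart V X₀ hne
    exact ⟨h1, fun Y _ hlt _ => h2 Y hlt⟩
  · intro Z hZlev hZne
    have hne' : Z.1.1 ≠ [] := by
      intro hnil
      apply hZne
      have hlev2 : Z.1.2 = l := by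
        rw [← hZlev]
        show Z.1.2 = Z.1.1.sum + Z.1.2
        rw [hnil]
        simp
      apply Subtype.ext
      rw [Prod.ext_iff]
      exact ⟨hnil, hlev2⟩
    obtain ⟨h1, h2⟩ := VirProof.mainPart V Z hne'
    refine ⟨(Z.1.1.getLast hne' : ℤ) - 1, ?_, Z.dropSmallest, h1, fun Y _ hlt _ => h2 Y hlt⟩
    have := Z.2.2 _ (List.getLast_mem hne')
    omega
end

section
/- Let l ≥ 1 and let Ψ₁, Ψ₂ ∈ M lie in the span of the level-l basis vectors {b_X : X ∈ C_l} and satisfy L_mΨ₁ = L_mΨ₂ = 0 for all m ≥ 1. If the coefficients of the basis vector L_{−1}^l v in the basis expansions of Ψ₁ and Ψ₂ are equal, then Ψ₁ = Ψ₂. -/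
universe u

namespace VirasoroVerma

variable {c Δ : ℂ} {M : Type u} [AddCommGroup M] [Module ℂ M] (V : VirasoroVerma c Δ M)

/-- The vector `L_{-s₁} L_{-s₂} ⋯ L_{-s_k} v`. -/
def vec (s : List ℕ) : M := listApplyVir V.L s V.v

@[simp] lemma vec_nil : V.vec [] = V.v := rfl

@[simp] lemma vec_cons (a : ℕ) (t : List ℕ) : V.vec (a :: t) = V.L (-(a : ℤ)) (V.vec t) := rfl

lemma vec_append (p q : List ℕ) :
    V.vec (p ++ q) = listApplyVir V.L p (V.vec q) := by
  simp [vec, listApplyVir, List.foldr_append]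

/-- "Length" of an index: total number of Virasoro generators. -/
def lenI (X : VirIndex) : ℕ := X.1.1.length + X.1.2

/-- The list of (negated) modes of an index. -/
def sList (X : VirIndex) : List ℕ := X.1.1 ++ List.replicate X.1.2 1

lemma sList_sorted (X : VirIndex) : (sList X).Pairwise (· ≥ ·) := by
  rcases X with ⟨⟨lam, n⟩, hs, h2⟩
  simp only [sList]
  refine List.pairwise_append.2 ⟨hs, List.pairwise_replicate.mpr (by simp), ?_⟩
  intro a ha b hb
  have h2a := h2 a ha
  have hb1 : b = 1 := List.eq_of_mem_replicate hb
  omega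

lemma sList_pos (X : VirIndex) : ∀ x ∈ sList X, 1 ≤ x := by
  rcases X with ⟨⟨lam, n⟩, hs, h2⟩
  intro x hx
  rcases List.mem_append.1 hx with h | h
  · exact le_trans (by norm_num) (h2 x h)
  · simp [List.eq_of_mem_replicate h]

lemma sList_length (X : VirIndex) : (sList X).length = lenI X := by
  simp [sList, lenI]

lemma sList_sum (X : VirIndex) : (sList X).sum = X.level := by
  simp [sList, VirIndex.level, List.sum_replicate]

lemma pow_negone_eq_vec (n : ℕ) : ((V.L (-1)) ^ n) V.v = V.vec (List.replicate n 1) := by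
  induction n with
  | zero => simp
  | succ n ih =>
      rw [pow_succ', List.replicate_succ]
      simp only [Module.End.mul_apply, vec_cons, ih]
      norm_num

lemma b_eq_vec (X : VirIndex) : V.b X = V.vec (sList X) := by
  rw [V.hb X, sList, vec_append, pow_negone_eq_vec]

lemma sList_inj {X Y : VirIndex} (h : sList X = sList Y) : X = Y := by
  rcases X with ⟨⟨lam, n⟩, hs, h2⟩
  rcases Y with ⟨⟨lam', n'⟩, hs', h2'⟩
  simp only [sList] at h
  have hcount : lam.count 1 = 0 := by
    rw [List.count_eq_zero]
    intro h1; have := h2 1 h1; omega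
  have hcount' : lam'.count 1 = 0 := by
    rw [List.count_eq_zero]
    intro h1; have := h2' 1 h1; omega
  have hn : n = n' := by
    have := congrArg (List.count 1) h
    simpa [List.count_append, hcount, hcount'] using this
  subst hn
  have hlam : lam = lam' := by
    have hlen : lam.length = lam'.length := by
      have := congrArg List.length h
      simpa using this
    exact (List.append_inj h hlen).1
  subst hlam
  rfl

/-- The span of basis vectors of length `≤ k` and level `N`. -/
def SpanL (k : ℕ) (N : ℤ) : Submodule ℂ M :=
  Submodule.span ℂ (V.b '' {X | lenI X ≤ k ∧ (X.level : ℤ) = N})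

lemma SpanL_mono {k k' : ℕ} (h : k ≤ k') (N : ℤ) : V.SpanL k N ≤ V.SpanL k' N := by
  apply Submodule.span_mono
  apply Set.image_mono
  intro X hX
  exact ⟨le_trans hX.1 h, hX.2⟩

lemma repr_eq_zero_of_mem_span {S : Set VirIndex} {r : M}
    (hr : r ∈ Submodule.span ℂ (V.b '' S)) {Y : VirIndex} (hY : Y ∉ S) :
    V.b.repr r Y = 0 := by
  have := (V.b.mem_span_image.1 hr)
  by_contra h
  exact hY (this (Finsupp.mem_support_iff.2 h))

lemma repr_SpanL_eq_zero {k : ℕ} {N : ℤ} {r : M} (hr : r ∈ V.SpanL k N)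
    {Y : VirIndex} (hY : k < lenI Y) : V.b.repr r Y = 0 := by
  refine V.repr_eq_zero_of_mem_span hr ?_
  intro hmem
  have := hmem.1
  omega

lemma comm_apply (m n : ℤ) (w : M) :
    V.L m (V.L n w) = V.L n (V.L m w) + ((m : ℂ) - (n : ℂ)) • V.L (m + n) w +
      (if m + n = 0 then c / 12 * ((m : ℂ) ^ 3 - (m : ℂ)) else 0) • w := by
  have h := congrArg (fun E : Module.End ℂ M => E w) (V.hcomm m n)
  simp only [LinearMap.sub_apply, Module.End.mul_apply, LinearMap.add_apply,
    LinearMap.smul_apply, Module.End.one_apply] at h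
  linear_combination (norm := module) h

lemma L0_vec (s : List ℕ) : V.L 0 (V.vec s) = ((Δ : ℂ) + (s.sum : ℂ)) • V.vec s := by
  induction s with
  | nil => simpa using V.hv0
  | cons a t ih =>
      have h := V.comm_apply 0 (-(a : ℤ)) (V.vec t)
      have hne : (0 : ℤ) + (-(a : ℤ)) = 0 ↔ (a : ℤ) = 0 := by omega
      rw [vec_cons, h, ih]
      simp only [map_add, map_smul, zero_add]
      by_cases ha : (a : ℤ) = 0
      · have ha' : a = 0 := by exact_mod_cast ha
        subst ha'
        simp only [List.sum_cons]
        push_cast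
        module
      · rw [if_neg (by omega)]
        simp only [List.sum_cons, zero_smul, add_zero]
        push_cast
        module

/-- Measure used for the sorting induction. -/
def mu : List ℕ → ℕ
  | [] => 0
  | _ :: t => t.sum + mu t

lemma mu_swap (p : List ℕ) (x y : ℕ) (q : List ℕ) (h : x < y) :
    mu (p ++ y :: x :: q) < mu (p ++ x :: y :: q) := by
  induction p with
  | nil => simp [mu]; omega
  | cons a p ih =>
      simp only [List.cons_append, mu, List.append_eq]
      have hs : (p ++ y :: x :: q).sum = (p ++ x :: y :: q).sum := by
        simp [List.sum_append]; omega
      omega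

lemma mu_merge (p : List ℕ) (x y : ℕ) (q : List ℕ) :
    mu (p ++ (x + y) :: q) ≤ mu (p ++ x :: y :: q) := by
  induction p with
  | nil => simp only [List.nil_append, mu]; omega
  | cons a p ih =>
      simp only [List.cons_append, mu, List.append_eq]
      have hs : (p ++ (x + y) :: q).sum = (p ++ x :: y :: q).sum := by
        simp [List.sum_append]; omega
      omega

lemma vec_swap (p : List ℕ) (x y : ℕ) (q : List ℕ) :
    V.vec (p ++ x :: y :: q) =
      V.vec (p ++ y :: x :: q) + ((y : ℂ) - (x : ℂ)) • V.vec (p ++ (x + y) :: q) := by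
  induction p with
  | nil =>
      simp only [List.nil_append, vec_cons]
      have h := V.comm_apply (-(x : ℤ)) (-(y : ℤ)) (V.vec q)
      by_cases hxy : x = 0 ∧ y = 0
      · rcases hxy with ⟨hx, hy⟩; subst hx; subst hy; simp
      · have hsum : (-(x : ℤ)) + (-(y : ℤ)) = -(((x + y : ℕ) : ℤ)) := by push_cast; ring
        rw [hsum] at h
        rw [h, if_neg (by omega)]
        push_cast
        module
  | cons a p ih =>
      simp only [List.cons_append, vec_cons, ih, map_add, map_smul]

/-- Build an index from a sorted positive list. -/
lemma exists_sorted_idx (s : List ℕ) (hs : s.Pairwise (· ≥ ·)) (hp : ∀ x ∈ s, 1 ≤ x) :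
    ∃ X : VirIndex, sList X = s := by
  induction s with
  | nil => exact ⟨VirIndex.empty 0, rfl⟩
  | cons a t ih =>
      have hst : t.Pairwise (· ≥ ·) := hs.of_cons
      have hpt : ∀ x ∈ t, 1 ≤ x := fun x hx => hp x (List.mem_cons_of_mem _ hx)
      by_cases ha : a = 1
      · subst ha
        -- everything in t is 1
        have ht1 : ∀ x ∈ t, x = 1 := by
          intro x hx
          have h1 := hpt x hx
          have h2 : 1 ≥ x := (List.pairwise_cons.1 hs).1 x hx
          omega
        refine ⟨VirIndex.empty (t.length + 1), ?_⟩
        simp only [sList, VirIndex.empty, List.nil_append]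
        rw [List.replicate_succ]
        congr 1
        exact (List.eq_replicate_of_mem ht1).symm
      · obtain ⟨X, hX⟩ := ih hst hpt
        have ha2 : 2 ≤ a := by have := hp a (List.mem_cons_self); omega
        -- a goes in front of the λ part
        rcases X with ⟨⟨lam, n⟩, hXs, hX2⟩
        refine ⟨⟨(a :: lam, n), ?_, ?_⟩, ?_⟩
        · refine List.pairwise_cons.2 ⟨?_, hXs⟩
          intro b hb
          have hbs : b ∈ sList ⟨(lam, n), hXs, hX2⟩ := by
            simp only [sList]
            exact List.mem_append_left _ hb
          rw [hX] at hbs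
          exact (List.pairwise_cons.1 hs).1 b hbs
        · intro x hx
          rcases List.mem_cons.1 hx with h | h
          · omega
          · exact hX2 x h
        · simp only [sList, List.cons_append]
          rw [← hX]
          rfl

lemma exists_idx (s : List ℕ) (hp : ∀ x ∈ s, 1 ≤ x) :
    ∃ X : VirIndex, List.Perm (sList X) s := by
  obtain ⟨X, hX⟩ := exists_sorted_idx (List.insertionSort (· ≥ ·) s)
    (List.pairwise_insertionSort _ s)
    (fun x hx => hp x ((List.perm_insertionSort _ s).mem_iff.1 hx))
  exact ⟨X, hX ▸ List.perm_insertionSort _ s⟩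

lemma b_mem_SpanL {X : VirIndex} {k : ℕ} {N : ℤ} (hk : lenI X ≤ k)
    (hN : (X.level : ℤ) = N) : V.b X ∈ V.SpanL k N :=
  Submodule.subset_span ⟨X, ⟨hk, hN⟩, rfl⟩

lemma not_sorted_exists_desc {s : List ℕ} (h : ¬ s.Pairwise (· ≥ ·)) :
    ∃ p x y q, s = p ++ x :: y :: q ∧ x < y := by
  induction s with
  | nil => exact absurd List.Pairwise.nil h
  | cons a t ih =>
      by_cases ht : t.Pairwise (· ≥ ·)
      · rcases t with _ | ⟨b, t'⟩
        · exact absurd (List.pairwise_singleton _ a) h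
        · by_cases hab : b ≤ a
          · exfalso
            apply h
            refine List.pairwise_cons.2 ⟨?_, ht⟩
            intro x hx
            rcases List.mem_cons.1 hx with rfl | hx
            · exact hab
            · exact le_trans ((List.pairwise_cons.1 ht).1 x hx) hab
          · exact ⟨[], a, b, t', rfl, by omega⟩
      · obtain ⟨p, x, y, q, rfl, hxy⟩ := ih ht
        exact ⟨a :: p, x, y, q, rfl, hxy⟩

lemma vec_sub_b_mem (n : ℕ) : ∀ s : List ℕ, s.length + mu s ≤ n → (∀ x ∈ s, 1 ≤ x) →
    ∀ X : VirIndex, List.Perm (sList X) s →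
    V.vec s - V.b X ∈ V.SpanL (s.length - 1) (s.sum : ℤ) := by
  induction n with
  | zero =>
      intro s hn hp X hX
      have hs : s = [] := List.eq_nil_of_length_eq_zero (by omega)
      subst hs
      have h0 : sList X = [] := hX.eq_nil
      rw [b_eq_vec, h0]
      simp
  | succ n ih =>
      intro s hn hp X hX
      by_cases hsort : s.Pairwise (· ≥ ·)
      · have h0 : sList X = s := List.Perm.eq_of_pairwise' (sList_sorted X) hsort hX
        rw [b_eq_vec, h0]
        simp
      · obtain ⟨p, x, y, q, rfl, hxy⟩ := not_sorted_exists_desc hsort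
        have hswap := V.vec_swap p x y q
        have hperm : List.Perm (p ++ y :: x :: q) (p ++ x :: y :: q) :=
          (List.Perm.swap x y q).append_left p
        have hlen' : (p ++ y :: x :: q).length = (p ++ x :: y :: q).length := hperm.length_eq
        have hsum' : (p ++ y :: x :: q).sum = (p ++ x :: y :: q).sum := hperm.sum_eq
        have hlenm : (p ++ (x + y) :: q).length + 1 = (p ++ x :: y :: q).length := by
          simp; omega
        have hsumm : (p ++ (x + y) :: q).sum = (p ++ x :: y :: q).sum := by
          simp [List.sum_append]; omega
        have hp' : ∀ z ∈ p ++ y :: x :: q, 1 ≤ z := by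
          intro z hz; exact hp z (hperm.mem_iff.1 hz)
        have hpm : ∀ z ∈ p ++ (x + y) :: q, 1 ≤ z := by
          intro z hz
          rcases List.mem_append.1 hz with h | h
          · exact hp z (List.mem_append_left _ h)
          · rcases List.mem_cons.1 h with rfl | h
            · have := hp y (by simp); omega
            · exact hp z (by simp [h])
        have h1 : V.vec (p ++ y :: x :: q) - V.b X
            ∈ V.SpanL ((p ++ x :: y :: q).length - 1) ((p ++ x :: y :: q).sum : ℤ) := by
          have hmes : (p ++ y :: x :: q).length + mu (p ++ y :: x :: q) ≤ n := by
            have := mu_swap p x y q hxy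
            omega
          have := ih _ hmes hp' X (hX.trans hperm.symm)
          rwa [hlen', hsum'] at this
        have h2 : V.vec (p ++ (x + y) :: q)
            ∈ V.SpanL ((p ++ x :: y :: q).length - 1) ((p ++ x :: y :: q).sum : ℤ) := by
          obtain ⟨Xm, hXm⟩ := exists_idx _ hpm
          have hmes : (p ++ (x + y) :: q).length + mu (p ++ (x + y) :: q) ≤ n := by
            have := mu_merge p x y q
            omega
          have hsub := ih _ hmes hpm Xm hXm
          have hbm : V.b Xm ∈ V.SpanL ((p ++ (x + y) :: q).length) (((p ++ (x + y) :: q).sum : ℕ) : ℤ) := by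
            refine V.b_mem_SpanL (le_of_eq ?_) ?_
            · rw [← sList_length, hXm.length_eq]
            · rw [← sList_sum, hXm.sum_eq]
          have hadd := Submodule.add_mem _ (V.SpanL_mono (Nat.sub_le _ _) _ hsub) hbm
          simp only [sub_add_cancel] at hadd
          rw [hsumm] at hadd
          exact V.SpanL_mono (by omega) _ hadd
        rw [hswap]
        have hre : V.vec (p ++ y :: x :: q) + ((y:ℂ) - (x:ℂ)) • V.vec (p ++ (x + y) :: q) - V.b X
            = (V.vec (p ++ y :: x :: q) - V.b X) + ((y:ℂ) - (x:ℂ)) • V.vec (p ++ (x + y) :: q) := by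
          abel
        rw [hre]
        exact Submodule.add_mem _ h1 (Submodule.smul_mem _ _ h2)

lemma vec_mem_SpanL (s : List ℕ) (hp : ∀ x ∈ s, 1 ≤ x) :
    V.vec s ∈ V.SpanL s.length (s.sum : ℤ) := by
  obtain ⟨X, hX⟩ := exists_idx s hp
  have h1 := V.vec_sub_b_mem (s.length + mu s) s le_rfl hp X hX
  have h2 : V.b X ∈ V.SpanL s.length (s.sum : ℤ) := by
    refine V.b_mem_SpanL ?_ ?_
    · rw [← sList_length, hX.length_eq]
    · rw [← sList_sum, hX.sum_eq]
  have := Submodule.add_mem _ (V.SpanL_mono (Nat.sub_le _ _) _ h1) h2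
  simpa using this

lemma L_neg_SpanL (a : ℕ) (ha : 1 ≤ a) {k : ℕ} {N : ℤ} {w : M} (hw : w ∈ V.SpanL k N) :
    V.L (-(a : ℤ)) w ∈ V.SpanL (k + 1) (N + a) := by
  have hle : V.SpanL k N ≤ (V.SpanL (k+1) (N + a)).comap (V.L (-(a:ℤ))) := by
    rw [SpanL, Submodule.span_le]
    rintro _ ⟨X, ⟨hk, hN⟩, rfl⟩
    simp only [SetLike.mem_coe, Submodule.mem_comap]
    rw [b_eq_vec]
    have heq : V.L (-(a:ℤ)) (V.vec (sList X)) = V.vec (a :: sList X) := rfl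
    rw [heq]
    have hmem := V.vec_mem_SpanL (a :: sList X) (by
      intro z hz
      rcases List.mem_cons.1 hz with rfl | hz
      · exact ha
      · exact sList_pos X z hz)
    have hlen : (a :: sList X).length = lenI X + 1 := by
      rw [List.length_cons, sList_length]
    have hsum : (((a :: sList X).sum : ℕ) : ℤ) = N + a := by
      have h2 : ((sList X).sum : ℤ) = N := by rw [sList_sum]; exact hN
      push_cast [List.sum_cons]
      push_cast at h2
      omega
    rw [hlen, hsum] at hmem
    exact V.SpanL_mono (by omega) _ hmem
  exact hle hw

lemma sum_set (s : List ℕ) : ∀ i, i < s.length → ∀ x : ℕ,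
    (s.set i x).sum + s.getD i 0 = s.sum + x := by
  induction s with
  | nil => intro i hi; simp at hi
  | cons a t ih =>
      intro i hi x
      cases i with
      | zero => simp [List.set_cons_zero]; omega
      | succ i =>
          simp only [List.set_cons_succ, List.getD_cons_succ, List.sum_cons]
          have := ih i (by simpa using hi) x
          omega

/-- The leading terms of `L_j` applied to `vec s`. -/
def mainSum (j : ℕ) (s : List ℕ) : M :=
  ∑ i ∈ Finset.range s.length,
    if j < s.getD i 0 then ((s.getD i 0 : ℂ) + (j : ℂ)) • V.vec (s.set i (s.getD i 0 - j))
    else 0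

lemma mainSum_mem (j : ℕ) (s : List ℕ) (hp : ∀ x ∈ s, 1 ≤ x) :
    V.mainSum j s ∈ V.SpanL s.length ((s.sum : ℤ) - (j : ℤ)) := by
  refine Submodule.sum_mem _ ?_
  intro i hi
  rw [Finset.mem_range] at hi
  by_cases hcond : j < s.getD i 0
  · rw [if_pos hcond]
    refine Submodule.smul_mem _ _ ?_
    have hpos : ∀ z ∈ s.set i (s.getD i 0 - j), 1 ≤ z := by
      intro z hz
      rcases List.mem_or_eq_of_mem_set hz with h | rfl
      · exact hp z h
      · omega
    have hmem := V.vec_mem_SpanL _ hpos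
    have hlen : (s.set i (s.getD i 0 - j)).length = s.length := by simp
    have hsum : (((s.set i (s.getD i 0 - j)).sum : ℕ) : ℤ) = (s.sum : ℤ) - (j : ℤ) := by
      have h2 := sum_set s i hi (s.getD i 0 - j)
      omega
    rw [hlen, hsum] at hmem
    exact hmem
  · rw [if_neg hcond]
    exact Submodule.zero_mem _

lemma Lj_vec (s : List ℕ) : ∀ j : ℕ, 1 ≤ j → (∀ x ∈ s, 1 ≤ x) →
    V.L (j : ℤ) (V.vec s) - V.mainSum j s
      ∈ V.SpanL (s.length - 1) ((s.sum : ℤ) - (j : ℤ)) := by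
  induction s with
  | nil =>
      intro j hj _
      rw [vec_nil, V.hvpos (j : ℤ) (by exact_mod_cast hj)]
      simp [mainSum]
  | cons a t ih =>
      intro j hj hp
      have hpt : ∀ x ∈ t, 1 ≤ x := fun x hx => hp x (List.mem_cons_of_mem _ hx)
      have hcomm := V.comm_apply ((j : ℕ) : ℤ) (-(a : ℤ)) (V.vec t)
      -- decompose mainSum
      have hms : V.mainSum j (a :: t)
          = (if j < a then ((a : ℂ) + (j : ℂ)) • V.vec ((a - j) :: t) else 0)
            + V.L (-(a : ℤ)) (V.mainSum j t) := by
        rw [mainSum, List.length_cons, Finset.sum_range_succ']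
        simp only [List.getD_cons_succ, List.getD_cons_zero, List.set_cons_succ,
          List.set_cons_zero]
        rw [add_comm]
        congr 1
        rw [mainSum, map_sum]
        refine Finset.sum_congr rfl ?_
        intro i _
        by_cases hcond : j < t.getD i 0
        · rw [if_pos hcond, if_pos hcond, map_smul, vec_cons]
        · rw [if_neg hcond, if_neg hcond, map_zero]
      have key : V.L ((j : ℕ) : ℤ) (V.vec (a :: t)) - V.mainSum j (a :: t)
          = V.L (-(a : ℤ)) (V.L ((j : ℕ) : ℤ) (V.vec t) - V.mainSum j t)
            + (((((j : ℕ) : ℤ) : ℂ) - ((-(a : ℤ) : ℤ) : ℂ)) • V.L (((j : ℕ) : ℤ) + -(a : ℤ)) (V.vec t)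
               + (if ((j : ℕ) : ℤ) + -(a : ℤ) = 0
                  then c / 12 * ((((j : ℕ) : ℤ) : ℂ) ^ 3 - (((j : ℕ) : ℤ) : ℂ)) else 0) • V.vec t
               - (if j < a then ((a : ℂ) + (j : ℂ)) • V.vec ((a - j) :: t) else 0)) := by
        rw [hms, vec_cons, hcomm, map_sub]
        abel
      rw [key]
      have hlen1 : (a :: t).length - 1 = t.length := by simp
      have hE : V.L (-(a : ℤ)) (V.L ((j : ℕ) : ℤ) (V.vec t) - V.mainSum j t)
          ∈ V.SpanL t.length (((a :: t).sum : ℤ) - (j : ℤ)) := by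
        rcases t with _ | ⟨b, t'⟩
        · rw [vec_nil, V.hvpos (j : ℤ) (by exact_mod_cast hj)]
          simp [mainSum]
        · have hmem := V.L_neg_SpanL a (by have := hp a (List.mem_cons_self); omega)
            (ih j hj hpt)
          have harith : ((((b :: t').sum : ℕ) : ℤ) - (j : ℤ)) + (a : ℤ)
              = (((a :: b :: t').sum : ℕ) : ℤ) - (j : ℤ) := by
            push_cast [List.sum_cons]
            ring
          rw [harith] at hmem
          have hl : (b :: t').length - 1 + 1 = (b :: t').length := by simp
          rw [hl] at hmem
          exact hmem
      rw [hlen1]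
      refine Submodule.add_mem _ hE ?_
      -- case analysis on a vs j
      rcases lt_trichotomy j a with hlt | heq | hgt
      · -- j < a : cancellation
        have hL : V.L (((j : ℕ) : ℤ) + -(a : ℤ)) (V.vec t) = V.vec ((a - j) :: t) := by
          have : ((j : ℕ) : ℤ) + -(a : ℤ) = -(((a - j : ℕ) : ℤ)) := by push_cast; omega
          rw [this, vec_cons]
        rw [hL, if_pos hlt, if_neg (by push_cast; omega)]
        have : (((((j : ℕ) : ℤ) : ℂ) - ((-(a : ℤ) : ℤ) : ℂ)) • V.vec ((a - j) :: t)
            + (0 : ℂ) • V.vec t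
            - ((a : ℂ) + (j : ℂ)) • V.vec ((a - j) :: t)) = 0 := by
          push_cast
          module
        rw [this]
        exact Submodule.zero_mem _
      · -- j = a
        subst heq
        rw [if_neg (lt_irrefl _), if_pos (by push_cast; ring), sub_zero]
        have hL0 : ((j : ℕ) : ℤ) + -(j : ℤ) = 0 := by ring
        rw [hL0, V.L0_vec]
        have harith : ((t.sum : ℕ) : ℤ) = (((j :: t).sum : ℕ) : ℤ) - (j : ℤ) := by
          push_cast [List.sum_cons]; ring
        refine Submodule.add_mem _ ?_ ?_
        · refine Submodule.smul_mem _ _ (Submodule.smul_mem _ _ ?_)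
          have := V.vec_mem_SpanL t hpt
          rwa [harith] at this
        · refine Submodule.smul_mem _ _ ?_
          have := V.vec_mem_SpanL t hpt
          rwa [harith] at this
      · -- a < j
        rw [if_neg (by omega), if_neg (by push_cast; omega), zero_smul, add_zero, sub_zero]
        refine Submodule.smul_mem _ _ ?_
        have hL : ((j : ℕ) : ℤ) + -(a : ℤ) = (((j - a : ℕ) : ℕ) : ℤ) := by push_cast; omega
        rw [hL]
        have hja : 1 ≤ j - a := by omega
        have hdiff := ih (j - a) hja hpt
        have hmain := V.mainSum_mem (j - a) t hpt
        have := Submodule.add_mem _ (V.SpanL_mono (Nat.sub_le _ _) _ hdiff) hmain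
        rw [sub_add_cancel] at this
        have harith : ((t.sum : ℕ) : ℤ) - ((j - a : ℕ) : ℤ)
            = (((a :: t).sum : ℕ) : ℤ) - (j : ℤ) := by
          push_cast [List.sum_cons]; omega
        rwa [harith] at this

lemma set_perm (s : List ℕ) : ∀ i, i < s.length → ∀ x : ℕ,
    List.Perm (s.set i x) (x :: s.eraseIdx i) := by
  induction s with
  | nil => intro i hi; simp at hi
  | cons a t ih =>
      intro i hi x
      cases i with
      | zero => simp [List.set_cons_zero, List.eraseIdx]
      | succ i =>
          simp only [List.set_cons_succ, List.eraseIdx_cons_succ]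
          exact ((ih i (by simpa using hi) x).cons a).trans (List.Perm.swap x a _)

lemma cons_eraseIdx_perm (s : List ℕ) : ∀ i, i < s.length →
    List.Perm s (s.getD i 0 :: s.eraseIdx i) := by
  induction s with
  | nil => intro i hi; simp at hi
  | cons a t ih =>
      intro i hi
      cases i with
      | zero => simp [List.eraseIdx]
      | succ i =>
          simp only [List.getD_cons_succ, List.eraseIdx_cons_succ]
          exact ((ih i (by simpa using hi)).cons a).trans (List.Perm.swap _ a _)

/-- Replace one occurrence of `m` in the `λ`-part by an extra `L_{-1}`. -/
def shiftIdx (X : VirIndex) (m : ℕ) : VirIndex :=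
  ⟨(X.1.1.erase m, X.1.2 + 1), X.2.1.erase m,
    fun x hx => X.2.2 x (List.mem_of_mem_erase hx)⟩

lemma sList_shiftIdx_perm (X : VirIndex) (m : ℕ) (hm : m ∈ X.1.1) :
    List.Perm (sList (shiftIdx X m)) (1 :: ((sList X).erase m)) := by
  have h1 : (sList X).erase m = X.1.1.erase m ++ List.replicate X.1.2 1 :=
    List.erase_append_left _ hm
  rw [h1]
  show List.Perm (X.1.1.erase m ++ List.replicate (X.1.2 + 1) 1) _
  rw [List.replicate_succ]
  exact List.perm_middle

lemma shiftIdx_inj {X X' : VirIndex} {m : ℕ} (hm : m ∈ X.1.1) (hm' : m ∈ X'.1.1)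
    (h : shiftIdx X m = shiftIdx X' m) : X = X' := by
  have h1 : X.1.1.erase m = X'.1.1.erase m := congrArg (fun Z : VirIndex => Z.1.1) h
  have h2 : X.1.2 = X'.1.2 := by
    have := congrArg (fun Z : VirIndex => Z.1.2) h
    simpa [shiftIdx] using this
  have hperm : List.Perm X.1.1 X'.1.1 :=
    (List.perm_cons_erase hm).trans (h1 ▸ (List.perm_cons_erase hm').symm)
  have hlam : X.1.1 = X'.1.1 := List.Perm.eq_of_pairwise' X.2.1 X'.2.1 hperm
  exact Subtype.ext (Prod.ext hlam h2)

/-- The main theorem. -/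
theorem kernel_coefficient_determines (l : ℕ) (hl : 1 ≤ l) (Ψ₁ Ψ₂ : M)
    (hmem₁ : Ψ₁ ∈ Submodule.span ℂ (V.b '' {i : VirIndex | i.level = l}))
    (hmem₂ : Ψ₂ ∈ Submodule.span ℂ (V.b '' {i : VirIndex | i.level = l}))
    (hann₁ : ∀ m : ℤ, 1 ≤ m → V.L m Ψ₁ = 0)
    (hann₂ : ∀ m : ℤ, 1 ≤ m → V.L m Ψ₂ = 0)
    (hcoef : V.b.repr Ψ₁ (VirIndex.empty l) = V.b.repr Ψ₂ (VirIndex.empty l)) :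
    Ψ₁ = Ψ₂ := by
  classical
  by_contra hne
  set Ψ : M := Ψ₁ - Ψ₂ with hΨdef
  have hΨne : Ψ ≠ 0 := sub_ne_zero.2 hne
  have hmem : Ψ ∈ Submodule.span ℂ (V.b '' {i : VirIndex | i.level = l}) :=
    Submodule.sub_mem _ hmem₁ hmem₂
  have hann : ∀ m : ℤ, 1 ≤ m → V.L m Ψ = 0 := by
    intro m hm
    rw [hΨdef, map_sub, hann₁ m hm, hann₂ m hm, sub_zero]
  set f := V.b.repr Ψ with hfdef
  have hfe : f (VirIndex.empty l) = 0 := by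
    rw [hfdef, hΨdef, map_sub, Finsupp.sub_apply, hcoef, sub_self]
  have hsupp : ∀ X ∈ f.support, X.level = l := by
    intro X hX
    exact V.b.mem_span_image.1 hmem hX
  have hfne : f ≠ 0 := fun h0 => hΨne (by
    have := congrArg (V.b.repr.symm) (hfdef ▸ h0)
    simpa using this)
  have hTne : f.support.Nonempty := Finsupp.support_nonempty_iff.2 hfne
  -- lambda part of support elements is nonempty
  have hlam_ne : ∀ X ∈ f.support, X.1.1 ≠ [] := by
    intro X hX hnil
    have hXlev := hsupp X hX
    have hX2 : X.1.2 = l := by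
      rw [VirIndex.level, hnil] at hXlev
      simpa using hXlev
    have hXe : X = VirIndex.empty l := Subtype.ext (Prod.ext hnil hX2)
    rw [hXe] at hX
    exact (Finsupp.mem_support_iff.1 hX) hfe
  have hhead2 : ∀ X ∈ f.support, 2 ≤ X.1.1.headI := by
    intro X hX
    refine X.2.2 _ ?_
    have := hlam_ne X hX
    cases hl' : X.1.1 with
    | nil => exact absurd hl' this
    | cons a t => simp [hl']
  -- maximal length
  set kst : ℕ := f.support.sup lenI with hkst
  have hk_le : ∀ X ∈ f.support, lenI X ≤ kst := fun X hX => Finset.le_sup hX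
  -- the subset of maximal length
  set T2 : Finset VirIndex := f.support.filter (fun X => lenI X = kst) with hT2
  have hT2ne : T2.Nonempty := by
    obtain ⟨X, hX, hXs⟩ := Finset.exists_mem_eq_sup f.support hTne lenI
    exact ⟨X, Finset.mem_filter.2 ⟨hX, hXs.symm⟩⟩
  set mst : ℕ := T2.sup (fun X => X.1.1.headI) with hmst
  obtain ⟨Xs, hXsT2, hXshead⟩ := Finset.exists_mem_eq_sup T2 hT2ne (fun X => X.1.1.headI)
  have hXs_supp : Xs ∈ f.support := (Finset.mem_filter.1 hXsT2).1
  have hXs_len : lenI Xs = kst := (Finset.mem_filter.1 hXsT2).2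
  have hmst_eq : mst = Xs.1.1.headI := by rw [hmst, hXshead]
  have hmst2 : 2 ≤ mst := hmst_eq ▸ hhead2 Xs hXs_supp
  have hmst_mem : mst ∈ Xs.1.1 := by
    rw [hmst_eq]
    cases hl' : Xs.1.1 with
    | nil => exact absurd hl' (hlam_ne Xs hXs_supp)
    | cons a t => simp
  set j : ℕ := mst - 1 with hjdef
  have hj : 1 ≤ j := by omega
  -- entries of maximal-length support elements are ≤ mst
  have hbound : ∀ X ∈ T2, ∀ z ∈ sList X, z ≤ mst := by
    intro X hX z hz
    have hh : X.1.1.headI ≤ mst := by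
      rw [hmst]
      exact Finset.le_sup (f := fun X : VirIndex => X.1.1.headI) hX
    rcases List.mem_append.1 hz with h | h
    · cases hl' : X.1.1 with
      | nil => rw [hl'] at h; simp at h
      | cons a t =>
          rw [hl'] at h
          have ha : a ≤ mst := by rw [hl'] at hh; simpa using hh
          rcases List.mem_cons.1 h with rfl | h
          · exact ha
          · have hs := X.2.1
            rw [hl'] at hs
            have hza : z ≤ a := (List.pairwise_cons.1 hs).1 z h
            omega
    · have : z = 1 := List.eq_of_mem_replicate h
      omega
  -- the target index Y
  set Y : VirIndex := shiftIdx Xs mst with hYdef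
  have hlen_pos : ∀ X ∈ f.support, 1 ≤ lenI X := by
    intro X hX
    have := List.length_pos_iff.2 (hlam_ne X hX)
    have h2 : lenI X = X.1.1.length + X.1.2 := rfl
    omega
  have hkst1 : 1 ≤ kst := le_trans (hlen_pos Xs hXs_supp) (hk_le Xs hXs_supp)
  have hYlen : lenI Y = kst := by
    have h1 : (Xs.1.1.erase mst).length = Xs.1.1.length - 1 :=
      List.length_erase_of_mem hmst_mem
    have h2 : 1 ≤ Xs.1.1.length := List.length_pos_iff.2 (hlam_ne Xs hXs_supp)
    have h3 : lenI Y = (Xs.1.1.erase mst).length + (Xs.1.2 + 1) := rfl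
    have h4 : lenI Xs = Xs.1.1.length + Xs.1.2 := rfl
    omega
  have hφ0 : ∀ (k : ℕ) (N : ℤ) (r : M), r ∈ V.SpanL k N → k < kst → V.b.repr r Y = 0 := by
    intro k N r hr hk
    exact V.repr_SpanL_eq_zero hr (by omega)
  -- positivity of modified lists
  have hpos_set : ∀ (s : List ℕ), (∀ x ∈ s, 1 ≤ x) → ∀ (i x : ℕ), 1 ≤ x →
      ∀ z ∈ s.set i x, 1 ≤ z := by
    intro s hs i x hx z hz
    rcases List.mem_or_eq_of_mem_set hz with h | rfl
    · exact hs z h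
    · exact hx
  -- expansion of the coefficient of L_j (b X) at Y
  have hrepr_main : ∀ X ∈ f.support,
      V.b.repr (V.L ((j : ℕ) : ℤ) (V.b X)) Y
        = ∑ i ∈ Finset.range (sList X).length,
            (if j < (sList X).getD i 0
             then (((sList X).getD i 0 : ℂ) + (j : ℂ)) *
               V.b.repr (V.vec ((sList X).set i ((sList X).getD i 0 - j))) Y
             else 0) := by
    intro X hX
    have hdiff := V.Lj_vec (sList X) j hj (sList_pos X)
    have hd0 : V.b.repr (V.L ((j : ℕ) : ℤ) (V.vec (sList X)) - V.mainSum j (sList X)) Y = 0 := by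
      refine hφ0 _ _ _ hdiff ?_
      rw [sList_length]
      have h1 := hk_le X hX
      have h2 := hlen_pos X hX
      omega
    rw [b_eq_vec]
    have heq : V.b.repr (V.L ((j : ℕ) : ℤ) (V.vec (sList X))) Y
        = V.b.repr (V.mainSum j (sList X)) Y := by
      have h3 : V.b.repr (V.L ((j : ℕ) : ℤ) (V.vec (sList X))) Y
          - V.b.repr (V.mainSum j (sList X)) Y = 0 := by
        rw [← Finsupp.sub_apply, ← map_sub]
        exact hd0
      exact sub_eq_zero.1 h3
    rw [heq, mainSum, map_sum, Finsupp.finset_sum_apply]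
    refine Finset.sum_congr rfl fun i _ => ?_
    split
    · rw [map_smul, Finsupp.smul_apply, smul_eq_mul]
    · rw [map_zero]
      rfl
  -- key per-position evaluation for maximal-length indices
  have hkey : ∀ X ∈ f.support, lenI X = kst → ∀ i, i < (sList X).length →
      j < (sList X).getD i 0 →
      (sList X).getD i 0 = mst ∧
      V.b.repr (V.vec ((sList X).set i ((sList X).getD i 0 - j))) Y
        = (if X = Xs then 1 else 0) := by
    intro X hX hXlen i hi hcond
    have hXT2 : X ∈ T2 := Finset.mem_filter.2 ⟨hX, hXlen⟩
    have hmem_s : (sList X).getD i 0 ∈ sList X := by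
      rw [List.getD_eq_getElem _ 0 hi]
      exact List.getElem_mem hi
    have hle := hbound X hXT2 _ hmem_s
    have hsi : (sList X).getD i 0 = mst := by omega
    refine ⟨hsi, ?_⟩
    rw [hsi, show mst - j = 1 by omega]
    -- mst belongs to the λ-part of X
    have hmst_sX : mst ∈ sList X := hsi ▸ hmem_s
    have hmst_lam : mst ∈ X.1.1 := by
      rcases List.mem_append.1 hmst_sX with h | h
      · exact h
      · have := List.eq_of_mem_replicate h
        omega
    -- the permutation
    have hperm : List.Perm (sList (shiftIdx X mst)) ((sList X).set i 1) := by
      refine (sList_shiftIdx_perm X mst hmst_lam).trans ?_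
      have h1 : List.Perm ((sList X).set i 1) (1 :: (sList X).eraseIdx i) :=
        set_perm _ i hi 1
      have h2 : List.Perm (sList X) (mst :: (sList X).eraseIdx i) := by
        have := cons_eraseIdx_perm (sList X) i hi
        rwa [hsi] at this
      have h3 : List.Perm (sList X) (mst :: (sList X).erase mst) :=
        List.perm_cons_erase hmst_sX
      have h4 : List.Perm ((sList X).erase mst) ((sList X).eraseIdx i) :=
        (h3.symm.trans h2).cons_inv
      exact ((h4.cons 1).trans h1.symm)
    have hpos' : ∀ z ∈ (sList X).set i 1, 1 ≤ z :=
      hpos_set _ (sList_pos X) i 1 le_rfl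
    have hsub := V.vec_sub_b_mem (((sList X).set i 1).length + mu ((sList X).set i 1))
      ((sList X).set i 1) le_rfl hpos' (shiftIdx X mst) hperm
    have hd0 : V.b.repr (V.vec ((sList X).set i 1) - V.b (shiftIdx X mst)) Y = 0 := by
      refine hφ0 _ _ _ hsub ?_
      have hlen : ((sList X).set i 1).length = kst := by
        rw [List.length_set, sList_length, hXlen]
      omega
    have heval : V.b.repr (V.vec ((sList X).set i 1)) Y
        = V.b.repr (V.b (shiftIdx X mst)) Y := by
      have h3 : V.b.repr (V.vec ((sList X).set i 1)) Y
          - V.b.repr (V.b (shiftIdx X mst)) Y = 0 := by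
        rw [← Finsupp.sub_apply, ← map_sub]
        exact hd0
      exact sub_eq_zero.1 h3
    rw [heval, V.b.repr_self, Finsupp.single_apply]
    by_cases hXXs : X = Xs
    · subst hXXs
      rw [if_pos rfl, if_pos rfl]
    · rw [if_neg hXXs, if_neg ?_]
      intro hYe
      exact hXXs (shiftIdx_inj hmst_lam hmst_mem (hYe.trans hYdef))
  -- crossing terms vanish for X ≠ Xs
  have hLX : ∀ X ∈ f.support, X ≠ Xs → V.b.repr (V.L ((j : ℕ) : ℤ) (V.b X)) Y = 0 := by
    intro X hX hXne
    rw [hrepr_main X hX]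
    refine Finset.sum_eq_zero fun i hi => ?_
    rw [Finset.mem_range] at hi
    by_cases hcond : j < (sList X).getD i 0
    · rw [if_pos hcond]
      by_cases hXlen : lenI X = kst
      · obtain ⟨-, hv⟩ := hkey X hX hXlen i hi hcond
        rw [hv, if_neg hXne, mul_zero]
      · -- low length: coefficient vanishes
        have hpos' : ∀ z ∈ (sList X).set i ((sList X).getD i 0 - j), 1 ≤ z :=
          hpos_set _ (sList_pos X) i _ (by omega)
        have hmem := V.vec_mem_SpanL _ hpos'
        have hlen : ((sList X).set i ((sList X).getD i 0 - j)).length = lenI X := by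
          rw [List.length_set, sList_length]
        rw [hlen] at hmem
        have hz := hφ0 _ _ _ hmem (by have := hk_le X hX; omega)
        rw [hz, mul_zero]
    · rw [if_neg hcond]
  -- the diagonal term
  have hd0 : (sList Xs).getD 0 0 = mst := by
    have h2 : Xs.1.1 ≠ [] := hlam_ne Xs hXs_supp
    cases hl' : Xs.1.1 with
    | nil => exact absurd hl' h2
    | cons a t =>
        have : sList Xs = a :: (t ++ List.replicate Xs.1.2 1) := by
          rw [sList, hl']
          rfl
        rw [this, List.getD_cons_zero, hmst_eq, hl']
        rfl
  have hlen_sXs : 0 < (sList Xs).length := by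
    rw [sList_length]
    have := hlen_pos Xs hXs_supp
    omega
  have hLXs : V.b.repr (V.L ((j : ℕ) : ℤ) (V.b Xs)) Y
      = (((Finset.range (sList Xs).length).filter
          (fun i => j < (sList Xs).getD i 0)).card : ℂ) * ((mst : ℂ) + (j : ℂ)) := by
    rw [hrepr_main Xs hXs_supp, Finset.sum_ite, Finset.sum_const_zero, add_zero]
    have hcongr : ∀ i ∈ (Finset.range (sList Xs).length).filter
        (fun i => j < (sList Xs).getD i 0),
        (((sList Xs).getD i 0 : ℂ) + (j : ℂ)) *
          V.b.repr (V.vec ((sList Xs).set i ((sList Xs).getD i 0 - j))) Y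
        = ((mst : ℂ) + (j : ℂ)) := by
      intro i hi
      rw [Finset.mem_filter, Finset.mem_range] at hi
      obtain ⟨hsi, hv⟩ := hkey Xs hXs_supp hXs_len i hi.1 hi.2
      rw [hv, if_pos rfl, mul_one, hsi]
    rw [Finset.sum_congr rfl hcongr, Finset.sum_const, nsmul_eq_mul]
  have hcard_pos : 0 < ((Finset.range (sList Xs).length).filter
      (fun i => j < (sList Xs).getD i 0)).card := by
    refine Finset.card_pos.2 ⟨0, ?_⟩
    rw [Finset.mem_filter, Finset.mem_range]
    exact ⟨hlen_sXs, by omega⟩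
  -- final contradiction
  have hzΨ : V.L ((j : ℕ) : ℤ) Ψ = 0 := hann _ (by exact_mod_cast hj)
  have hexp : Ψ = ∑ X ∈ f.support, f X • V.b X := by
    conv_lhs => rw [← V.b.linearCombination_repr Ψ]
    rw [Finsupp.linearCombination_apply, Finsupp.sum]
  have h0 : (0 : ℂ) = ∑ X ∈ f.support, f X * V.b.repr (V.L ((j : ℕ) : ℤ) (V.b X)) Y := by
    have h1 : V.b.repr (V.L ((j : ℕ) : ℤ) Ψ) Y = 0 := by
      rw [hzΨ, map_zero]
      rfl
    rw [← h1]
    conv_lhs => rw [hexp]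
    rw [map_sum, map_sum, Finsupp.finset_sum_apply]
    refine Finset.sum_congr rfl fun X _ => ?_
    rw [map_smul, map_smul, Finsupp.smul_apply, smul_eq_mul]
  rw [Finset.sum_eq_single_of_mem Xs hXs_supp
    (fun X hX hne' => by rw [hLX X hX hne', mul_zero])] at h0
  rw [hLXs] at h0
  have hfXs : f Xs ≠ 0 := Finsupp.mem_support_iff.1 hXs_supp
  have hcne : (((Finset.range (sList Xs).length).filter
      (fun i => j < (sList Xs).getD i 0)).card : ℂ) ≠ 0 :=
    Nat.cast_ne_zero.2 (by omega)
  have hmne : ((mst : ℂ) + (j : ℂ)) ≠ 0 := by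
    have hcast : ((mst : ℂ) + (j : ℂ)) = ((mst + j : ℕ) : ℂ) := by push_cast; ring
    rw [hcast]
    exact Nat.cast_ne_zero.2 (by omega)
  rcases mul_eq_zero.1 h0.symm with h | h
  · exact hfXs h
  · rcases mul_eq_zero.1 h with h' | h'
    · exact hcne h'
    · exact hmne h'

end VirasoroVerma

/-- two vectors in the span of the level-`l` basis vectors which
are annihilated by all `L_m`, `m ≥ 1`, and whose coefficients on `L_{-1}^l v`
agree, are equal. -/
theorem virasoro_kernel_coefficient_determines {c Δ : ℂ} {M : Type u}
    [AddCommGroup M] [Module ℂ M] (V : VirasoroVerma c Δ M) (l : ℕ) (hl : 1 ≤ l)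
    (Ψ₁ Ψ₂ : M)
    (hmem₁ : Ψ₁ ∈ Submodule.span ℂ (V.b '' {i : VirIndex | i.level = l}))
    (hmem₂ : Ψ₂ ∈ Submodule.span ℂ (V.b '' {i : VirIndex | i.level = l}))
    (hann₁ : ∀ m : ℤ, 1 ≤ m → V.L m Ψ₁ = 0)
    (hann₂ : ∀ m : ℤ, 1 ≤ m → V.L m Ψ₂ = 0)
    (hcoef : V.b.repr Ψ₁ (VirIndex.empty l) = V.b.repr Ψ₂ (VirIndex.empty l)) :
    Ψ₁ = Ψ₂ :=
  V.kernel_coefficient_determines l hl Ψ₁ Ψ₂ hmem₁ hmem₂ hann₁ hann₂ hcoef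
end

section
/- Any two singular vectors at the same level l ≥ 1 in the Virasoro Verma module V_{Δ,c} are proportional, i.e. each is a scalar multiple of the other. -/
universe u

namespace VirHelp

instance : DecidableEq VirIndex := fun a b => decidable_of_iff (a.1 = b.1) Subtype.ext_iff.symm

variable {c Δ : ℂ} {M : Type u} [AddCommGroup M] [Module ℂ M] (V : VirasoroVerma c Δ M)

/-- The monomial `L_{-P_1} ⋯ L_{-P_k} L_{-1}^n v`. -/
def mon (P : List ℕ) (n : ℕ) : M := listApplyVir V.L P (((V.L (-1)) ^ n) V.v)

lemma mon_nil (n : ℕ) : mon V [] n = ((V.L (-1)) ^ n) V.v := rfl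

lemma mon_cons (p : ℕ) (P : List ℕ) (n : ℕ) :
    mon V (p :: P) n = V.L (-(p : ℤ)) (mon V P n) := rfl

lemma mon_append (A B : List ℕ) (n : ℕ) :
    mon V (A ++ B) n = listApplyVir V.L A (mon V B n) := by
  simp [mon, listApplyVir, List.foldr_append]

lemma mon_nil_succ (n : ℕ) : mon V [] (n + 1) = V.L (-1) (mon V [] n) := by
  simp [mon, listApplyVir, pow_succ', Module.End.mul_apply]

/-- The basic commutator relation applied to a vector. -/
lemma comm (a b : ℤ) (x : M) :
    V.L a (V.L b x) = V.L b (V.L a x) + (((a : ℂ) - b)) • V.L (a + b) x +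
      (if a + b = 0 then c / 12 * ((a : ℂ) ^ 3 - a) else 0) • x := by
  have h := V.hcomm a b
  have h2 := congrArg (fun (f : Module.End ℂ M) => f x) h
  simp only [LinearMap.sub_apply, Module.End.mul_apply, LinearMap.add_apply,
    LinearMap.smul_apply, Module.End.one_apply] at h2
  have : V.L a (V.L b x) - V.L b (V.L a x) = ((a : ℂ) - b) • V.L (a+b) x +
      (if a + b = 0 then c / 12 * ((a : ℂ) ^ 3 - a) else 0) • x := h2
  linear_combination (norm := abel) this

/-- Commutator when `a + b ≠ 0` (no central term). -/
lemma comm' (a b : ℤ) (hab : a + b ≠ 0) (x : M) :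
    V.L a (V.L b x) = V.L b (V.L a x) + (((a : ℂ) - b)) • V.L (a + b) x := by
  rw [comm V a b x, if_neg hab, zero_smul, add_zero]

lemma listApplyVir_add (F : ℤ → Module.End ℂ M) (A : List ℕ) (x y : M) :
    listApplyVir F A (x + y) = listApplyVir F A x + listApplyVir F A y := by
  induction A with
  | nil => rfl
  | cons a A ih => simp [listApplyVir] at ih ⊢; rw [ih, map_add]

lemma listApplyVir_smul (F : ℤ → Module.End ℂ M) (A : List ℕ) (t : ℂ) (x : M) :
    listApplyVir F A (t • x) = t • listApplyVir F A x := by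
  induction A with
  | nil => rfl
  | cons a A ih => simp [listApplyVir] at ih ⊢; rw [ih, map_smul]

/-- `L_0` acts on monomials by `Δ + sum P + n`. -/
lemma L0_mon (P : List ℕ) (n : ℕ) (hP : ∀ p ∈ P, 1 ≤ p) : V.L 0 (mon V P n) =
    (Δ + (P.sum : ℂ) + (n : ℂ)) • mon V P n := by
  induction P with
  | nil =>
    induction n with
    | zero => simpa [mon_nil] using V.hv0
    | succ n ih =>
      rw [mon_nil_succ, comm' V 0 (-1) (by norm_num), ih,
        show (0:ℤ) + (-1) = -1 by ring, map_smul, ← mon_nil_succ]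
      simp only [List.sum_nil, Nat.cast_zero, Nat.cast_succ]
      module
  | cons p P ih =>
    have hp : 1 ≤ p := hP p (by simp)
    have hp' : (0:ℤ) + (-(p:ℤ)) ≠ 0 := by
      simp only [zero_add, neg_ne_zero]
      have : p ≠ 0 := Nat.one_le_iff_ne_zero.mp hp
      exact_mod_cast this
    rw [mon_cons, comm' V 0 (-(p:ℤ)) hp', ih (fun q hq => hP q (by simp [hq])), map_smul,
      show (0:ℤ) + (-(p:ℤ)) = -(p:ℤ) by ring, ← mon_cons]
    simp only [List.sum_cons, Nat.cast_add]
    push_cast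
    module

def idx (Q : List ℕ) (n : ℕ) (h1 : Q.Pairwise (· ≥ ·)) (h2 : ∀ x ∈ Q, 2 ≤ x) : VirIndex :=
  ⟨(Q, n), h1, h2⟩

lemma b_idx (Q : List ℕ) (n : ℕ) (h1 : Q.Pairwise (· ≥ ·)) (h2 : ∀ x ∈ Q, 2 ≤ x) :
    V.b (idx Q n h1 h2) = mon V Q n := by
  rw [V.hb]; rfl

/-- Span of basis vectors with `L_{-1}`-exponent `n` and at most `p` parts. -/
def SpC (n p : ℕ) : Submodule ℂ M :=
  Submodule.span ℂ (V.b '' {i | i.1.2 = n ∧ i.1.1.length ≤ p})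

lemma SpC_mono {n p p' : ℕ} (h : p ≤ p') : SpC V n p ≤ SpC V n p' := by
  apply Submodule.span_mono
  apply Set.image_mono
  intro i hi
  exact ⟨hi.1, le_trans hi.2 h⟩

/-- Number of inversions (out-of-order pairs) in a list. -/
def dList : List ℕ → ℕ
  | [] => 0
  | q :: Q => Q.countP (fun x => decide (q < x)) + dList Q

lemma dList_le (Q : List ℕ) : dList Q ≤ Q.length * Q.length := by
  induction Q with
  | nil => simp [dList]
  | cons q Q ih =>
    have h1 : Q.countP (fun x => decide (q < x)) ≤ Q.length := List.countP_le_length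
    simp only [dList, List.length_cons]
    nlinarith

lemma dList_swap (A : List ℕ) (q s : ℕ) (B : List ℕ) (h : q < s) :
    dList (A ++ s :: q :: B) < dList (A ++ q :: s :: B) := by
  induction A with
  | nil =>
    simp only [List.nil_append, dList, List.countP_cons, decide_eq_true_eq]
    rw [if_pos h, if_neg (by omega)]
    omega
  | cons a A ih =>
    simp only [List.cons_append, dList, List.countP_append, List.countP_cons,
      decide_eq_true_eq, List.append_eq] at ih ⊢
    omega

lemma exists_adj_inversion : ∀ (Q : List ℕ), ¬ Q.Pairwise (· ≥ ·) →
    ∃ A q s B, Q = A ++ q :: s :: B ∧ q < s := by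
  intro Q
  induction Q with
  | nil => intro h; exact absurd List.Pairwise.nil h
  | cons q Q ih =>
    intro h
    match Q with
    | [] => exact absurd (List.pairwise_singleton _ q) h
    | s :: B =>
      by_cases hqs : q < s
      · exact ⟨[], q, s, B, rfl, hqs⟩
      · have hns : ¬ (s :: B).Pairwise (· ≥ ·) := by
          intro hs
          apply h
          rw [List.pairwise_cons]
          refine ⟨?_, hs⟩
          intro b hb
          rcases List.mem_cons.mp hb with rfl | hb
          · omega
          · have := (List.pairwise_cons.mp hs).1 b hb
            omega
        obtain ⟨A', q', s', B', hEq, hlt⟩ := ih hns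
        exact ⟨q :: A', q', s', B', by rw [hEq, List.cons_append], hlt⟩

lemma mon_swap (A : List ℕ) (q s : ℕ) (B : List ℕ) (n : ℕ) (hq : 1 ≤ q) :
    mon V (A ++ q :: s :: B) n = mon V (A ++ s :: q :: B) n +
      ((s : ℂ) - q) • mon V (A ++ (q + s) :: B) n := by
  rw [mon_append, mon_append, mon_append, mon_cons, mon_cons, mon_cons, mon_cons, mon_cons]
  have hne : -(q:ℤ) + -(s:ℤ) ≠ 0 := by
    have : q ≠ 0 := by omega
    intro hc; omega
  rw [comm' V (-(q:ℤ)) (-(s:ℤ)) hne]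
  rw [show -(q:ℤ) + -(s:ℤ) = -((q + s : ℕ) : ℤ) by push_cast; ring]
  rw [listApplyVir_add, listApplyVir_smul]
  congr 2
  push_cast
  ring

/-- Weak normal ordering: any monomial with parts `≥ 2` lies in the span of
basis vectors with the same `L_{-1}`-exponent and at most as many parts. -/
lemma mon_mem_SpC : ∀ (k : ℕ) (Q : List ℕ), Q.length ^ 3 + dList Q ≤ k →
    (∀ x ∈ Q, 2 ≤ x) → ∀ n, mon V Q n ∈ SpC V n Q.length := by
  intro k
  induction k with
  | zero =>
    intro Q hk h2 n
    have hQ : Q = [] := by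
      rcases Q with _ | ⟨a, Q⟩
      · rfl
      · exfalso
        have : 0 < (Q.length + 1) ^ 3 := by positivity
        simp only [List.length_cons] at hk
        omega
    subst hQ
    apply Submodule.subset_span
    exact ⟨idx [] n List.Pairwise.nil (by simp), ⟨rfl, Nat.le.refl⟩, b_idx V [] n _ _⟩
  | succ k ih =>
    intro Q hk h2 n
    by_cases hs : Q.Pairwise (· ≥ ·)
    · apply Submodule.subset_span
      exact ⟨idx Q n hs h2, ⟨rfl, le_refl _⟩, b_idx V Q n _ _⟩
    · obtain ⟨A, q, s, B, rfl, hqs⟩ := exists_adj_inversion _ hs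
      have hq2 : 2 ≤ q := h2 q (by simp)
      have hs2 : 2 ≤ s := h2 s (by simp)
      rw [mon_swap V A q s B n (by omega)]
      have hlen1 : (A ++ s :: q :: B).length = (A ++ q :: s :: B).length := by simp
      have hlen2 : (A ++ (q + s) :: B).length + 1 = (A ++ q :: s :: B).length := by simp; omega
      apply Submodule.add_mem
      · have hm : (A ++ s :: q :: B).length ^ 3 + dList (A ++ s :: q :: B) ≤ k := by
          have := dList_swap A q s B hqs
          rw [hlen1]
          omega
        have := ih (A ++ s :: q :: B) hm (by
          intro x hx
          apply h2
          simp only [List.mem_append, List.mem_cons] at hx ⊢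
          tauto) n
        rw [hlen1] at this
        exact this
      · apply Submodule.smul_mem
        have hm : (A ++ (q + s) :: B).length ^ 3 + dList (A ++ (q + s) :: B) ≤ k := by
          have hd := dList_le (A ++ (q + s) :: B)
          have hlen2' : (A ++ q :: s :: B).length = (A ++ (q + s) :: B).length + 1 := by
            simp; omega
          set m := (A ++ (q + s) :: B).length with hm'
          have h3 : m ^ 3 + m * m < (m + 1) ^ 3 := by nlinarith
          rw [hlen2'] at hk
          omega
        have := ih (A ++ (q + s) :: B) hm (by
          intro x hx
          simp only [List.mem_append, List.mem_cons] at hx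
          rcases hx with hx | hx | hx
          · exact h2 x (by simp [hx])
          · omega
          · exact h2 x (by simp [hx])) n
        exact SpC_mono V (by omega) this

/-- Span of basis vectors with `L_{-1}`-exponent at most `k`. -/
def SpF (k : ℕ) : Submodule ℂ M := Submodule.span ℂ (V.b '' {i | i.1.2 ≤ k})

/-- Remainder space for the main commutation lemma. -/
def SpR (k p : ℕ) : Submodule ℂ M :=
  Submodule.span ℂ (V.b '' {i | i.1.2 ≤ k ∨ (i.1.2 = k + 1 ∧ i.1.1.length + 2 ≤ p)})

/-- Span of basis vectors with exponent `n` and strictly fewer than `p` parts. -/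
def SpM (n p : ℕ) : Submodule ℂ M :=
  Submodule.span ℂ (V.b '' {i | i.1.2 = n ∧ i.1.1.length + 1 ≤ p})

lemma span_b_mono {s t : Set VirIndex} (h : s ⊆ t) :
    Submodule.span ℂ (V.b '' s) ≤ Submodule.span ℂ (V.b '' t) :=
  Submodule.span_mono (Set.image_mono h)

lemma SpC_le_SpF {n p k : ℕ} (h : n ≤ k) : SpC V n p ≤ SpF V k :=
  span_b_mono V (fun i hi => le_trans (le_of_eq hi.1) h)

lemma SpF_mono {k k' : ℕ} (h : k ≤ k') : SpF V k ≤ SpF V k' :=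
  span_b_mono V (fun i hi => le_trans hi h)

lemma SpF_le_SpR (k p : ℕ) : SpF V k ≤ SpR V k p :=
  span_b_mono V (fun i hi => Or.inl hi)

lemma SpR_mono {k p p' : ℕ} (h : p ≤ p') : SpR V k p ≤ SpR V k p' :=
  span_b_mono V (fun i hi => hi.imp id (fun h2 => ⟨h2.1, le_trans h2.2 h⟩))

lemma SpM_le_SpR {k p q : ℕ} (h : p + 1 ≤ q) : SpM V (k + 1) p ≤ SpR V k q :=
  span_b_mono V (fun i hi => Or.inr ⟨hi.1, by have := hi.2; omega⟩)

lemma b_eq_mon (i : VirIndex) : V.b i = mon V i.1.1 i.1.2 := V.hb i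

lemma map_mem_span (f : Module.End ℂ M) (s : Set VirIndex) (T : Submodule ℂ M)
    (h : ∀ i ∈ s, f (V.b i) ∈ T) {x : M}
    (hx : x ∈ Submodule.span ℂ (V.b '' s)) : f x ∈ T := by
  induction hx using Submodule.span_induction with
  | mem y hy => obtain ⟨i, hi, rfl⟩ := hy; exact h i hi
  | zero => rw [map_zero]; exact T.zero_mem
  | add a b _ _ ha hb => rw [map_add]; exact T.add_mem ha hb
  | smul t a _ ha => rw [map_smul]; exact T.smul_mem t ha

lemma mon_mem_SpC' (Q : List ℕ) (h2 : ∀ x ∈ Q, 2 ≤ x) (n : ℕ) :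
    mon V Q n ∈ SpC V n Q.length :=
  mon_mem_SpC V (Q.length ^ 3 + dList Q) Q le_rfl h2 n

lemma cons_parts {q : ℕ} (hq : 2 ≤ q) {i : VirIndex} : ∀ x ∈ q :: i.1.1, 2 ≤ x := by
  intro x hx
  rcases List.mem_cons.mp hx with rfl | hx
  · exact hq
  · exact i.2.2 x hx

/-- `L_{-q}` applied to a basis vector is a monomial. -/
lemma Lneg_b {q : ℕ} (i : VirIndex) :
    V.L (-(q : ℤ)) (V.b i) = mon V (q :: i.1.1) i.1.2 := by
  rw [b_eq_mon, mon_cons]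

lemma Lneg_mem_SpC {q : ℕ} (hq : 2 ≤ q) {n p : ℕ} {x : M} (hx : x ∈ SpC V n p) :
    V.L (-(q : ℤ)) x ∈ SpC V n (p + 1) := by
  refine map_mem_span V _ _ _ ?_ hx
  intro i hi
  obtain ⟨hin, hlen⟩ := hi
  rw [Lneg_b, hin]
  have h1 := mon_mem_SpC' V (q :: i.1.1) (cons_parts hq) i.1.2
  rw [hin] at h1
  refine SpC_mono V ?_ h1
  simp only [List.length_cons]
  omega

lemma Lneg_mem_SpF {q : ℕ} (hq : 2 ≤ q) {k : ℕ} {x : M} (hx : x ∈ SpF V k) :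
    V.L (-(q : ℤ)) x ∈ SpF V k := by
  refine map_mem_span V _ _ _ ?_ hx
  intro i hi
  have hik : i.1.2 ≤ k := hi
  rw [Lneg_b]
  exact SpC_le_SpF V hik (mon_mem_SpC' V (q :: i.1.1) (cons_parts hq) i.1.2)

lemma Lneg_mem_SpR {q : ℕ} (hq : 2 ≤ q) {k p : ℕ} {x : M} (hx : x ∈ SpR V k p) :
    V.L (-(q : ℤ)) x ∈ SpR V k (p + 1) := by
  refine map_mem_span V _ _ _ ?_ hx
  intro i hi
  rw [Lneg_b]
  rcases hi with hi | hi
  · exact SpF_le_SpR V k (p+1)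
      (SpC_le_SpF V hi (mon_mem_SpC' V (q :: i.1.1) (cons_parts hq) i.1.2))
  · obtain ⟨hin, hlen⟩ := hi
    rw [hin]
    have h1 := mon_mem_SpC' V (q :: i.1.1) (cons_parts hq) i.1.2
    rw [hin] at h1
    refine span_b_mono V ?_ h1
    intro j hj
    right
    refine ⟨hj.1, ?_⟩
    have := hj.2
    simp only [List.length_cons] at this
    omega

lemma Lneg_mem_SpM {q : ℕ} (hq : 2 ≤ q) {n p : ℕ} {x : M} (hx : x ∈ SpM V n p) :
    V.L (-(q : ℤ)) x ∈ SpM V n (p + 1) := by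
  refine map_mem_span V _ _ _ ?_ hx
  intro i hi
  obtain ⟨hin, hlen⟩ := hi
  rw [Lneg_b, hin]
  have h1 := mon_mem_SpC' V (q :: i.1.1) (cons_parts hq) i.1.2
  rw [hin] at h1
  refine span_b_mono V ?_ h1
  intro j hj
  refine ⟨hj.1, ?_⟩
  have := hj.2
  simp only [List.length_cons] at this
  omega

/-- Moving `L_{-1}` through a monomial: the corrections have exponent `≤ n`. -/
lemma c2' (Q : List ℕ) (h2 : ∀ x ∈ Q, 2 ≤ x) (n : ℕ) :
    V.L (-1) (mon V Q n) - mon V Q (n + 1) ∈ SpF V n := by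
  induction Q with
  | nil => rw [← mon_nil_succ, sub_self]; exact Submodule.zero_mem _
  | cons q Q ih =>
    have hq2 : 2 ≤ q := h2 q (by simp)
    have hQ2 : ∀ x ∈ Q, 2 ≤ x := fun x hx => h2 x (by simp [hx])
    rw [mon_cons, comm' V (-1) (-(q:ℤ)) (by omega)]
    have h1 : (-1 : ℤ) + -(q:ℤ) = -(((1 + q : ℕ)) : ℤ) := by push_cast; ring
    rw [h1]
    have : V.L (-(q:ℤ)) (V.L (-1) (mon V Q n)) +
        (((-1 : ℤ) : ℂ) - ((-(q:ℤ) : ℤ) : ℂ)) • V.L (-((1 + q : ℕ) : ℤ)) (mon V Q n) -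
        mon V (q :: Q) (n + 1)
        = V.L (-(q:ℤ)) (V.L (-1) (mon V Q n) - mon V Q (n+1)) +
          (((-1 : ℤ) : ℂ) - ((-(q:ℤ) : ℤ) : ℂ)) • mon V ((1 + q) :: Q) n := by
      rw [map_sub, mon_cons, mon_cons]
      abel
    rw [this]
    apply Submodule.add_mem
    · exact Lneg_mem_SpF V hq2 (ih hQ2)
    · apply Submodule.smul_mem
      refine SpC_le_SpF V le_rfl (mon_mem_SpC' V _ ?_ n)
      intro x hx
      rcases List.mem_cons.mp hx with rfl | hx
      · omega
      · exact hQ2 x hx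

lemma Lm1_mem_SpF {k : ℕ} {x : M} (hx : x ∈ SpF V k) :
    V.L (-1) x ∈ SpF V (k + 1) := by
  refine map_mem_span V _ _ _ ?_ hx
  intro i hi
  rw [b_eq_mon]
  have hik : i.1.2 ≤ k := hi
  have h1 := c2' V i.1.1 i.2.2 i.1.2
  have h2 : mon V i.1.1 (i.1.2 + 1) ∈ SpF V (k + 1) :=
    SpC_le_SpF V (by omega) (mon_mem_SpC' V i.1.1 i.2.2 (i.1.2 + 1))
  have := Submodule.add_mem _ (SpF_mono V (by omega : i.1.2 ≤ k + 1) h1) h2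
  simpa using this

/-- The sum of "main terms" in the commutation of `L_a` through a monomial. -/
def mainSum (a : ℤ) : List ℕ → ℕ → M
  | [], _ => 0
  | p :: P, n => (if (p : ℤ) = a + 1 then (2 * (a : ℂ) + 1) • mon V P (n + 1) else 0) +
      V.L (-(p : ℤ)) (mainSum a P n)

lemma mainSum_mem (a : ℤ) (P : List ℕ) (h2 : ∀ x ∈ P, 2 ≤ x) (n : ℕ) :
    mainSum V a P n ∈ SpM V (n + 1) P.length := by
  induction P with
  | nil => exact Submodule.zero_mem _
  | cons p P ih =>
    have hp2 : 2 ≤ p := h2 p (by simp)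
    have hP2 : ∀ x ∈ P, 2 ≤ x := fun x hx => h2 x (by simp [hx])
    show (if (p : ℤ) = a + 1 then (2 * (a : ℂ) + 1) • mon V P (n + 1) else 0) +
      V.L (-(p : ℤ)) (mainSum V a P n) ∈ SpM V (n + 1) (p :: P).length
    apply Submodule.add_mem
    · split
      · apply Submodule.smul_mem
        refine span_b_mono V ?_ (mon_mem_SpC' V P hP2 (n+1))
        intro j hj
        refine ⟨hj.1, ?_⟩
        have := hj.2
        simp only [List.length_cons]
        omega
      · exact Submodule.zero_mem _
    · have := Lneg_mem_SpM V hp2 (ih hP2)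
      simpa using this

/-- Base case: positive modes applied to `L_{-1}^n v`. -/
lemma MLbase (n : ℕ) : ∀ a : ℤ, 1 ≤ a → V.L a (mon V [] n) ∈ SpF V n := by
  induction n with
  | zero =>
    intro a ha
    have : mon V [] 0 = V.v := by simp [mon_nil]
    rw [this, V.hvpos a ha]
    exact Submodule.zero_mem _
  | succ n ih =>
    intro a ha
    rw [mon_nil_succ, comm V a (-1)]
    have hemp : mon V [] n ∈ SpF V (n + 1) := by
      refine SpC_le_SpF V (by omega) (mon_mem_SpC' V [] (by simp) n)
    by_cases ha1 : a = 1
    · subst ha1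
      rw [if_pos (by norm_num)]
      have hc : c / 12 * ((1:ℤ) ^ 3 - ((1:ℤ):ℂ)) = 0 := by norm_num
      rw [hc, zero_smul, add_zero]
      apply Submodule.add_mem
      · exact Lm1_mem_SpF V (ih 1 le_rfl)
      · apply Submodule.smul_mem
        rw [show (1 : ℤ) + (-1) = 0 by ring, L0_mon V [] n (by simp)]
        exact Submodule.smul_mem _ _ hemp
    · rw [if_neg (by omega), zero_smul, add_zero]
      apply Submodule.add_mem
      · exact Lm1_mem_SpF V (ih a ha)
      · apply Submodule.smul_mem
        have ha2 : 1 ≤ a - 1 := by omega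
        have := ih (a + -1) (by omega)
        exact SpF_mono V (by omega) this

/-- MAIN LEMMA: commuting `L_a` (`a ≥ 1`) through a monomial gives the main terms
(one `L_{-(a+1)}` replaced by `L_{-1}`) plus a remainder. -/
lemma ML : ∀ (P : List ℕ), (∀ x ∈ P, 2 ≤ x) → ∀ (n : ℕ) (a : ℤ), 1 ≤ a →
    V.L a (mon V P n) - mainSum V a P n ∈ SpR V n P.length := by
  intro P
  induction P with
  | nil =>
    intro _ n a ha
    show V.L a (mon V [] n) - 0 ∈ _
    rw [sub_zero]
    exact SpF_le_SpR V n 0 (MLbase V n a ha)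
  | cons p P ih =>
    intro h2 n a ha
    have hp2 : 2 ≤ p := h2 p (by simp)
    have hP2 : ∀ x ∈ P, 2 ≤ x := fun x hx => h2 x (by simp [hx])
    set x := mon V P n with hx
    set γ : ℂ := if a + -(p:ℤ) = 0 then c / 12 * ((a:ℂ) ^ 3 - (a:ℂ)) else 0 with hγ
    set ms := mainSum V a P n with hms
    set ifterm : M := if (p : ℤ) = a + 1 then (2 * (a : ℂ) + 1) • mon V P (n + 1) else 0
      with hif
    have hexp : V.L a (mon V (p :: P) n) - mainSum V a (p :: P) n =
        V.L (-(p:ℤ)) (V.L a x - ms) +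
        ((((a:ℂ) - ((-(p:ℤ) : ℤ) : ℂ))) • V.L (a + -(p:ℤ)) x + γ • x - ifterm) := by
      rw [mon_cons, comm V a (-(p:ℤ))]
      show _ + _ + _ - (ifterm + V.L (-(p:ℤ)) ms) = _
      rw [map_sub]
      abel
    rw [hexp]
    apply Submodule.add_mem
    · have := Lneg_mem_SpR V hp2 (ih hP2 n a ha)
      simpa using this
    · -- case analysis on a - p
      rcases lt_trichotomy (a + -(p:ℤ)) (-1) with he | he | he
      · -- a - p ≤ -2 : a new part of size p - a ≥ 2 appears
        have hne : (p : ℤ) ≠ a + 1 := by omega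
        have hγ0 : γ = 0 := by rw [hγ, if_neg (by omega)]
        rw [hif, if_neg hne, hγ0, zero_smul, add_zero, sub_zero]
        apply Submodule.smul_mem
        have hq : a + -(p:ℤ) = -(((p : ℤ) - a).toNat : ℤ) := by omega
        have hq2 : 2 ≤ ((p : ℤ) - a).toNat := by omega
        rw [hq, hx, ← mon_cons]
        refine SpF_le_SpR V n _ (SpC_le_SpF V le_rfl (mon_mem_SpC' V _ ?_ n))
        intro y hy
        rcases List.mem_cons.mp hy with rfl | hy
        · exact hq2
        · exact hP2 y hy
      · -- a - p = -1 : the main term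
        have hpa : (p : ℤ) = a + 1 := by omega
        have hγ0 : γ = 0 := by rw [hγ, if_neg (by omega)]
        have hcast : ((a:ℂ) - ((-(p:ℤ) : ℤ) : ℂ)) = 2 * (a:ℂ) + 1 := by
          have : ((p:ℤ) : ℂ) = (a : ℂ) + 1 := by exact_mod_cast congrArg (Int.cast : ℤ → ℂ) hpa
          push_cast
          push_cast at this
          rw [this]; ring
        rw [hif, if_pos hpa, hγ0, zero_smul, add_zero, he, hcast, ← smul_sub]
        apply Submodule.smul_mem
        exact SpF_le_SpR V n _ (c2' V P hP2 n)
      · -- a - p = 0 or a - p ≥ 1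
        have hne : (p : ℤ) ≠ a + 1 := by omega
        rw [hif, if_neg hne, sub_zero]
        rcases eq_or_lt_of_le (show 0 ≤ a + -(p:ℤ) by omega) with he0 | he1
        · -- a = p : everything is a multiple of x
          rw [← he0]
          have hγx : γ • x ∈ SpR V n (p :: P).length := by
            apply Submodule.smul_mem
            exact SpF_le_SpR V n _ (SpC_le_SpF V le_rfl (mon_mem_SpC' V P hP2 n))
          apply Submodule.add_mem _ _ hγx
          apply Submodule.smul_mem
          rw [L0_mon V P n (fun y hy => by have := hP2 y hy; omega)]
          apply Submodule.smul_mem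
          exact SpF_le_SpR V n _ (SpC_le_SpF V le_rfl (mon_mem_SpC' V P hP2 n))
        · -- a - p ≥ 1 : recurse
          have hγ0 : γ = 0 := by rw [hγ, if_neg (by omega)]
          rw [hγ0, zero_smul, add_zero]
          apply Submodule.smul_mem
          have hrec := ih hP2 n (a + -(p:ℤ)) (by omega)
          have hmain := mainSum_mem V (a + -(p:ℤ)) P hP2 n
          have : V.L (a + -(p:ℤ)) x =
              (V.L (a + -(p:ℤ)) x - mainSum V (a + -(p:ℤ)) P n) +
              mainSum V (a + -(p:ℤ)) P n := by abel
          rw [this]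
          apply Submodule.add_mem
          · exact SpR_mono V (by simp) hrec
          · refine SpM_le_SpR V (by simp) hmain

lemma repr_zero_of_span {s : Set VirIndex} {x : M}
    (hx : x ∈ Submodule.span ℂ (V.b '' s)) {j : VirIndex} (hj : j ∉ s) :
    V.b.repr x j = 0 := by
  induction hx using Submodule.span_induction with
  | mem y hy =>
    obtain ⟨i, hi, rfl⟩ := hy
    rw [V.b.repr_self, Finsupp.single_apply, if_neg]
    intro h; exact hj (h ▸ hi)
  | zero => simp
  | add a b _ _ ha hb => rw [map_add, Finsupp.add_apply, ha, hb, add_zero]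
  | smul t a _ ha => rw [map_smul, Finsupp.smul_apply, ha, smul_zero]

lemma sorted_eraseIdx {P : List ℕ} (hs : P.Pairwise (· ≥ ·)) (t : ℕ) :
    (P.eraseIdx t).Pairwise (· ≥ ·) :=
  List.Pairwise.sublist (P.eraseIdx_sublist t) hs

lemma parts_eraseIdx {P : List ℕ} (h2 : ∀ x ∈ P, 2 ≤ x) (t : ℕ) :
    ∀ x ∈ P.eraseIdx t, 2 ≤ x :=
  fun x hx => h2 x ((P.eraseIdx_sublist t).subset hx)

lemma mainSum_expand (a : ℤ) : ∀ (P : List ℕ) (hs : P.Pairwise (· ≥ ·))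
    (h2 : ∀ x ∈ P, 2 ≤ x) (n : ℕ),
    mainSum V a P n = ∑ t ∈ Finset.range P.length,
      (if ((P.getD t 0 : ℕ) : ℤ) = a + 1 then
        (2 * (a : ℂ) + 1) • V.b (idx (P.eraseIdx t) (n + 1)
          (sorted_eraseIdx hs t) (parts_eraseIdx h2 t))
      else 0) := by
  intro P
  induction P with
  | nil => intro _ _ n; simp [mainSum]
  | cons p P ih =>
    intro hs h2 n
    have hsP : P.Pairwise (· ≥ ·) := hs.of_cons
    have h2P : ∀ x ∈ P, 2 ≤ x := fun x hx => h2 x (by simp [hx])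
    have hpall : ∀ b ∈ P, p ≥ b := (List.pairwise_cons.mp hs).1
    show (if ((p : ℕ) : ℤ) = a + 1 then (2 * (a : ℂ) + 1) • mon V P (n + 1) else 0) +
      V.L (-(p : ℤ)) (mainSum V a P n) = _
    rw [List.length_cons, Finset.sum_range_succ', ih hsP h2P n, map_sum, add_comm]
    congr 1
    · apply Finset.sum_congr rfl
      intro t ht
      rw [apply_ite (V.L (-(p : ℤ))), map_zero, apply_ite (fun z => z), map_smul]
      congr 1
      have hb1 : V.L (-(p:ℤ)) (V.b (idx (P.eraseIdx t) (n + 1)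
          (sorted_eraseIdx hsP t) (parts_eraseIdx h2P t))) = mon V (p :: P.eraseIdx t) (n+1) := by
        rw [b_idx, mon_cons]
      rw [hb1]
      have hsort : (p :: P.eraseIdx t).Pairwise (· ≥ ·) := by
        rw [List.pairwise_cons]
        exact ⟨fun b hb => hpall b ((P.eraseIdx_sublist t).subset hb), sorted_eraseIdx hsP t⟩
      have hparts : ∀ x ∈ p :: P.eraseIdx t, 2 ≤ x :=
        cons_parts (h2 p (by simp)) (i := ⟨(P.eraseIdx t, 0), sorted_eraseIdx hsP t,
          parts_eraseIdx h2P t⟩)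
      rw [← b_idx V (p :: P.eraseIdx t) (n+1) hsort hparts]
      rfl
    · rw [← b_idx V P (n+1) hsP h2P]
      rfl

/-- Coordinate of `mainSum` on a basis vector. -/
lemma coord_mainSum (a : ℤ) (P : List ℕ) (hs : P.Pairwise (· ≥ ·))
    (h2 : ∀ x ∈ P, 2 ≤ x) (n : ℕ) (j : VirIndex) :
    V.b.repr (mainSum V a P n) j = (2 * (a : ℂ) + 1) *
      (((Finset.range P.length).filter
        (fun t => ((P.getD t 0 : ℕ) : ℤ) = a + 1 ∧
          ((P.eraseIdx t, n + 1) : List ℕ × ℕ) = j.1)).card : ℕ) := by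
  rw [mainSum_expand V a P hs h2 n, map_sum, Finsupp.finset_sum_apply]
  have hterm : ∀ t ∈ Finset.range P.length,
      (V.b.repr (if ((P.getD t 0 : ℕ) : ℤ) = a + 1 then
        (2 * (a : ℂ) + 1) • V.b (idx (P.eraseIdx t) (n + 1)
          (sorted_eraseIdx hs t) (parts_eraseIdx h2 t)) else 0)) j =
      (if ((P.getD t 0 : ℕ) : ℤ) = a + 1 ∧ ((P.eraseIdx t, n + 1) : List ℕ × ℕ) = j.1 then
        (2 * (a : ℂ) + 1) else 0) := by
    intro t _
    rw [apply_ite (V.b.repr), map_zero, map_smul, V.b.repr_self]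
    rw [apply_ite (fun g : VirIndex →₀ ℂ => g j)]
    simp only [Finsupp.coe_zero, Pi.zero_apply, Finsupp.smul_apply, Finsupp.single_apply]
    by_cases h1 : ((P.getD t 0 : ℕ) : ℤ) = a + 1
    · rw [if_pos h1]
      by_cases h3 : idx (P.eraseIdx t) (n + 1) (sorted_eraseIdx hs t) (parts_eraseIdx h2 t) = j
      · rw [if_pos h3, if_pos ⟨h1, by rw [← h3]; rfl⟩]
        simp
      · rw [if_neg h3, if_neg]
        · simp
        · rintro ⟨-, h4⟩
          exact h3 (Subtype.ext h4)
    · rw [if_neg h1, if_neg (by tauto)]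
  rw [Finset.sum_congr rfl hterm, ← Finset.sum_filter, Finset.sum_const, nsmul_eq_mul, mul_comm]

lemma Lb0 (i : VirIndex) : V.L 0 (V.b i) = (Δ + (i.level : ℂ)) • V.b i := by
  rw [b_eq_mon, L0_mon V i.1.1 i.1.2 (fun y hy => by have := i.2.2 y hy; omega)]
  congr 1
  show Δ + _ + _ = Δ + ((i.1.1.sum + i.1.2 : ℕ) : ℂ)
  push_cast
  ring

lemma repr_L0_eigen (Ψ : M) (μ : ℂ) (h : V.L 0 Ψ = μ • Ψ) {i₀ : VirIndex}
    (hi₀ : i₀ ∈ (V.b.repr Ψ).support) : Δ + (i₀.level : ℂ) = μ := by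
  set φ : M →ₗ[ℂ] ℂ := (Finsupp.lapply i₀) ∘ₗ (V.b.repr : M ≃ₗ[ℂ] (VirIndex →₀ ℂ)).toLinearMap
    with hφ
  have hφb : ∀ i : VirIndex, φ (V.b i) = if i = i₀ then 1 else 0 := by
    intro i
    simp [hφ, Finsupp.lapply, V.b.repr_self, Finsupp.single_apply]
  have hkey : φ ∘ₗ (V.L 0) = (Δ + (i₀.level : ℂ)) • φ := by
    apply V.b.ext
    intro i
    rw [LinearMap.comp_apply, LinearMap.smul_apply, Lb0, map_smul, hφb]
    by_cases hii : i = i₀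
    · subst hii; simp
    · simp [hii]
  have h1 : φ (V.L 0 Ψ) = (Δ + (i₀.level : ℂ)) * φ Ψ := by
    have := congrArg (fun g : M →ₗ[ℂ] ℂ => g Ψ) hkey
    simpa using this
  rw [h, map_smul, smul_eq_mul] at h1
  have hΨ0 : φ Ψ ≠ 0 := by
    have : φ Ψ = V.b.repr Ψ i₀ := rfl
    rw [this]
    exact Finsupp.mem_support_iff.mp hi₀
  exact (mul_right_cancel₀ hΨ0 h1.symm)

lemma level_eq (Ψ : M) (l : ℕ) (h : V.L 0 Ψ = (Δ + (l : ℂ)) • Ψ) :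
    ∀ i ∈ (V.b.repr Ψ).support, i.level = l := by
  intro i hi
  have := repr_L0_eigen V Ψ (Δ + (l : ℂ)) h hi
  have h2 : (i.level : ℂ) = (l : ℂ) := by linear_combination this
  exact_mod_cast h2

instance : IsAntisymm ℕ (· ≥ ·) := ⟨fun a b h1 h2 => le_antisymm h2 h1⟩

/-- KEY LEMMA: a singular vector at level `l` whose coefficient on `L_{-1}^l v`
vanishes is zero. -/
lemma key (l : ℕ) (Ψ : M) (hsup : ∀ i ∈ (V.b.repr Ψ).support, i.level = l)
    (hann : ∀ m : ℤ, 1 ≤ m → V.L m Ψ = 0)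
    (hemp : V.b.repr Ψ (VirIndex.empty l) = 0) : Ψ = 0 := by
  by_contra hne
  set f := V.b.repr Ψ with hf
  have hS : f.support.Nonempty :=
    Finsupp.support_nonempty_iff.mpr (fun h0 => hne (V.b.repr.map_eq_zero_iff.mp h0))
  have hnonnil : ∀ i ∈ f.support, i.1.1 ≠ [] := by
    intro i hi hnil
    have hlev := hsup i hi
    have hi2 : i.1.2 = l := by
      have : i.1.1.sum + i.1.2 = l := hlev
      rw [hnil] at this
      simpa using this
    have : i = VirIndex.empty l := by
      apply Subtype.ext
      show i.1 = ([], l)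
      exact Prod.ext hnil hi2
    rw [this] at hi
    exact (Finsupp.mem_support_iff.mp hi) hemp
  obtain ⟨i₁, hi₁, hmax1⟩ := Finset.exists_max_image f.support (fun i => i.1.2) hS
  set N := i₁.1.2 with hN
  set S' := f.support.filter (fun i => i.1.2 = N) with hS'
  obtain ⟨iS, hiS, hmax2⟩ := Finset.exists_max_image S' (fun i => i.1.1.length)
    ⟨i₁, Finset.mem_filter.mpr ⟨hi₁, rfl⟩⟩
  have hiSsup : iS ∈ f.support := (Finset.mem_filter.mp hiS).1
  have hiSN : iS.1.2 = N := (Finset.mem_filter.mp hiS).2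
  obtain ⟨m, T, hmt⟩ : ∃ m T, iS.1.1 = m :: T := by
    cases h : iS.1.1 with
    | nil => exact absurd h (hnonnil iS hiSsup)
    | cons m T => exact ⟨m, T, rfl⟩
  have hm2 : 2 ≤ m := iS.2.2 m (by rw [hmt]; simp)
  have hsortmt : (m :: T).Pairwise (· ≥ ·) := hmt ▸ iS.2.1
  have h2mt : ∀ x ∈ m :: T, 2 ≤ x := fun x hx => iS.2.2 x (hmt ▸ hx)
  set a : ℤ := (m : ℤ) - 1 with haa
  have ha : 1 ≤ a := by omega
  set j : VirIndex := idx T (N + 1) hsortmt.of_cons (fun x hx => h2mt x (by simp [hx]))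
    with hj
  have hj1 : j.1 = ((T, N + 1) : List ℕ × ℕ) := rfl
  -- expansion of Ψ
  have hΨ : Ψ = ∑ i ∈ f.support, f i • V.b i := by
    conv_lhs => rw [← V.b.linearCombination_repr Ψ]
    rw [Finsupp.linearCombination_apply, Finsupp.sum]
  have hz : V.b.repr (V.L a Ψ) j = 0 := by rw [hann a ha]; simp
  rw [hΨ] at hz
  simp only [map_sum, map_smul, Finsupp.finset_sum_apply, Finsupp.smul_apply] at hz
  -- the remainder terms never contribute to coordinate j
  have hrem : ∀ i ∈ f.support,
      V.b.repr (V.L a (mon V i.1.1 i.1.2) - mainSum V a i.1.1 i.1.2) j = 0 := by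
    intro i hi
    refine repr_zero_of_span V (ML V i.1.1 i.2.2 i.1.2 a ha) ?_
    intro hmem
    rcases hmem with hmem | hmem
    · have h1 : j.1.2 = N + 1 := rfl
      have h2 : i.1.2 ≤ N := hmax1 i hi
      omega
    · obtain ⟨hmem1, hmem2⟩ := hmem
      have h1 : j.1.2 = N + 1 := rfl
      have h2 : i.1.2 = N := by omega
      have h3 : i ∈ S' := Finset.mem_filter.mpr ⟨hi, h2⟩
      have h4 : i.1.1.length ≤ iS.1.1.length := hmax2 i h3
      have h5 : iS.1.1.length = T.length + 1 := by rw [hmt]; simp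
      have h6 : j.1.1.length = T.length := rfl
      omega
  -- mainSum of other indices never contributes to coordinate j
  have hterm : ∀ i ∈ f.support, i ≠ iS → V.b.repr (V.L a (V.b i)) j = 0 := by
    intro i hi hneq
    have hdecomp : V.L a (V.b i) = mainSum V a i.1.1 i.1.2 +
        (V.L a (mon V i.1.1 i.1.2) - mainSum V a i.1.1 i.1.2) := by
      rw [b_eq_mon]; abel
    rw [hdecomp, map_add, Finsupp.add_apply, hrem i hi, add_zero]
    by_cases hiN : i.1.2 = N
    · -- same exponent: the multiset argument
      rw [coord_mainSum V a i.1.1 i.2.1 i.2.2 i.1.2 j]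
      have hfilter : ((Finset.range i.1.1.length).filter
          (fun t => ((i.1.1.getD t 0 : ℕ) : ℤ) = a + 1 ∧
            ((i.1.1.eraseIdx t, i.1.2 + 1) : List ℕ × ℕ) = j.1)) = ∅ := by
        rw [Finset.eq_empty_iff_forall_notMem]
        intro t ht
        obtain ⟨htr, hc1, hc2⟩ := Finset.mem_filter.mp ht
        have htlen : t < i.1.1.length := Finset.mem_range.mp htr
        have hget : i.1.1.getD t 0 = m := by
          have : ((i.1.1.getD t 0 : ℕ) : ℤ) = (m : ℤ) := by omega
          exact_mod_cast this
        have herase : i.1.1.eraseIdx t = T := by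
          rw [hj1] at hc2
          exact (Prod.mk.injEq _ _ _ _).mp hc2 |>.1
        have hperm : i.1.1.Perm (m :: T) := by
          have hp1 : i.1.1.Perm (i.1.1[t] :: (i.1.1.erase i.1.1[t])) :=
            List.perm_cons_erase (List.getElem_mem htlen)
          have hp2 : (i.1.1.erase i.1.1[t]).Perm (i.1.1.eraseIdx t) :=
            List.erase_getElem htlen
          have hgete : i.1.1[t] = m := by
            rw [← List.getD_eq_getElem i.1.1 0 htlen, hget]
          have hp3 := hp1.trans (hp2.cons (i.1.1[t]))
          rw [hgete, herase] at hp3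
          exact hp3
        have heq : i.1.1 = m :: T := List.Perm.eq_of_pairwise (fun a b _ _ h1 h2 => le_antisymm h2 h1) i.2.1 hsortmt hperm
        apply hneq
        apply Subtype.ext
        show i.1 = iS.1
        rw [← hmt] at heq
        exact Prod.ext heq (by rw [hiN, hiSN])
      rw [hfilter]
      simp
    · -- lower exponent: mainSum lives in exponent i.1.2 + 1 < N + 1
      refine repr_zero_of_span V (mainSum_mem V a i.1.1 i.2.2 i.1.2) ?_
      intro hmem
      have h1 : j.1.2 = N + 1 := rfl
      have h2 : i.1.2 ≤ N := hmax1 i hi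
      have := hmem.1
      omega
  -- the contribution of iS itself
  have hself : ∃ Nc : ℕ, Nc ≠ 0 ∧
      V.b.repr (V.L a (V.b iS)) j = (2 * (a : ℂ) + 1) * Nc := by
    have hdecomp : V.L a (V.b iS) = mainSum V a iS.1.1 iS.1.2 +
        (V.L a (mon V iS.1.1 iS.1.2) - mainSum V a iS.1.1 iS.1.2) := by
      rw [b_eq_mon]; abel
    rw [hdecomp, map_add, Finsupp.add_apply, hrem iS hiSsup, add_zero]
    rw [coord_mainSum V a iS.1.1 iS.2.1 iS.2.2 iS.1.2 j]
    refine ⟨_, ?_, rfl⟩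
    apply Finset.card_ne_zero_of_mem (a := 0)
    rw [Finset.mem_filter]
    refine ⟨Finset.mem_range.mpr (by rw [hmt]; simp), ?_, ?_⟩
    · rw [hmt]
      simp only [List.getD_cons_zero]
      omega
    · rw [hmt, hj1, hiSN]
      rfl
  -- conclude
  obtain ⟨Nc, hNc, hcoord⟩ := hself
  rw [Finset.sum_eq_single_of_mem iS hiSsup
    (fun i hi hneq => by rw [hterm i hi hneq, smul_zero])] at hz
  rw [hcoord, smul_eq_mul] at hz
  rcases mul_eq_zero.mp hz with h0 | h0
  · exact (Finsupp.mem_support_iff.mp hiSsup) h0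
  · rcases mul_eq_zero.mp h0 with h1 | h1
    · have : ((2 * a + 1 : ℤ) : ℂ) = 0 := by push_cast; linear_combination h1
      have := Int.cast_injective (α := ℂ) (this.trans (Int.cast_zero).symm)
      omega
    · exact hNc (Nat.cast_eq_zero.mp h1)

end VirHelp


open VirHelp in
/-- any two singular vectors at the same level `l ≥ 1` of the
Virasoro Verma module are proportional: each is a scalar multiple of the other. -/
theorem virasoro_singular_vectors_proportional {c Δ : ℂ} {M : Type u}
    [AddCommGroup M] [Module ℂ M] (V : VirasoroVerma c Δ M) (l : ℕ) (hl : 1 ≤ l)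
    (Ψ₁ Ψ₂ : M) (hΨ₁ : Ψ₁ ≠ 0) (hΨ₂ : Ψ₂ ≠ 0)
    (hL0₁ : V.L 0 Ψ₁ = (Δ + (l : ℂ)) • Ψ₁)
    (hL0₂ : V.L 0 Ψ₂ = (Δ + (l : ℂ)) • Ψ₂)
    (hann₁ : ∀ m : ℤ, 1 ≤ m → V.L m Ψ₁ = 0)
    (hann₂ : ∀ m : ℤ, 1 ≤ m → V.L m Ψ₂ = 0) :
    (∃ α : ℂ, Ψ₂ = α • Ψ₁) ∧ (∃ β : ℂ, Ψ₁ = β • Ψ₂) := by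
  set a₁ := V.b.repr Ψ₁ (VirIndex.empty l) with ha₁
  set a₂ := V.b.repr Ψ₂ (VirIndex.empty l) with ha₂
  have ha₁0 : a₁ ≠ 0 := fun h0 => hΨ₁ (key V l Ψ₁ (level_eq V Ψ₁ l hL0₁) hann₁ h0)
  have ha₂0 : a₂ ≠ 0 := fun h0 => hΨ₂ (key V l Ψ₂ (level_eq V Ψ₂ l hL0₂) hann₂ h0)
  have hcomb : a₁ • Ψ₂ - a₂ • Ψ₁ = 0 := by
    apply key V l
    · apply level_eq V _ l
      rw [map_sub, map_smul, map_smul, hL0₁, hL0₂]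
      module
    · intro m hm
      rw [map_sub, map_smul, map_smul, hann₁ m hm, hann₂ m hm, smul_zero, smul_zero, sub_zero]
    · rw [map_sub, map_smul, map_smul, Finsupp.sub_apply, Finsupp.smul_apply,
        Finsupp.smul_apply, ← ha₁, ← ha₂, smul_eq_mul, smul_eq_mul, mul_comm, sub_self]
  have heq : a₁ • Ψ₂ = a₂ • Ψ₁ := sub_eq_zero.mp hcomb
  constructor
  · refine ⟨a₁⁻¹ * a₂, ?_⟩
    rw [mul_smul, ← heq, inv_smul_smul₀ ha₁0]
  · refine ⟨a₂⁻¹ * a₁, ?_⟩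
    rw [mul_smul, heq, inv_smul_smul₀ ha₂0]
end

section
/- Let M = V^{GQ}_{0,q,c} be a chiral Verma module (any c ∈ ℂ). (i) Every Ψ ∈ M with L_0Ψ = 0 is proportional to v. (ii) Consequently, every eigenvector Ψ of L_0 in M that is annihilated by the positive operators and satisfies G_0Ψ = 0 and Q_0Ψ = 0 is proportional to v; in particular chiral Verma modules contain no chiral singular vectors. -/
universe u

/-- A representation of the topological N=2 superconformal algebra with
central charge `c` on the complex vector space `M`. -/
structure TopN2 (c : ℂ) (M : Type u) [AddCommGroup M] [Module ℂ M] where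
  L : ℤ → Module.End ℂ M
  H : ℤ → Module.End ℂ M
  G : ℤ → Module.End ℂ M
  Q : ℤ → Module.End ℂ M
  hLL : ∀ m n : ℤ, L m * L n - L n * L m = ((m : ℂ) - (n : ℂ)) • L (m + n)
  hHH : ∀ m n : ℤ, H m * H n - H n * H m =
    (if m + n = 0 then c / 3 * (m : ℂ) else 0) • (1 : Module.End ℂ M)
  hLG : ∀ m n : ℤ, L m * G n - G n * L m = ((m : ℂ) - (n : ℂ)) • G (m + n)
  hHG : ∀ m n : ℤ, H m * G n - G n * H m = G (m + n)
  hLQ : ∀ m n : ℤ, L m * Q n - Q n * L m = (-(n : ℂ)) • Q (m + n)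
  hHQ : ∀ m n : ℤ, H m * Q n - Q n * H m = -(Q (m + n))
  hLH : ∀ m n : ℤ, L m * H n - H n * L m = (-(n : ℂ)) • H (m + n) +
    (if m + n = 0 then c / 6 * ((m : ℂ) ^ 2 + (m : ℂ)) else 0) • (1 : Module.End ℂ M)
  hGQ : ∀ m n : ℤ, G m * Q n + Q n * G m = (2 : ℂ) • L (m + n) + (-2 * (n : ℂ)) • H (m + n) +
    (if m + n = 0 then c / 3 * ((m : ℂ) ^ 2 + (m : ℂ)) else 0) • (1 : Module.End ℂ M)
  hGG : ∀ m n : ℤ, G m * G n + G n * G m = 0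
  hQQ : ∀ m n : ℤ, Q m * Q n + Q n * Q m = 0

/-- `Ψ` is annihilated by the positive operators. -/
def TopN2.AnnPos {c : ℂ} {M : Type u} [AddCommGroup M] [Module ℂ M]
    (A : TopN2 c M) (Ψ : M) : Prop :=
  ∀ k : ℤ, 1 ≤ k → A.L k Ψ = 0 ∧ A.H k Ψ = 0 ∧ A.G k Ψ = 0 ∧ A.Q k Ψ = 0

/-- Apply the operators `F (-a_j)` for the entries `a_j` of the list (read left
to right) to `w`. -/
def listApplyN2 {M : Type u} [AddCommGroup M] [Module ℂ M]
    (F : ℤ → Module.End ℂ M) (l : List ℕ) (w : M) : M :=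
  l.foldr (fun a x => F (-(a : ℤ)) x) w

/-- Apply `f` to `w` if `r = true`, corresponding to a factor `f^r`, `r ∈ {0,1}`. -/
def condApply {M : Type u} [AddCommGroup M] [Module ℂ M]
    (f : Module.End ℂ M) (r : Bool) (w : M) : M :=
  if r then f w else w

/-- Index of the standard basis of a chiral Verma module of the topological
N=2 algebra. -/
structure ChiralIndex : Type where
  ls : List ℕ
  hs : List ℕ
  gs : List ℕ
  ps : List ℕ
  k : ℕ
  r1 : Bool
  r2 : Bool
  hls : ls.Pairwise (· ≥ ·)
  hls2 : ∀ x ∈ ls, 2 ≤ x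
  hhs : hs.Pairwise (· ≥ ·)
  hhs2 : ∀ x ∈ hs, 1 ≤ x
  hgs : gs.Pairwise (· > ·)
  hgs2 : ∀ x ∈ gs, 2 ≤ x
  hps : ps.Pairwise (· > ·)
  hps2 : ∀ x ∈ ps, 2 ≤ x

/-- The basis vector
`L_{-l_a}···L_{-l_1} H_{-h_b}···H_{-h_1} G_{-g_d}···G_{-g_1} Q_{-p_e}···Q_{-p_1}
L_{-1}^k G_{-1}^{r_1} Q_{-1}^{r_2} v` of a chiral Verma module. -/
def ChiralIndex.vec {c : ℂ} {M : Type u} [AddCommGroup M] [Module ℂ M]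
    (A : TopN2 c M) (v : M) (i : ChiralIndex) : M :=
  listApplyN2 A.L i.ls <| listApplyN2 A.H i.hs <| listApplyN2 A.G i.gs <|
    listApplyN2 A.Q i.ps <| ((A.L (-1)) ^ i.k) <|
      condApply (A.G (-1)) i.r1 <| condApply (A.Q (-1)) i.r2 v

/-- A chiral Verma module `V^{GQ}_{0,q,c}` of the topological N=2
superconformal algebra. -/
structure GQVerma (c q : ℂ) (M : Type u) [AddCommGroup M] [Module ℂ M]
    extends TopN2 c M where
  v : M
  hv0 : L 0 v = 0
  hvH : H 0 v = q • v
  hvG : G 0 v = 0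
  hvQ : Q 0 v = 0
  hvann : ∀ k : ℤ, 1 ≤ k → L k v = 0 ∧ H k v = 0 ∧ G k v = 0 ∧ Q k v = 0
  b : Module.Basis ChiralIndex ℂ M
  hb : ∀ i : ChiralIndex, b i = i.vec toTopN2 v

section AuxN2

variable {M : Type u} [AddCommGroup M] [Module ℂ M]

lemma eig_step (T S : Module.End ℂ M) (β lam : ℂ) (w : M)
    (hc : T * S - S * T = β • S) (hw : T w = lam • w) :
    T (S w) = (lam + β) • S w := by
  have h := congrArg (fun f : Module.End ℂ M => f w) hc
  simp only [LinearMap.sub_apply, Module.End.mul_apply, LinearMap.smul_apply] at h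
  have h2 : T (S w) = S (T w) + β • S w := by
    rw [← h]; abel
  rw [h2, hw, map_smul, add_smul]

lemma eig_list (T : Module.End ℂ M) (F : ℤ → Module.End ℂ M) (l : List ℕ) (lam : ℂ) (w : M)
    (hc : ∀ a ∈ l, T * F (-(a : ℤ)) - F (-(a : ℤ)) * T = (a : ℂ) • F (-(a : ℤ)))
    (hw : T w = lam • w) :
    T (listApplyN2 F l w) = (lam + l.sum) • listApplyN2 F l w := by
  induction l with
  | nil => simpa [listApplyN2] using hw
  | cons a l ih =>
    have h1 := ih (fun x hx => hc x (List.mem_cons_of_mem _ hx))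
    have h2 := eig_step T (F (-(a : ℤ))) (a : ℂ) (lam + l.sum) (listApplyN2 F l w)
      (hc a (List.mem_cons_self)) h1
    have h3 : listApplyN2 F (a :: l) w = F (-(a : ℤ)) (listApplyN2 F l w) := rfl
    rw [h3, h2]
    congr 1
    push_cast [List.sum_cons]
    ring

lemma eig_pow (T S : Module.End ℂ M) (k : ℕ) (lam : ℂ) (w : M)
    (hc : T * S - S * T = (1 : ℂ) • S) (hw : T w = lam • w) :
    T ((S ^ k) w) = (lam + k) • (S ^ k) w := by
  induction k with
  | zero => simpa using hw
  | succ k ih =>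
    have h2 := eig_step T S 1 (lam + k) ((S ^ k) w) hc ih
    have h3 : (S ^ (k + 1)) w = S ((S ^ k) w) := by
      rw [pow_succ']; rfl
    rw [h3, h2]
    congr 1
    push_cast
    ring

lemma eig_cond (T f : Module.End ℂ M) (r : Bool) (lam : ℂ) (w : M)
    (hc : T * f - f * T = (1 : ℂ) • f) (hw : T w = lam • w) :
    T (condApply f r w) = (lam + r.toNat) • condApply f r w := by
  cases r
  · simpa [condApply] using hw
  · simpa [condApply] using eig_step T f 1 lam w hc hw

/-- the level of a basis index -/
def clevel (i : ChiralIndex) : ℕ :=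
  i.ls.sum + i.hs.sum + i.gs.sum + i.ps.sum + i.k + i.r1.toNat + i.r2.toNat

lemma vec_eig {c q : ℂ} (V : GQVerma c q M) (i : ChiralIndex) :
    V.L 0 (i.vec V.toTopN2 V.v) = (clevel i : ℂ) • i.vec V.toTopN2 V.v := by
  have hcL : ∀ a : ℕ, V.L 0 * V.L (-(a : ℤ)) - V.L (-(a : ℤ)) * V.L 0
      = (a : ℂ) • V.L (-(a : ℤ)) := by
    intro a
    have h := V.hLL 0 (-(a : ℤ))
    rw [zero_add] at h
    rw [h]
    congr 1
    push_cast
    ring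
  have hcG : ∀ a : ℕ, V.L 0 * V.G (-(a : ℤ)) - V.G (-(a : ℤ)) * V.L 0
      = (a : ℂ) • V.G (-(a : ℤ)) := by
    intro a
    have h := V.hLG 0 (-(a : ℤ))
    rw [zero_add] at h
    rw [h]
    congr 1
    push_cast
    ring
  have hcQ : ∀ a : ℕ, V.L 0 * V.Q (-(a : ℤ)) - V.Q (-(a : ℤ)) * V.L 0
      = (a : ℂ) • V.Q (-(a : ℤ)) := by
    intro a
    have h := V.hLQ 0 (-(a : ℤ))
    rw [zero_add] at h
    rw [h]
    congr 1
    push_cast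
    ring
  have hcH : ∀ a : ℕ, 1 ≤ a → V.L 0 * V.H (-(a : ℤ)) - V.H (-(a : ℤ)) * V.L 0
      = (a : ℂ) • V.H (-(a : ℤ)) := by
    intro a ha
    have h := V.hLH 0 (-(a : ℤ))
    rw [zero_add, if_neg (by omega), zero_smul, add_zero] at h
    rw [h]
    congr 1
    push_cast
    ring
  have hc1 : ((1 : ℕ) : ℤ) = (1 : ℤ) := rfl
  have e0 : V.L 0 V.v = (0 : ℂ) • V.v := by rw [V.hv0, zero_smul]
  have e1 := eig_cond (V.L 0) (V.Q (-1)) i.r2 0 V.v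
    (by simpa using hcQ 1) e0
  have e2 := eig_cond (V.L 0) (V.G (-1)) i.r1 _ _
    (by simpa using hcG 1) e1
  have e3 := eig_pow (V.L 0) (V.L (-1)) i.k _ _
    (by simpa using hcL 1) e2
  have e4 := eig_list (V.L 0) V.Q i.ps _ _ (fun a _ => hcQ a) e3
  have e5 := eig_list (V.L 0) V.G i.gs _ _ (fun a _ => hcG a) e4
  have e6 := eig_list (V.L 0) V.H i.hs _ _ (fun a ha => hcH a (i.hhs2 a ha)) e5
  have e7 := eig_list (V.L 0) V.L i.ls _ _ (fun a _ => hcL a) e6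
  simp only [ChiralIndex.vec]
  rw [e7]
  congr 1
  simp only [clevel]
  push_cast
  ring

/-- the trivial index -/
def i0 : ChiralIndex :=
  ⟨[], [], [], [], 0, false, false, List.Pairwise.nil, by simp, List.Pairwise.nil, by simp,
    List.Pairwise.nil, by simp, List.Pairwise.nil, by simp⟩

lemma list_nil_of_sum_zero {l : List ℕ} (h : l.sum = 0) (h2 : ∀ x ∈ l, 1 ≤ x) : l = [] := by
  cases l with
  | nil => rfl
  | cons a t =>
    exfalso
    have := h2 a (List.mem_cons_self)
    simp [List.sum_cons] at h
    omega

lemma clevel_eq_zero {j : ChiralIndex} (h : clevel j = 0) : j = i0 := by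
  obtain ⟨ls, hs, gs, ps, k, r1, r2, h1, h2, h3, h4, h5, h6, h7, h8⟩ := j
  simp only [clevel] at h
  have hls : ls = [] := list_nil_of_sum_zero (by omega) (fun x hx => le_trans one_le_two (h2 x hx))
  have hhs : hs = [] := list_nil_of_sum_zero (by omega) h4
  have hgs : gs = [] := list_nil_of_sum_zero (by omega) (fun x hx => le_trans one_le_two (h6 x hx))
  have hps : ps = [] := list_nil_of_sum_zero (by omega) (fun x hx => le_trans one_le_two (h8 x hx))
  have hk : k = 0 := by omega
  have hr1 : r1 = false := by
    cases r1
    · rfl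
    · simp at h
  have hr2 : r2 = false := by
    cases r2
    · rfl
    · simp at h
  subst hls hhs hgs hps hk hr1 hr2
  rfl

lemma vec_i0 {c : ℂ} (A : TopN2 c M) (v : M) : i0.vec A v = v := by
  simp [ChiralIndex.vec, i0, listApplyN2, condApply, pow_zero]

lemma coord_zero {c q : ℂ} (V : GQVerma c q M) (Ψ : M) (hΨ : V.L 0 Ψ = 0)
    (j : ChiralIndex) : (clevel j : ℂ) * (V.b.repr Ψ j) = 0 := by
  classical
  set g := V.b.repr Ψ with hg
  have hrep : Finsupp.linearCombination ℂ V.b g = Ψ := V.b.linearCombination_repr Ψ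
  have h1 : (0 : M) = g.sum fun i a => ((clevel i : ℂ) * a) • V.b i := by
    rw [← hΨ]
    conv_lhs => rw [← hrep]
    rw [Finsupp.linearCombination_apply, map_finsuppSum]
    refine Finsupp.sum_congr fun i _ => ?_
    rw [map_smul, V.hb i, vec_eig V i, ← V.hb i, smul_smul, mul_comm]
  have h2 := congrArg (fun x => (V.b.repr x) j) h1
  simp only [map_zero, Finsupp.coe_zero, Pi.zero_apply, map_finsuppSum] at h2
  rw [Finsupp.sum_apply, Finsupp.sum] at h2
  simp only [map_smul, Module.Basis.repr_self, Finsupp.smul_apply, Finsupp.single_apply,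
    smul_eq_mul, mul_ite, mul_one, mul_zero] at h2
  rw [Finset.sum_ite_eq' g.support j] at h2
  by_cases hj : j ∈ g.support
  · rw [if_pos hj] at h2
    exact h2.symm
  · rw [Finsupp.notMem_support_iff] at hj
    rw [hj, mul_zero]

end AuxN2

/-- in a chiral Verma module every vector of zero conformal
weight is proportional to the highest weight vector; in particular chiral
Verma modules contain no chiral singular vectors. -/
theorem gqVerma_no_chiral_singular {c q : ℂ} {M : Type u}
    [AddCommGroup M] [Module ℂ M] (V : GQVerma c q M) :
    (∀ Ψ : M, V.L 0 Ψ = 0 → ∃ α : ℂ, Ψ = α • V.v) ∧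
    (∀ Ψ : M, (∃ μ : ℂ, V.L 0 Ψ = μ • Ψ) → V.toTopN2.AnnPos Ψ →
      V.G 0 Ψ = 0 → V.Q 0 Ψ = 0 → ∃ α : ℂ, Ψ = α • V.v) := by
  classical
  have part1 : ∀ Ψ : M, V.L 0 Ψ = 0 → ∃ α : ℂ, Ψ = α • V.v := by
    intro Ψ hΨ
    refine ⟨V.b.repr Ψ i0, ?_⟩
    have hj : ∀ j, j ≠ i0 → V.b.repr Ψ j = 0 := by
      intro j hne
      have hcl : clevel j ≠ 0 := fun h => hne (clevel_eq_zero h)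
      rcases mul_eq_zero.mp (coord_zero V Ψ hΨ j) with h | h
      · exact absurd (Nat.cast_eq_zero.mp h) hcl
      · exact h
    have hrepr : V.b.repr Ψ = Finsupp.single i0 (V.b.repr Ψ i0) := by
      ext j
      rcases eq_or_ne j i0 with rfl | hne
      · simp
      · rw [Finsupp.single_apply, if_neg fun h => hne h.symm, hj j hne]
    set α := V.b.repr Ψ i0 with hα
    have : Ψ = V.b.repr.symm (Finsupp.single i0 α) := by
      conv_lhs => rw [← V.b.repr.symm_apply_apply Ψ, hrepr]
    rw [this, V.b.repr_symm_single, V.hb, vec_i0]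
  refine ⟨part1, ?_⟩
  intro Ψ _ _ hG hQ
  apply part1
  have h := congrArg (fun f : Module.End ℂ M => f Ψ) (V.hGQ 0 0)
  simp only [LinearMap.add_apply, Module.End.mul_apply, LinearMap.smul_apply, hG, hQ,
    map_zero, add_zero, zero_add, Module.End.one_apply] at h
  norm_num at h
  rcases smul_eq_zero.mp h.symm with h2 | h2
  · exact absurd h2 two_ne_zero
  · exact h2
end

section
/- Let M = V_{0,q,c} be a no-label Verma module (any c ∈ ℂ, any q ∈ ℂ). Then G_0Q_0v is nonzero, is annihilated by the positive operators, and satisfies G_0(G_0Q_0v) = 0 and Q_0(G_0Q_0v) = 0; moreover every Ψ ∈ M with L_0Ψ = 0, G_0Ψ = 0 and Q_0Ψ = 0 is proportional to G_0Q_0v. In particular, G_0Q_0v is (up to proportionality) the unique chiral singular vector of V_{0,q,c}. -/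
universe u

/-- Index of the standard basis of a no-label Verma module of the topological
N=2 algebra. -/
structure NLIndex : Type where
  ls : List ℕ
  hs : List ℕ
  gs : List ℕ
  ps : List ℕ
  k : ℕ
  r1 : Bool
  r2 : Bool
  r3 : Bool
  r4 : Bool
  hls : ls.Pairwise (· ≥ ·)
  hls2 : ∀ x ∈ ls, 2 ≤ x
  hhs : hs.Pairwise (· ≥ ·)
  hhs2 : ∀ x ∈ hs, 1 ≤ x
  hgs : gs.Pairwise (· > ·)
  hgs2 : ∀ x ∈ gs, 2 ≤ x
  hps : ps.Pairwise (· > ·)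
  hps2 : ∀ x ∈ ps, 2 ≤ x

/-- The basis vector
`L_{-l_a}···L_{-l_1} H_{-h_b}···H_{-h_1} G_{-g_d}···G_{-g_1} Q_{-p_e}···Q_{-p_1}
L_{-1}^k G_{-1}^{r_1} Q_{-1}^{r_2} G_0^{r_4} Q_0^{r_3} v` of a no-label Verma
module. -/
def NLIndex.vec {c : ℂ} {M : Type u} [AddCommGroup M] [Module ℂ M]
    (A : TopN2 c M) (v : M) (i : NLIndex) : M :=
  listApplyN2 A.L i.ls <| listApplyN2 A.H i.hs <| listApplyN2 A.G i.gs <|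
    listApplyN2 A.Q i.ps <| ((A.L (-1)) ^ i.k) <|
      condApply (A.G (-1)) i.r1 <| condApply (A.Q (-1)) i.r2 <|
        condApply (A.G 0) i.r4 <| condApply (A.Q 0) i.r3 v

/-- A no-label Verma module `V_{0,q,c}` of the topological N=2 superconformal
algebra. -/
structure NLVerma (c q : ℂ) (M : Type u) [AddCommGroup M] [Module ℂ M]
    extends TopN2 c M where
  v : M
  hv0 : L 0 v = 0
  hvH : H 0 v = q • v
  hvann : ∀ k : ℤ, 1 ≤ k → L k v = 0 ∧ H k v = 0 ∧ G k v = 0 ∧ Q k v = 0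
  b : Module.Basis NLIndex ℂ M
  hb : ∀ i : NLIndex, b i = i.vec toTopN2 v


namespace TopN2

variable {c : ℂ} {M : Type u} [AddCommGroup M] [Module ℂ M]

lemma step (A : TopN2 c M) {f : Module.End ℂ M} {δ : ℂ}
    (hf : A.L 0 * f - f * A.L 0 = δ • f) {w : M} {μ : ℂ}
    (hw : A.L 0 w = μ • w) : A.L 0 (f w) = (μ + δ) • f w := by
  have h := DFunLike.congr_fun hf w
  simp only [LinearMap.sub_apply, Module.End.mul_apply, LinearMap.smul_apply] at h
  rw [hw, map_smul] at h
  rw [sub_eq_iff_eq_add] at h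
  rw [h, add_smul]
  abel

lemma commL (A : TopN2 c M) (n : ℤ) :
    A.L 0 * A.L n - A.L n * A.L 0 = (-(n : ℂ)) • A.L n := by
  have h := A.hLL 0 n
  simpa using h

lemma commG (A : TopN2 c M) (n : ℤ) :
    A.L 0 * A.G n - A.G n * A.L 0 = (-(n : ℂ)) • A.G n := by
  have h := A.hLG 0 n
  simpa using h

lemma commQ (A : TopN2 c M) (n : ℤ) :
    A.L 0 * A.Q n - A.Q n * A.L 0 = (-(n : ℂ)) • A.Q n := by
  have h := A.hLQ 0 n
  simpa using h

lemma commH (A : TopN2 c M) (n : ℤ) :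
    A.L 0 * A.H n - A.H n * A.L 0 = (-(n : ℂ)) • A.H n := by
  have h := A.hLH 0 n
  simpa using h

lemma L0_list (A : TopN2 c M) (F : ℤ → Module.End ℂ M)
    (hF : ∀ n : ℤ, A.L 0 * F n - F n * A.L 0 = (-(n : ℂ)) • F n)
    (l : List ℕ) {w : M} {μ : ℂ} (hw : A.L 0 w = μ • w) :
    A.L 0 (listApplyN2 F l w) = (μ + (l.sum : ℂ)) • listApplyN2 F l w := by
  induction l with
  | nil => simpa [listApplyN2] using hw
  | cons a t ih =>
    have h := A.step (hF (-(a : ℤ))) ih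
    have e : listApplyN2 F (a :: t) w = F (-(a : ℤ)) (listApplyN2 F t w) := rfl
    rw [e, h]
    congr 1
    push_cast [List.sum_cons]
    ring

lemma L0_pow (A : TopN2 c M) (k : ℕ) {w : M} {μ : ℂ}
    (hw : A.L 0 w = μ • w) :
    A.L 0 (((A.L (-1)) ^ k) w) = (μ + (k : ℂ)) • ((A.L (-1)) ^ k) w := by
  induction k with
  | zero => simpa using hw
  | succ n ih =>
    have hc : A.L 0 * A.L (-1) - A.L (-1) * A.L 0 = (1 : ℂ) • A.L (-1) := by
      rw [one_smul]
      have := A.commL (-1)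
      simpa using this
    have h := A.step hc ih
    have e : ((A.L (-1)) ^ (n + 1)) w = A.L (-1) (((A.L (-1)) ^ n) w) := by
      rw [pow_succ']
      rfl
    rw [e, h]
    congr 1
    push_cast [List.sum_cons]
    ring

lemma L0_cond (A : TopN2 c M) {f : Module.End ℂ M} {δ : ℂ}
    (hf : A.L 0 * f - f * A.L 0 = δ • f) (r : Bool) {w : M} {μ : ℂ}
    (hw : A.L 0 w = μ • w) :
    A.L 0 (condApply f r w) = (μ + if r then δ else 0) • condApply f r w := by
  cases r
  · simpa [condApply] using hw
  · simpa [condApply] using A.step hf hw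

end TopN2

/-- The level of a basis index. -/
def NLIndex.lev (i : NLIndex) : ℕ :=
  i.ls.sum + i.hs.sum + i.gs.sum + i.ps.sum + i.k + i.r1.toNat + i.r2.toNat

lemma TopN2.L0_vec {c : ℂ} {M : Type u} [AddCommGroup M] [Module ℂ M]
    (A : TopN2 c M) (v : M) (hv : A.L 0 v = 0) (i : NLIndex) :
    A.L 0 (i.vec A v) = ((i.lev : ℕ) : ℂ) • i.vec A v := by
  have h0 : A.L 0 v = (0 : ℂ) • v := by simpa using hv
  have hQ0 : A.L 0 * A.Q 0 - A.Q 0 * A.L 0 = (0 : ℂ) • A.Q 0 := by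
    have := A.commQ 0; simpa using this
  have hG0 : A.L 0 * A.G 0 - A.G 0 * A.L 0 = (0 : ℂ) • A.G 0 := by
    have := A.commG 0; simpa using this
  have hQm : A.L 0 * A.Q (-1) - A.Q (-1) * A.L 0 = (1 : ℂ) • A.Q (-1) := by
    rw [one_smul]; have := A.commQ (-1); simpa using this
  have hGm : A.L 0 * A.G (-1) - A.G (-1) * A.L 0 = (1 : ℂ) • A.G (-1) := by
    rw [one_smul]; have := A.commG (-1); simpa using this
  have h1 := A.L0_cond hQ0 i.r3 h0
  have h2 := A.L0_cond hG0 i.r4 h1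
  have h3 := A.L0_cond hQm i.r2 h2
  have h4 := A.L0_cond hGm i.r1 h3
  have h5 := A.L0_pow i.k h4
  have h6 := A.L0_list A.Q A.commQ i.ps h5
  have h7 := A.L0_list A.G A.commG i.gs h6
  have h8 := A.L0_list A.H A.commH i.hs h7
  have h9 := A.L0_list A.L A.commL i.ls h8
  simp only [NLIndex.vec]
  rw [h9]
  congr 1
  simp only [NLIndex.lev]
  push_cast
  cases i.r1 <;> cases i.r2 <;> cases i.r3 <;> cases i.r4 <;> simp <;> ring

/-- The four level-zero basis indices. -/
def NLIndex.idx0 (r3 r4 : Bool) : NLIndex :=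
  ⟨[], [], [], [], 0, false, false, r3, r4,
    List.Pairwise.nil, by simp, List.Pairwise.nil, by simp,
    List.Pairwise.nil, by simp, List.Pairwise.nil, by simp⟩

lemma NLIndex.idx0_inj {r3 r4 r3' r4' : Bool} :
    NLIndex.idx0 r3 r4 = NLIndex.idx0 r3' r4' ↔ r3 = r3' ∧ r4 = r4' := by
  constructor
  · intro h
    exact ⟨congrArg NLIndex.r3 h, congrArg NLIndex.r4 h⟩
  · rintro ⟨rfl, rfl⟩
    rfl

lemma NLIndex.ext' {i j : NLIndex} (h1 : i.ls = j.ls) (h2 : i.hs = j.hs)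
    (h3 : i.gs = j.gs) (h4 : i.ps = j.ps) (h5 : i.k = j.k) (h6 : i.r1 = j.r1)
    (h7 : i.r2 = j.r2) (h8 : i.r3 = j.r3) (h9 : i.r4 = j.r4) : i = j := by
  cases i
  cases j
  simp only at h1 h2 h3 h4 h5 h6 h7 h8 h9
  subst h1 h2 h3 h4 h5 h6 h7 h8 h9
  rfl

lemma nil_of_sum_eq_zero (l : List ℕ) (h1 : ∀ x ∈ l, 1 ≤ x) (h : l.sum = 0) :
    l = [] := by
  cases l with
  | nil => rfl
  | cons a t =>
    exfalso
    have ha := h1 a (by simp)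
    simp only [List.sum_cons] at h
    omega

lemma NLIndex.lev_zero {i : NLIndex} (h : i.lev = 0) : i = NLIndex.idx0 i.r3 i.r4 := by
  have hls : i.ls = [] := nil_of_sum_eq_zero _
    (fun x hx => le_trans one_le_two (i.hls2 x hx))
    (by simp only [NLIndex.lev] at h; omega)
  have hhs : i.hs = [] := nil_of_sum_eq_zero _ i.hhs2
    (by simp only [NLIndex.lev] at h; omega)
  have hgs : i.gs = [] := nil_of_sum_eq_zero _
    (fun x hx => le_trans one_le_two (i.hgs2 x hx))
    (by simp only [NLIndex.lev] at h; omega)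
  have hps : i.ps = [] := nil_of_sum_eq_zero _
    (fun x hx => le_trans one_le_two (i.hps2 x hx))
    (by simp only [NLIndex.lev] at h; omega)
  have hk : i.k = 0 := by simp only [NLIndex.lev] at h; omega
  have hr1 : i.r1 = false := by
    have h1 : i.r1.toNat = 0 := by simp only [NLIndex.lev] at h; omega
    cases hb : i.r1
    · rfl
    · rw [hb] at h1; simp at h1
  have hr2 : i.r2 = false := by
    have h1 : i.r2.toNat = 0 := by simp only [NLIndex.lev] at h; omega
    cases hb : i.r2
    · rfl
    · rw [hb] at h1; simp at h1
  exact NLIndex.ext' hls hhs hgs hps hk hr1 hr2 rfl rfl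

lemma NLIndex.lev_idx0 (r3 r4 : Bool) : (NLIndex.idx0 r3 r4).lev = 0 := rfl

lemma NLVerma.coord_L0 {c q : ℂ} {M : Type u} [AddCommGroup M] [Module ℂ M]
    (V : NLVerma c q M) (i : NLIndex) (Ψ : M) :
    V.b.repr (V.L 0 Ψ) i = ((i.lev : ℕ) : ℂ) * V.b.repr Ψ i := by
  classical
  have hmap : (V.b.coord i).comp (V.L 0) = ((i.lev : ℕ) : ℂ) • V.b.coord i := by
    apply V.b.ext
    intro j
    have hLb : V.L 0 (V.b j) = ((j.lev : ℕ) : ℂ) • V.b j := by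
      rw [V.hb]
      exact V.toTopN2.L0_vec V.v V.hv0 j
    simp only [LinearMap.comp_apply, LinearMap.smul_apply, Module.Basis.coord_apply, hLb,
      map_smul, Module.Basis.repr_self, Finsupp.smul_apply, Finsupp.single_apply, smul_eq_mul]
    by_cases hji : j = i
    · subst hji; simp
    · simp [hji]
  have := DFunLike.congr_fun hmap Ψ
  simpa using this

/-- A vector space over ℂ has no 2-torsion. -/
lemma half_zero {M : Type u} [AddCommGroup M] [Module ℂ M] {x : M}
    (h : x + x = 0) : x = 0 := by
  have h2 : (2 : ℂ) • x = 0 := by rw [two_smul]; exact h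
  rcases smul_eq_zero.mp h2 with h3 | h3
  · norm_num at h3
  · exact h3

/-- in a no-label Verma module, `G₀Q₀v` is (up to
proportionality) the unique chiral singular vector. -/
theorem nlVerma_unique_chiral_singular {c q : ℂ} {M : Type u}
    [AddCommGroup M] [Module ℂ M] (V : NLVerma c q M) :
    V.G 0 (V.Q 0 V.v) ≠ 0 ∧
    V.toTopN2.AnnPos (V.G 0 (V.Q 0 V.v)) ∧
    V.G 0 (V.G 0 (V.Q 0 V.v)) = 0 ∧
    V.Q 0 (V.G 0 (V.Q 0 V.v)) = 0 ∧
    (∀ Ψ : M, V.L 0 Ψ = 0 → V.G 0 Ψ = 0 → V.Q 0 Ψ = 0 →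
      ∃ α : ℂ, Ψ = α • (V.G 0 (V.Q 0 V.v))) := by
  classical
  -- the four level-zero basis vectors
  have hbFF : V.b (NLIndex.idx0 false false) = V.v := by
    rw [V.hb]
    simp [NLIndex.vec, NLIndex.idx0, listApplyN2, condApply]
  have hbTF : V.b (NLIndex.idx0 true false) = V.Q 0 V.v := by
    rw [V.hb]
    simp [NLIndex.vec, NLIndex.idx0, listApplyN2, condApply]
  have hbFT : V.b (NLIndex.idx0 false true) = V.G 0 V.v := by
    rw [V.hb]
    simp [NLIndex.vec, NLIndex.idx0, listApplyN2, condApply]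
  have hbTT : V.b (NLIndex.idx0 true true) = V.G 0 (V.Q 0 V.v) := by
    rw [V.hb]
    simp [NLIndex.vec, NLIndex.idx0, listApplyN2, condApply]
  -- nonzero
  have hne0 : V.G 0 (V.Q 0 V.v) ≠ 0 := by
    rw [← hbTT]
    exact V.b.ne_zero _
  -- basic zero-mode identities
  have hL0Q0 : V.L 0 (V.Q 0 V.v) = 0 := by
    have h := DFunLike.congr_fun (V.hLQ 0 0) V.v
    simp only [LinearMap.sub_apply, Module.End.mul_apply, LinearMap.smul_apply] at h
    rw [V.hv0] at h
    simpa using h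
  have hQ0Q0 : V.Q 0 (V.Q 0 V.v) = 0 := by
    have h := DFunLike.congr_fun (V.hQQ 0 0) V.v
    simp only [LinearMap.add_apply, Module.End.mul_apply, LinearMap.zero_apply] at h
    exact half_zero h
  have hG0G0 : ∀ x : M, V.G 0 (V.G 0 x) = 0 := by
    intro x
    have h := DFunLike.congr_fun (V.hGG 0 0) x
    simp only [LinearMap.add_apply, Module.End.mul_apply, LinearMap.zero_apply] at h
    exact half_zero h
  -- the anticommutator {G₀,Q₀} applied to a vector
  have hGQ0 : ∀ x : M, V.G 0 (V.Q 0 x) + V.Q 0 (V.G 0 x) = (2 : ℂ) • V.L 0 x := by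
    intro x
    have h := DFunLike.congr_fun (V.hGQ 0 0) x
    simp only [LinearMap.add_apply, Module.End.mul_apply, LinearMap.smul_apply,
      Module.End.one_apply] at h
    simpa using h
  have hQ0G0v : V.Q 0 (V.G 0 V.v) = -(V.G 0 (V.Q 0 V.v)) := by
    have h := hGQ0 V.v
    rw [V.hv0] at h
    simp only [smul_zero] at h
    rw [eq_neg_iff_add_eq_zero, add_comm]
    exact h
  have hQGQ : V.Q 0 (V.G 0 (V.Q 0 V.v)) = 0 := by
    have h := hGQ0 (V.Q 0 V.v)
    rw [hL0Q0, hQ0Q0] at h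
    simpa using h
  refine ⟨hne0, ?_, hG0G0 _, hQGQ, ?_⟩
  · -- annihilated by positive operators
    intro k hk
    obtain ⟨hLv, hHv, hGv, hQv⟩ := V.hvann k hk
    have hkne : ¬ (k = 0) := by omega
    have hLQ : V.L k (V.Q 0 V.v) = 0 := by
      have h := DFunLike.congr_fun (V.hLQ k 0) V.v
      simp only [LinearMap.sub_apply, Module.End.mul_apply, LinearMap.smul_apply] at h
      rw [hLv] at h
      simpa using h
    have hHQ : V.H k (V.Q 0 V.v) = 0 := by
      have h := DFunLike.congr_fun (V.hHQ k 0) V.v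
      simp only [LinearMap.sub_apply, Module.End.mul_apply, LinearMap.neg_apply] at h
      rw [hHv, add_zero] at h
      rw [hQv] at h
      simpa using h
    have hGQv : V.G k (V.Q 0 V.v) = 0 := by
      have h := DFunLike.congr_fun (V.hGQ k 0) V.v
      simp only [LinearMap.add_apply, Module.End.mul_apply, LinearMap.smul_apply,
        Module.End.one_apply, add_zero, hkne] at h
      rw [hGv, hLv] at h
      simpa using h
    have hQQv : V.Q k (V.Q 0 V.v) = 0 := by
      have h := DFunLike.congr_fun (V.hQQ k 0) V.v
      simp only [LinearMap.add_apply, Module.End.mul_apply, LinearMap.zero_apply] at h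
      rw [hQv] at h
      simpa using h
    refine ⟨?_, ?_, ?_, ?_⟩
    · have h := DFunLike.congr_fun (V.hLG k 0) (V.Q 0 V.v)
      simp only [LinearMap.sub_apply, Module.End.mul_apply, LinearMap.smul_apply,
        add_zero] at h
      rw [hLQ, hGQv] at h
      simpa using h
    · have h := DFunLike.congr_fun (V.hHG k 0) (V.Q 0 V.v)
      simp only [LinearMap.sub_apply, Module.End.mul_apply, add_zero] at h
      rw [hHQ, hGQv] at h
      simpa using h
    · have h := DFunLike.congr_fun (V.hGG k 0) (V.Q 0 V.v)
      simp only [LinearMap.add_apply, Module.End.mul_apply, LinearMap.zero_apply] at h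
      rw [hGQv] at h
      simpa using h
    · have h := DFunLike.congr_fun (V.hGQ 0 k) (V.Q 0 V.v)
      simp only [LinearMap.add_apply, Module.End.mul_apply, LinearMap.smul_apply,
        Module.End.one_apply, zero_add, hkne] at h
      rw [hQQv, hLQ, hHQ] at h
      simpa using h
  · -- uniqueness
    intro Ψ hL0 hG0 hQ0
    refine ⟨V.b.repr Ψ (NLIndex.idx0 true true), ?_⟩
    have hzero : ∀ i : NLIndex, i.lev ≠ 0 → V.b.repr Ψ i = 0 := by
      intro i hi
      have h := V.coord_L0 i Ψ
      rw [hL0] at h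
      simp only [map_zero, Finsupp.zero_apply] at h
      rcases mul_eq_zero.mp h.symm with h1 | h1
      · exact absurd (by exact_mod_cast h1 : i.lev = 0) hi
      · exact h1
    have hdec : Ψ = V.b.repr Ψ (NLIndex.idx0 false false) • V.v
        + V.b.repr Ψ (NLIndex.idx0 true false) • (V.Q 0 V.v)
        + V.b.repr Ψ (NLIndex.idx0 false true) • (V.G 0 V.v)
        + V.b.repr Ψ (NLIndex.idx0 true true) • (V.G 0 (V.Q 0 V.v)) := by
      apply V.b.repr.injective
      ext j
      rw [← hbTT, ← hbFT, ← hbTF, ← hbFF]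
      simp only [map_add, map_smul, Module.Basis.repr_self, Finsupp.add_apply,
        Finsupp.smul_apply, Finsupp.single_apply, smul_eq_mul]
      by_cases h0 : j.lev = 0
      · have hj := NLIndex.lev_zero h0
        rw [hj]
        cases hr3 : j.r3 <;> cases hr4 : j.r4 <;>
          simp [NLIndex.idx0_inj]
      · have hne : ∀ r3 r4 : Bool, ¬ (NLIndex.idx0 r3 r4 = j) := by
          intro r3 r4 hcon
          rw [← hcon] at h0
          exact h0 (NLIndex.lev_idx0 r3 r4)
        rw [hzero j h0]
        simp [hne]
    have hFF : V.b.repr Ψ (NLIndex.idx0 false false) = 0 ∧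
        V.b.repr Ψ (NLIndex.idx0 true false) = 0 := by
      have e1 : V.G 0 Ψ = V.b.repr Ψ (NLIndex.idx0 false false) • (V.G 0 V.v)
          + V.b.repr Ψ (NLIndex.idx0 true false) • (V.G 0 (V.Q 0 V.v)) := by
        conv_lhs => rw [hdec]
        simp only [map_add, map_smul, hG0G0, smul_zero, add_zero]
      rw [hG0] at e1
      constructor
      · have h2 := congrArg (fun x => V.b.repr x (NLIndex.idx0 false true)) e1
        simp only [map_zero, Finsupp.zero_apply, map_add, map_smul, ← hbFT, ← hbTT,
          Module.Basis.repr_self, Finsupp.add_apply, Finsupp.smul_apply, Finsupp.single_apply,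
          smul_eq_mul, NLIndex.idx0_inj] at h2
        simpa using h2.symm
      · have h2 := congrArg (fun x => V.b.repr x (NLIndex.idx0 true true)) e1
        simp only [map_zero, Finsupp.zero_apply, map_add, map_smul, ← hbFT, ← hbTT,
          Module.Basis.repr_self, Finsupp.add_apply, Finsupp.smul_apply, Finsupp.single_apply,
          smul_eq_mul, NLIndex.idx0_inj] at h2
        simpa using h2.symm
    have hFT : V.b.repr Ψ (NLIndex.idx0 false true) = 0 := by
      have e2 : V.Q 0 Ψ = V.b.repr Ψ (NLIndex.idx0 false true) •
          (-(V.G 0 (V.Q 0 V.v))) := by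
        conv_lhs => rw [hdec, hFF.1, hFF.2]
        simp only [zero_smul, zero_add, map_add, map_smul, hQ0G0v, hQGQ, smul_zero,
          add_zero]
      rw [hQ0] at e2
      rcases smul_eq_zero.mp e2.symm with h1 | h1
      · exact h1
      · exact absurd (neg_eq_zero.mp h1) hne0
    conv_lhs => rw [hdec, hFF.1, hFF.2, hFT]
    simp
end
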